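/- arXiv:1212.2609 — 3 statements merged into one kernel-verified Lean document; each statement's English description precedes it below -/
import Mathlib

section
/- Let n = 2(k+m)+5 and let f be the subregular linear functional on ut(n,ℝ) given by the matrix F described in the context. Then the coadjoint stabilizer 𝔤^f of f in ut(n,ℝ) equals the linear span of the following elements: the k matrix units at the antidiagonal positions of block (4,6); the m matrix units at the antidiagonal positions of block (1,9); the three matrix units occupying the 1×1 blocks (2,7), (2,8), (3,8); and the element γ₂·E_{(2,3)} + γ₁·E_{(7,8)}, where E_{(2,3)} and E_{(7,8)} are the matrix units occupying the 1×1 blocks (2,3) and (7,8). In particular dim 𝔤^f = k + m + 4. -/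
open Matrix

noncomputable section

/-- `x` is a strictly upper triangular matrix, i.e. an element of `ut(n,ℝ)`. -/
def IsStrictUpper {n : ℕ} (x : Matrix (Fin n) (Fin n) ℝ) : Prop :=
  ∀ i j : Fin n, j ≤ i → x i j = 0

/-- The coadjoint stabilizer in `ut(n,ℝ)` of the linear functional `x ↦ trace (F·x)`. -/
def coadjStab {n : ℕ} (F : Matrix (Fin n) (Fin n) ℝ) : Set (Matrix (Fin n) (Fin n) ℝ) :=
  {x | IsStrictUpper x ∧ ∀ y : Matrix (Fin n) (Fin n) ℝ, IsStrictUpper y →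
      Matrix.trace (F * (x * y - y * x)) = 0}

/-- The matrix `F` of the subregular functional for `n = 2(k+m)+5`, with blocks of sizes
`(m,1,1,k,1,k,1,1,m)`:  `λ`'s on the antidiagonal of block `(6,4)` (`λ₁` in the lower left
corner), `μ`'s on the antidiagonal of block `(9,1)`, `γ₁` in block `(7,2)`, `γ₂` in
block `(8,3)` and `γ₃` in block `(8,7)`. -/
def Fodd (k m : ℕ) (lam : Fin k → ℝ) (mu : Fin m → ℝ) (γ₁ γ₂ γ₃ : ℝ) :
    Matrix (Fin (2*(k+m)+5)) (Fin (2*(k+m)+5)) ℝ :=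
  (∑ i : Fin k, lam i • Matrix.single
      (⟨m+2*k+2-i.val, by have := i.isLt; omega⟩ : Fin (2*(k+m)+5))
      (⟨m+2+i.val, by have := i.isLt; omega⟩ : Fin (2*(k+m)+5)) (1:ℝ))
  + (∑ j : Fin m, mu j • Matrix.single
      (⟨2*m+2*k+4-j.val, by have := j.isLt; omega⟩ : Fin (2*(k+m)+5))
      (⟨j.val, by have := j.isLt; omega⟩ : Fin (2*(k+m)+5)) (1:ℝ))
  + γ₁ • Matrix.single (⟨m+2*k+3, by omega⟩ : Fin (2*(k+m)+5)) ⟨m, by omega⟩ (1:ℝ)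
  + γ₂ • Matrix.single (⟨m+2*k+4, by omega⟩ : Fin (2*(k+m)+5)) ⟨m+1, by omega⟩ (1:ℝ)
  + γ₃ • Matrix.single (⟨m+2*k+4, by omega⟩ : Fin (2*(k+m)+5)) ⟨m+2*k+3, by omega⟩ (1:ℝ)

/-- The generators of the stabilizer: the matrix units on the antidiagonals of blocks
`(4,6)` and `(1,9)`, the matrix units in the `1×1` blocks `(2,7)`, `(2,8)`, `(3,8)`,
and the element `γ₂·E₍₂,₃₎ + γ₁·E₍₇,₈₎`. -/
def genOdd (k m : ℕ) (γ₁ γ₂ : ℝ) : Set (Matrix (Fin (2*(k+m)+5)) (Fin (2*(k+m)+5)) ℝ) :=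
  (Set.range fun a : Fin k => Matrix.single
      (⟨m+2+a.val, by have := a.isLt; omega⟩ : Fin (2*(k+m)+5))
      (⟨m+2*k+2-a.val, by have := a.isLt; omega⟩ : Fin (2*(k+m)+5)) (1:ℝ)) ∪
  (Set.range fun a : Fin m => Matrix.single
      (⟨a.val, by have := a.isLt; omega⟩ : Fin (2*(k+m)+5))
      (⟨2*m+2*k+4-a.val, by have := a.isLt; omega⟩ : Fin (2*(k+m)+5)) (1:ℝ)) ∪
  {Matrix.single (⟨m, by omega⟩ : Fin (2*(k+m)+5)) ⟨m+2*k+3, by omega⟩ (1:ℝ),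
   Matrix.single (⟨m, by omega⟩ : Fin (2*(k+m)+5)) ⟨m+2*k+4, by omega⟩ (1:ℝ),
   Matrix.single (⟨m+1, by omega⟩ : Fin (2*(k+m)+5)) ⟨m+2*k+4, by omega⟩ (1:ℝ),
   γ₂ • Matrix.single (⟨m, by omega⟩ : Fin (2*(k+m)+5)) ⟨m+1, by omega⟩ (1:ℝ)
     + γ₁ • Matrix.single (⟨m+2*k+3, by omega⟩ : Fin (2*(k+m)+5)) ⟨m+2*k+4, by omega⟩ (1:ℝ)}

set_option linter.unnecessarySeqFocus false
set_option maxHeartbeats 1000000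

-- ====== auxiliary infrastructure ======

lemma CSO_mk_ne {n v : ℕ} {h : v < n} {p : Fin n} (hne : v ≠ p.val) :
    ¬((⟨v, h⟩ : Fin n) = p) := fun he => hne (congrArg Fin.val he)

lemma CSO_mk_eq {n v : ℕ} {h : v < n} {p : Fin n} (hv : v = p.val) :
    (⟨v, h⟩ : Fin n) = p := Fin.ext hv

lemma CSO_val_mk {n v : ℕ} (h : v < n) : ((⟨v, h⟩ : Fin n) : ℕ) = v := rfl

lemma CSO_stdmul_apply {n : ℕ} (a b p q : Fin n) (M : Matrix (Fin n) (Fin n) ℝ) :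
    (Matrix.single a b (1:ℝ) * M) p q = if a = p then M b q else 0 := by
  simp [Matrix.mul_apply, Matrix.single, ite_and]

lemma CSO_mulstd_apply {n : ℕ} (a b p q : Fin n) (M : Matrix (Fin n) (Fin n) ℝ) :
    (M * Matrix.single a b (1:ℝ)) p q = if b = q then M p a else 0 := by
  simp [Matrix.mul_apply, Matrix.single, ite_and]

lemma CSO_std_apply {n : ℕ} (a b p q : Fin n) :
    Matrix.single a b (1:ℝ) p q = if a = p ∧ b = q then 1 else 0 := by
  simp [Matrix.single]

lemma CSO_sum_if_zero {α : Type*} [Fintype α] (P : α → Prop) [DecidablePred P] (f : α → ℝ)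
    (h : ∀ i, ¬ P i) : (∑ i, if P i then f i else 0) = 0 :=
  Finset.sum_eq_zero fun i _ => if_neg (h i)

lemma CSO_sum_if_collapse {α : Type*} [Fintype α] [DecidableEq α] (P : α → Prop)
    [DecidablePred P] (f : α → ℝ) (i₀ : α) (h : ∀ i, P i ↔ i = i₀) :
    (∑ i, if P i then f i else 0) = f i₀ := by
  rw [Finset.sum_congr rfl (fun i _ => if_congr (h i) rfl rfl)]
  simp

lemma CSO_stab_iff {n : ℕ} (F x : Matrix (Fin n) (Fin n) ℝ) :
    (∀ y : Matrix (Fin n) (Fin n) ℝ, IsStrictUpper y →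
      Matrix.trace (F * (x * y - y * x)) = 0) ↔
    (∀ p q : Fin n, q.val < p.val → (F * x) p q = (x * F) p q) := by
  have key : ∀ y : Matrix (Fin n) (Fin n) ℝ,
      Matrix.trace (F * (x * y - y * x)) = ∑ p : Fin n, ∑ q : Fin n,
        ((F * x) p q - (x * F) p q) * y q p := by
    intro y
    have h1 : Matrix.trace (F * (x * y - y * x))
        = Matrix.trace (((F * x) - (x * F)) * y) := by
      rw [mul_sub, trace_sub, Matrix.sub_mul, trace_sub, ← Matrix.mul_assoc F x y]
      congr 1
      rw [← Matrix.mul_assoc F y x, Matrix.trace_mul_comm (F * y) x, Matrix.mul_assoc x F y]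
    rw [h1, Matrix.trace, Finset.sum_congr rfl (fun p _ => ?_)]
    simp [Matrix.diag, Matrix.mul_apply, Matrix.sub_apply]
  constructor
  · intro h p q hqp
    have hy : IsStrictUpper (Matrix.single q p (1:ℝ)) := by
      intro i j hji
      rw [Matrix.single]
      simp only [Matrix.of_apply]
      rw [if_neg]
      rintro ⟨rfl, rfl⟩
      exact absurd hqp (by omega)
    have := h _ hy
    rw [key] at this
    have h2 : ∀ p' : Fin n, ∀ q' : Fin n,
        ((F * x) p' q' - (x * F) p' q') * (Matrix.single q p (1:ℝ)) q' p'
        = if p' = p ∧ q' = q then (F * x) p q - (x * F) p q else 0 := by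
      intro p' q'
      rw [Matrix.single]
      simp only [Matrix.of_apply]
      by_cases h3 : q = q' ∧ p = p'
      · obtain ⟨rfl, rfl⟩ := h3; simp
      · rw [if_neg h3, if_neg (fun hh => h3 ⟨hh.2.symm, hh.1.symm⟩), mul_zero]
    rw [Finset.sum_congr rfl (fun p' _ => Finset.sum_congr rfl (fun q' _ => h2 p' q'))] at this
    rw [Finset.sum_eq_single p, Finset.sum_eq_single q] at this
    · rw [if_pos ⟨rfl, rfl⟩] at this; linarith [this]
    · intro b _ hb; exact if_neg (fun hh => hb hh.2)
    · intro hq; exact absurd (Finset.mem_univ q) hq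
    · intro b _ hb
      apply Finset.sum_eq_zero; intro q' _
      exact if_neg (fun hh => hb hh.1)
    · intro hp; exact absurd (Finset.mem_univ p) hp
  · intro h y hy
    rw [key]
    apply Finset.sum_eq_zero; intro p _
    apply Finset.sum_eq_zero; intro q _
    rcases lt_or_ge q.val p.val with h1 | h1
    · rw [h p q h1, sub_self, zero_mul]
    · rw [hy q p (by exact h1), mul_zero]

lemma Fodd_mul_apply (k m : ℕ) (lam : Fin k → ℝ) (mu : Fin m → ℝ) (γ₁ γ₂ γ₃ : ℝ)
    (x : Matrix (Fin (2*(k+m)+5)) (Fin (2*(k+m)+5)) ℝ) (p q : Fin (2*(k+m)+5)) :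
    (Fodd k m lam mu γ₁ γ₂ γ₃ * x) p q =
    (∑ i : Fin k, if (⟨m+2*k+2-i.val, by have := i.isLt; omega⟩ : Fin (2*(k+m)+5)) = p
        then lam i * x ⟨m+2+i.val, by have := i.isLt; omega⟩ q else 0)
  + (∑ j : Fin m, if (⟨2*m+2*k+4-j.val, by have := j.isLt; omega⟩ : Fin (2*(k+m)+5)) = p
        then mu j * x ⟨j.val, by have := j.isLt; omega⟩ q else 0)
  + (if (⟨m+2*k+3, by omega⟩ : Fin (2*(k+m)+5)) = p then γ₁ * x ⟨m, by omega⟩ q else 0)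
  + (if (⟨m+2*k+4, by omega⟩ : Fin (2*(k+m)+5)) = p then γ₂ * x ⟨m+1, by omega⟩ q else 0)
  + (if (⟨m+2*k+4, by omega⟩ : Fin (2*(k+m)+5)) = p then γ₃ * x ⟨m+2*k+3, by omega⟩ q else 0) := by
  rw [Fodd]
  simp only [Matrix.add_mul, Matrix.sum_mul, Matrix.smul_mul, Matrix.add_apply,
    Matrix.sum_apply, Matrix.smul_apply, CSO_stdmul_apply, smul_eq_mul, mul_ite, mul_zero]

lemma mul_Fodd_apply (k m : ℕ) (lam : Fin k → ℝ) (mu : Fin m → ℝ) (γ₁ γ₂ γ₃ : ℝ)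
    (x : Matrix (Fin (2*(k+m)+5)) (Fin (2*(k+m)+5)) ℝ) (p q : Fin (2*(k+m)+5)) :
    (x * Fodd k m lam mu γ₁ γ₂ γ₃) p q =
    (∑ i : Fin k, if (⟨m+2+i.val, by have := i.isLt; omega⟩ : Fin (2*(k+m)+5)) = q
        then lam i * x p ⟨m+2*k+2-i.val, by have := i.isLt; omega⟩ else 0)
  + (∑ j : Fin m, if (⟨j.val, by have := j.isLt; omega⟩ : Fin (2*(k+m)+5)) = q
        then mu j * x p ⟨2*m+2*k+4-j.val, by have := j.isLt; omega⟩ else 0)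
  + (if (⟨m, by omega⟩ : Fin (2*(k+m)+5)) = q then γ₁ * x p ⟨m+2*k+3, by omega⟩ else 0)
  + (if (⟨m+1, by omega⟩ : Fin (2*(k+m)+5)) = q then γ₂ * x p ⟨m+2*k+4, by omega⟩ else 0)
  + (if (⟨m+2*k+3, by omega⟩ : Fin (2*(k+m)+5)) = q then γ₃ * x p ⟨m+2*k+4, by omega⟩ else 0) := by
  rw [Fodd]
  simp only [Matrix.mul_add, Matrix.mul_sum, Matrix.mul_smul, Matrix.add_apply,
    Matrix.sum_apply, Matrix.smul_apply, CSO_mulstd_apply, smul_eq_mul, mul_ite, mul_zero]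


def okPos (k m p q : ℕ) : Prop :=
  (m+2 ≤ p ∧ p < m+k+2 ∧ p+q = 2*m+2*k+4) ∨
  (p < m ∧ p+q = 2*m+2*k+4) ∨
  (p = m ∧ q = m+2*k+3) ∨ (p = m ∧ q = m+2*k+4) ∨ (p = m+1 ∧ q = m+2*k+4) ∨
  (p = m ∧ q = m+1) ∨ (p = m+2*k+3 ∧ q = m+2*k+4)

def Vsub (k m : ℕ) (γ₁ γ₂ : ℝ) : Submodule ℝ (Matrix (Fin (2*(k+m)+5)) (Fin (2*(k+m)+5)) ℝ) where
  carrier := {x | (∀ p q : Fin (2*(k+m)+5), ¬ okPos k m p.val q.val → x p q = 0) ∧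
    γ₁ * x ⟨m, by omega⟩ ⟨m+1, by omega⟩ = γ₂ * x ⟨m+2*k+3, by omega⟩ ⟨m+2*k+4, by omega⟩}
  add_mem' := by
    rintro a b ⟨ha1, ha2⟩ ⟨hb1, hb2⟩
    refine ⟨fun p q h => ?_, ?_⟩
    · rw [Matrix.add_apply, ha1 p q h, hb1 p q h, add_zero]
    · simp only [Matrix.add_apply]
      linear_combination ha2 + hb2
  zero_mem' := by
    refine ⟨fun p q h => rfl, by simp⟩
  smul_mem' := by
    rintro c a ⟨ha1, ha2⟩
    refine ⟨fun p q h => ?_, ?_⟩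
    · rw [Matrix.smul_apply, ha1 p q h, smul_zero]
    · simp only [Matrix.smul_apply, smul_eq_mul]
      linear_combination (c : ℝ) * ha2

section Lemmas
variable {k m : ℕ} {lam : Fin k → ℝ} {mu : Fin m → ℝ} {γ₁ γ₂ γ₃ : ℝ}
variable (x : Matrix (Fin (2*(k+m)+5)) (Fin (2*(k+m)+5)) ℝ)

lemma CSO_L0 (p q : Fin (2*(k+m)+5)) (hp : p.val ≤ m+k+2) :
    (Fodd k m lam mu γ₁ γ₂ γ₃ * x) p q = 0 := by
  rw [Fodd_mul_apply]
  rw [CSO_sum_if_zero _ _ (fun i => by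
      have := i.isLt; simp only [Fin.ext_iff, CSO_val_mk] <;> omega)]
  rw [CSO_sum_if_zero _ _ (fun j => by
      have := j.isLt; simp only [Fin.ext_iff, CSO_val_mk] <;> omega)]
  rw [if_neg (by simp only [Fin.ext_iff, CSO_val_mk] <;> omega),
    if_neg (by simp only [Fin.ext_iff, CSO_val_mk] <;> omega),
    if_neg (by simp only [Fin.ext_iff, CSO_val_mk] <;> omega)]
  ring

lemma CSO_L1 (iv : ℕ) (hi : iv < k) (q : Fin (2*(k+m)+5)) :
    (Fodd k m lam mu γ₁ γ₂ γ₃ * x) ⟨m+2*k+2-iv, by omega⟩ q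
      = lam ⟨iv, hi⟩ * x ⟨m+2+iv, by omega⟩ q := by
  rw [Fodd_mul_apply]
  rw [CSO_sum_if_collapse _ _ (⟨iv, hi⟩ : Fin k) (fun i => by
      have := i.isLt; simp only [Fin.ext_iff, CSO_val_mk] <;> omega)]
  rw [CSO_sum_if_zero _ _ (fun j => by
      have := j.isLt; simp only [Fin.ext_iff, CSO_val_mk] <;> omega)]
  rw [if_neg (by simp only [Fin.ext_iff, CSO_val_mk] <;> omega),
    if_neg (by simp only [Fin.ext_iff, CSO_val_mk] <;> omega),
    if_neg (by simp only [Fin.ext_iff, CSO_val_mk] <;> omega)]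
  ring

lemma CSO_L2 (jv : ℕ) (hj : jv < m) (q : Fin (2*(k+m)+5)) :
    (Fodd k m lam mu γ₁ γ₂ γ₃ * x) ⟨2*m+2*k+4-jv, by omega⟩ q
      = mu ⟨jv, hj⟩ * x ⟨jv, by omega⟩ q := by
  rw [Fodd_mul_apply]
  rw [CSO_sum_if_zero _ _ (fun i => by
      have := i.isLt; simp only [Fin.ext_iff, CSO_val_mk] <;> omega)]
  rw [CSO_sum_if_collapse _ _ (⟨jv, hj⟩ : Fin m) (fun j => by
      have := j.isLt; simp only [Fin.ext_iff, CSO_val_mk] <;> omega)]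
  rw [if_neg (by simp only [Fin.ext_iff, CSO_val_mk] <;> omega),
    if_neg (by simp only [Fin.ext_iff, CSO_val_mk] <;> omega),
    if_neg (by simp only [Fin.ext_iff, CSO_val_mk] <;> omega)]
  ring

lemma CSO_L1' (iv : ℕ) (hi : iv < k) (P q : Fin (2*(k+m)+5)) (hP : P.val = m+2*k+2-iv) :
    (Fodd k m lam mu γ₁ γ₂ γ₃ * x) P q = lam ⟨iv, hi⟩ * x ⟨m+2+iv, by omega⟩ q := by
  have h2 : P = ⟨m+2*k+2-iv, by omega⟩ := Fin.ext hP
  rw [h2, CSO_L1 x iv hi q]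

lemma CSO_L2' (jv : ℕ) (hj : jv < m) (P q : Fin (2*(k+m)+5)) (hP : P.val = 2*m+2*k+4-jv) :
    (Fodd k m lam mu γ₁ γ₂ γ₃ * x) P q = mu ⟨jv, hj⟩ * x ⟨jv, by omega⟩ q := by
  have h2 : P = ⟨2*m+2*k+4-jv, by omega⟩ := Fin.ext hP
  rw [h2, CSO_L2 x jv hj q]

lemma CSO_L3 (q : Fin (2*(k+m)+5)) :
    (Fodd k m lam mu γ₁ γ₂ γ₃ * x) ⟨m+2*k+3, by omega⟩ q
      = γ₁ * x ⟨m, by omega⟩ q := by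
  rw [Fodd_mul_apply]
  rw [CSO_sum_if_zero _ _ (fun i => by
      have := i.isLt; simp only [Fin.ext_iff, CSO_val_mk] <;> omega)]
  rw [CSO_sum_if_zero _ _ (fun j => by
      have := j.isLt; simp only [Fin.ext_iff, CSO_val_mk] <;> omega)]
  rw [if_pos rfl,
    if_neg (by simp only [Fin.ext_iff, CSO_val_mk] <;> omega),
    if_neg (by simp only [Fin.ext_iff, CSO_val_mk] <;> omega)]
  ring

lemma CSO_L4 (q : Fin (2*(k+m)+5)) :
    (Fodd k m lam mu γ₁ γ₂ γ₃ * x) ⟨m+2*k+4, by omega⟩ q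
      = γ₂ * x ⟨m+1, by omega⟩ q + γ₃ * x ⟨m+2*k+3, by omega⟩ q := by
  rw [Fodd_mul_apply]
  rw [CSO_sum_if_zero _ _ (fun i => by
      have := i.isLt; simp only [Fin.ext_iff, CSO_val_mk] <;> omega)]
  rw [CSO_sum_if_zero _ _ (fun j => by
      have := j.isLt; simp only [Fin.ext_iff, CSO_val_mk] <;> omega)]
  rw [if_neg (by simp only [Fin.ext_iff, CSO_val_mk] <;> omega),
    if_pos rfl, if_pos rfl]
  ring

lemma CSO_R1 (iv : ℕ) (hi : iv < k) (p : Fin (2*(k+m)+5)) :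
    (x * Fodd k m lam mu γ₁ γ₂ γ₃) p ⟨m+2+iv, by omega⟩
      = lam ⟨iv, hi⟩ * x p ⟨m+2*k+2-iv, by omega⟩ := by
  rw [mul_Fodd_apply]
  rw [CSO_sum_if_collapse _ _ (⟨iv, hi⟩ : Fin k) (fun i => by
      have := i.isLt; simp only [Fin.ext_iff, CSO_val_mk] <;> omega)]
  rw [CSO_sum_if_zero _ _ (fun j => by
      have := j.isLt; simp only [Fin.ext_iff, CSO_val_mk] <;> omega)]
  rw [if_neg (by simp only [Fin.ext_iff, CSO_val_mk] <;> omega),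
    if_neg (by simp only [Fin.ext_iff, CSO_val_mk] <;> omega),
    if_neg (by simp only [Fin.ext_iff, CSO_val_mk] <;> omega)]
  ring

lemma CSO_R2 (jv : ℕ) (hj : jv < m) (p : Fin (2*(k+m)+5)) :
    (x * Fodd k m lam mu γ₁ γ₂ γ₃) p ⟨jv, by omega⟩
      = mu ⟨jv, hj⟩ * x p ⟨2*m+2*k+4-jv, by omega⟩ := by
  rw [mul_Fodd_apply]
  rw [CSO_sum_if_zero _ _ (fun i => by
      have := i.isLt; simp only [Fin.ext_iff, CSO_val_mk] <;> omega)]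
  rw [CSO_sum_if_collapse _ _ (⟨jv, hj⟩ : Fin m) (fun j => by
      have := j.isLt; simp only [Fin.ext_iff, CSO_val_mk] <;> omega)]
  rw [if_neg (by simp only [Fin.ext_iff, CSO_val_mk] <;> omega),
    if_neg (by simp only [Fin.ext_iff, CSO_val_mk] <;> omega),
    if_neg (by simp only [Fin.ext_iff, CSO_val_mk] <;> omega)]
  ring

lemma CSO_R3 (p : Fin (2*(k+m)+5)) :
    (x * Fodd k m lam mu γ₁ γ₂ γ₃) p ⟨m, by omega⟩
      = γ₁ * x p ⟨m+2*k+3, by omega⟩ := by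
  rw [mul_Fodd_apply]
  rw [CSO_sum_if_zero _ _ (fun i => by
      have := i.isLt; simp only [Fin.ext_iff, CSO_val_mk] <;> omega)]
  rw [CSO_sum_if_zero _ _ (fun j => by
      have := j.isLt; simp only [Fin.ext_iff, CSO_val_mk] <;> omega)]
  rw [if_pos rfl,
    if_neg (by simp only [Fin.ext_iff, CSO_val_mk] <;> omega),
    if_neg (by simp only [Fin.ext_iff, CSO_val_mk] <;> omega)]
  ring

lemma CSO_R4 (p : Fin (2*(k+m)+5)) :
    (x * Fodd k m lam mu γ₁ γ₂ γ₃) p ⟨m+1, by omega⟩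
      = γ₂ * x p ⟨m+2*k+4, by omega⟩ := by
  rw [mul_Fodd_apply]
  rw [CSO_sum_if_zero _ _ (fun i => by
      have := i.isLt; simp only [Fin.ext_iff, CSO_val_mk] <;> omega)]
  rw [CSO_sum_if_zero _ _ (fun j => by
      have := j.isLt; simp only [Fin.ext_iff, CSO_val_mk] <;> omega)]
  rw [if_neg (by simp only [Fin.ext_iff, CSO_val_mk] <;> omega),
    if_pos rfl,
    if_neg (by simp only [Fin.ext_iff, CSO_val_mk] <;> omega)]
  ring

lemma CSO_R5 (p : Fin (2*(k+m)+5)) :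
    (x * Fodd k m lam mu γ₁ γ₂ γ₃) p ⟨m+2*k+3, by omega⟩
      = γ₃ * x p ⟨m+2*k+4, by omega⟩ := by
  rw [mul_Fodd_apply]
  rw [CSO_sum_if_zero _ _ (fun i => by
      have := i.isLt; simp only [Fin.ext_iff, CSO_val_mk] <;> omega)]
  rw [CSO_sum_if_zero _ _ (fun j => by
      have := j.isLt; simp only [Fin.ext_iff, CSO_val_mk] <;> omega)]
  rw [if_neg (by simp only [Fin.ext_iff, CSO_val_mk] <;> omega),
    if_neg (by simp only [Fin.ext_iff, CSO_val_mk] <;> omega),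
    if_pos rfl]
  ring

lemma CSO_Rz (p q : Fin (2*(k+m)+5))
    (h1 : ∀ t : Fin (2*(k+m)+5), q.val + t.val = 2*m+2*k+4 → x p t = 0)
    (h2 : q.val = m → x p ⟨m+2*k+3, by omega⟩ = 0)
    (h3 : q.val = m+1 → x p ⟨m+2*k+4, by omega⟩ = 0)
    (h4 : q.val = m+2*k+3 → x p ⟨m+2*k+4, by omega⟩ = 0) :
    (x * Fodd k m lam mu γ₁ γ₂ γ₃) p q = 0 := by
  rw [mul_Fodd_apply]
  have e1 : (∑ i : Fin k, if (⟨m+2+i.val, by have := i.isLt; omega⟩ : Fin (2*(k+m)+5)) = q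
      then lam i * x p ⟨m+2*k+2-i.val, by have := i.isLt; omega⟩ else 0) = 0 := by
    apply Finset.sum_eq_zero
    intro i _
    by_cases h : (⟨m+2+i.val, by have := i.isLt; omega⟩ : Fin (2*(k+m)+5)) = q
    · rw [if_pos h, h1 _ (by
        simp only [Fin.ext_iff, CSO_val_mk] at h ⊢
        have := i.isLt; omega), mul_zero]
    · rw [if_neg h]
  have e2 : (∑ j : Fin m, if (⟨j.val, by have := j.isLt; omega⟩ : Fin (2*(k+m)+5)) = q
      then mu j * x p ⟨2*m+2*k+4-j.val, by have := j.isLt; omega⟩ else 0) = 0 := by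
    apply Finset.sum_eq_zero
    intro j _
    by_cases h : (⟨j.val, by have := j.isLt; omega⟩ : Fin (2*(k+m)+5)) = q
    · rw [if_pos h, h1 _ (by
        simp only [Fin.ext_iff, CSO_val_mk] at h ⊢
        have := j.isLt; omega), mul_zero]
    · rw [if_neg h]
  rw [e1, e2]
  by_cases hA : m = q.val
  · rw [if_pos (CSO_mk_eq hA), h2 hA.symm, mul_zero,
      if_neg (by simp only [Fin.ext_iff, CSO_val_mk] <;> omega),
      if_neg (by simp only [Fin.ext_iff, CSO_val_mk] <;> omega)]
    ring
  · rw [if_neg (CSO_mk_ne hA)]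
    by_cases hB : m+1 = q.val
    · rw [if_pos (CSO_mk_eq hB), h3 hB.symm, mul_zero,
        if_neg (by simp only [Fin.ext_iff, CSO_val_mk] <;> omega)]
      ring
    · rw [if_neg (CSO_mk_ne hB)]
      by_cases hC : m+2*k+3 = q.val
      · rw [if_pos (CSO_mk_eq hC), h4 hC.symm, mul_zero]; ring
      · rw [if_neg (CSO_mk_ne hC)]; ring

end Lemmas

lemma CSO_stab_to_V (k m : ℕ) (hk : 1 ≤ k) (hm : 1 ≤ m)
    (lam : Fin k → ℝ) (hlam : ∀ i : Fin k, lam i ≠ 0)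
    (mu : Fin m → ℝ) (hmu : ∀ j : Fin m, mu j ≠ 0)
    (γ₁ γ₂ γ₃ : ℝ) (hγ₁ : γ₁ ≠ 0) (hγ₂ : γ₂ ≠ 0)
    (x : Matrix (Fin (2*(k+m)+5)) (Fin (2*(k+m)+5)) ℝ) (hu : IsStrictUpper x)
    (hE : ∀ p q : Fin (2*(k+m)+5), q.val < p.val →
      (Fodd k m lam mu γ₁ γ₂ γ₃ * x) p q = (x * Fodd k m lam mu γ₁ γ₂ γ₃) p q) :
    x ∈ Vsub k m γ₁ γ₂ := by
  have hu' : ∀ (a b : Fin (2*(k+m)+5)), b.val ≤ a.val → x a b = 0 :=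
    fun a b h => hu a b (Fin.le_def.mpr h)
  constructor
  · -- all entries outside the allowed positions vanish
    intro p q hbad
    rcases le_or_gt q.val p.val with hle | hpq
    · exact hu' p q hle
    unfold okPos at hbad
    have hp5 := p.isLt
    have hq5 := q.isLt
    have S9 : ∀ (P Q : Fin (2*(k+m)+5)), P.val ≤ m+k+2 → 2*m+2*k+4 - Q.val < P.val →
        m+2*k+5 ≤ Q.val → x P Q = 0 := by
      intro P Q h1 h2 h3
      have hQ5 := Q.isLt
      have e := hE P ⟨2*m+2*k+4 - Q.val, by omega⟩ (by simp only [CSO_val_mk]; omega)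
      rw [CSO_L0 x P _ h1, CSO_R2 x (2*m+2*k+4 - Q.val) (by omega) P] at e
      rw [CSO_mk_eq (show 2*m+2*k+4-(2*m+2*k+4-Q.val) = Q.val by omega)] at e
      exact (mul_eq_zero.mp e.symm).resolve_left (hmu _)
    rcases Nat.lt_or_ge p.val m with hA | hA
    · -- rows in block 1
      rcases Nat.lt_or_ge q.val (2*m+2*k+4 - p.val) with hs | hs
      · have e := hE ⟨2*m+2*k+4 - p.val, by omega⟩ q (by simp only [CSO_val_mk]; omega)
        rw [CSO_L2 x p.val hA q] at e
        rw [CSO_Rz x _ q (fun t ht => hu' _ t (by simp only [CSO_val_mk]; omega))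
            (fun h => hu' _ _ (by simp only [CSO_val_mk]; omega))
            (fun h => hu' _ _ (by simp only [CSO_val_mk]; omega))
            (fun h => hu' _ _ (by simp only [CSO_val_mk]; omega))] at e
        rw [CSO_mk_eq (show p.val = p.val from rfl)] at e
        exact (mul_eq_zero.mp e).resolve_left (hmu _)
      · exact S9 p q (by omega) (by omega) (by omega)
    rcases Nat.lt_or_ge p.val (m+1) with hB | hB
    · -- row m
      rcases Nat.lt_or_ge q.val (m+2*k+3) with hs | hs
      · have e := hE ⟨m+2*k+3, by omega⟩ q (by simp only [CSO_val_mk]; omega)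
        rw [CSO_L3] at e
        rw [CSO_Rz x _ q (fun t ht => hu' _ t (by simp only [CSO_val_mk]; omega))
            (fun h => absurd h (by omega)) (fun h => absurd h (by omega))
            (fun h => absurd h (by omega))] at e
        rw [CSO_mk_eq (show m = p.val by omega)] at e
        exact (mul_eq_zero.mp e).resolve_left hγ₁
      · exact S9 p q (by omega) (by omega) (by omega)
    rcases Nat.lt_or_ge p.val (m+2) with hC | hC
    · -- row m+1
      rcases Nat.lt_or_ge q.val (m+2*k+3) with hs | hs
      · have e := hE ⟨m+2*k+4, by omega⟩ q (by simp only [CSO_val_mk]; omega)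
        rw [CSO_L4] at e
        rw [CSO_Rz x _ q (fun t ht => hu' _ t (by simp only [CSO_val_mk]; omega))
            (fun h => absurd h (by omega)) (fun h => absurd h (by omega))
            (fun h => absurd h (by omega))] at e
        rw [hu' ⟨m+2*k+3, by omega⟩ q (by simp only [CSO_val_mk]; omega)] at e
        rw [CSO_mk_eq (show m+1 = p.val by omega)] at e
        have e2 : γ₂ * x p q = 0 := by linarith [e]
        exact (mul_eq_zero.mp e2).resolve_left hγ₂
      · rcases Nat.lt_or_ge q.val (m+2*k+4) with hs2 | hs2
        · -- q = m+2k+3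
          have e := hE ⟨m+2*k+4, by omega⟩ ⟨m+2*k+3, by omega⟩ (by simp only [CSO_val_mk]; omega)
          rw [CSO_L4, CSO_R5] at e
          rw [hu' ⟨m+2*k+3, by omega⟩ ⟨m+2*k+3, by omega⟩ (by simp only [CSO_val_mk]; omega),
            hu' ⟨m+2*k+4, by omega⟩ ⟨m+2*k+4, by omega⟩ (by simp only [CSO_val_mk]; omega)] at e
          rw [CSO_mk_eq (show m+1 = p.val by omega), CSO_mk_eq (show m+2*k+3 = q.val by omega)] at e
          have e2 : γ₂ * x p q = 0 := by linarith [e]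
          exact (mul_eq_zero.mp e2).resolve_left hγ₂
        · exact S9 p q (by omega) (by omega) (by omega)
    rcases Nat.lt_or_ge p.val (m+k+3) with hD | hD
    · -- rows in block 4 and block 5
      rcases Nat.lt_or_ge q.val (2*m+2*k+4 - p.val) with hs | hs
      · have hivk : p.val - (m+2) < k := by omega
        have e := hE ⟨m+2*k+2 - (p.val - (m+2)), by omega⟩ q (by simp only [CSO_val_mk]; omega)
        rw [CSO_L1 x (p.val - (m+2)) hivk q] at e
        rw [CSO_Rz x _ q (fun t ht => hu' _ t (by simp only [CSO_val_mk]; omega))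
            (fun h => absurd h (by omega)) (fun h => absurd h (by omega))
            (fun h => absurd h (by omega))] at e
        rw [CSO_mk_eq (show m+2+(p.val-(m+2)) = p.val by omega)] at e
        exact (mul_eq_zero.mp e).resolve_left (hlam _)
      · have hs' : 2*m+2*k+4 - p.val < q.val := by omega
        rcases Nat.lt_or_ge q.val (m+2*k+3) with h6 | h6
        · have e := hE p ⟨m+2+(m+2*k+2-q.val), by omega⟩ (by simp only [CSO_val_mk]; omega)
          rw [CSO_L0 x p _ (by omega), CSO_R1 x (m+2*k+2-q.val) (by omega) p] at e
          rw [CSO_mk_eq (show m+2*k+2-(m+2*k+2-q.val) = q.val by omega)] at e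
          exact (mul_eq_zero.mp e.symm).resolve_left (hlam _)
        · rcases Nat.lt_or_ge q.val (m+2*k+4) with h7 | h7
          · have e := hE p ⟨m, by omega⟩ (by simp only [CSO_val_mk]; omega)
            rw [CSO_L0 x p _ (by omega), CSO_R3] at e
            rw [CSO_mk_eq (show m+2*k+3 = q.val by omega)] at e
            exact (mul_eq_zero.mp e.symm).resolve_left hγ₁
          · rcases Nat.lt_or_ge q.val (m+2*k+5) with h8 | h8
            · have e := hE p ⟨m+1, by omega⟩ (by simp only [CSO_val_mk]; omega)
              rw [CSO_L0 x p _ (by omega), CSO_R4] at e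
              rw [CSO_mk_eq (show m+2*k+4 = q.val by omega)] at e
              exact (mul_eq_zero.mp e.symm).resolve_left hγ₂
            · exact S9 p q (by omega) (by omega) (by omega)
    rcases Nat.lt_or_ge p.val (m+2*k+3) with hF | hF
    · -- rows in block 6
      have hiv : m+2*k+2-p.val < k := by omega
      rcases Nat.lt_or_ge q.val (m+2*k+3) with h6 | h6
      · have e := hE p ⟨m+2+(m+2*k+2-q.val), by omega⟩ (by simp only [CSO_val_mk]; omega)
        rw [CSO_L1' x (m+2*k+2-p.val) hiv p _ (by omega)] at e
        rw [CSO_R1 x (m+2*k+2-q.val) (by omega) p] at e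
        rw [hu' ⟨m+2+(m+2*k+2-p.val), by omega⟩ ⟨m+2+(m+2*k+2-q.val), by omega⟩
          (by simp only [CSO_val_mk]; omega)] at e
        rw [CSO_mk_eq (show m+2*k+2-(m+2*k+2-q.val) = q.val by omega)] at e
        rw [mul_zero] at e
        exact (mul_eq_zero.mp e.symm).resolve_left (hlam _)
      · rcases Nat.lt_or_ge q.val (m+2*k+4) with h7 | h7
        · have e := hE p ⟨m, by omega⟩ (by simp only [CSO_val_mk]; omega)
          rw [CSO_L1' x (m+2*k+2-p.val) hiv p _ (by omega)] at e
          rw [CSO_R3] at e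
          rw [hu' ⟨m+2+(m+2*k+2-p.val), by omega⟩ ⟨m, by omega⟩
            (by simp only [CSO_val_mk]; omega)] at e
          rw [CSO_mk_eq (show m+2*k+3 = q.val by omega), mul_zero] at e
          exact (mul_eq_zero.mp e.symm).resolve_left hγ₁
        · rcases Nat.lt_or_ge q.val (m+2*k+5) with h8 | h8
          · have e := hE p ⟨m+1, by omega⟩ (by simp only [CSO_val_mk]; omega)
            rw [CSO_L1' x (m+2*k+2-p.val) hiv p _ (by omega)] at e
            rw [CSO_R4] at e
            rw [hu' ⟨m+2+(m+2*k+2-p.val), by omega⟩ ⟨m+1, by omega⟩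
              (by simp only [CSO_val_mk]; omega)] at e
            rw [CSO_mk_eq (show m+2*k+4 = q.val by omega), mul_zero] at e
            exact (mul_eq_zero.mp e.symm).resolve_left hγ₂
          · have e := hE p ⟨2*m+2*k+4-q.val, by omega⟩ (by simp only [CSO_val_mk]; omega)
            rw [CSO_L1' x (m+2*k+2-p.val) hiv p _ (by omega)] at e
            rw [CSO_R2 x (2*m+2*k+4-q.val) (by omega) p] at e
            rw [hu' ⟨m+2+(m+2*k+2-p.val), by omega⟩ ⟨2*m+2*k+4-q.val, by omega⟩
              (by simp only [CSO_val_mk]; omega)] at e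
            rw [CSO_mk_eq (show 2*m+2*k+4-(2*m+2*k+4-q.val) = q.val by omega), mul_zero] at e
            exact (mul_eq_zero.mp e.symm).resolve_left (hmu _)
    rcases Nat.lt_or_ge p.val (m+2*k+4) with hG | hG
    · -- row m+2k+3
      have e := hE ⟨m+2*k+3, by omega⟩ ⟨2*m+2*k+4-q.val, by omega⟩
        (by simp only [CSO_val_mk]; omega)
      rw [CSO_L3, CSO_R2 x (2*m+2*k+4-q.val) (by omega)] at e
      rw [hu' ⟨m, by omega⟩ ⟨2*m+2*k+4-q.val, by omega⟩
        (by simp only [CSO_val_mk]; omega), mul_zero] at e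
      rw [CSO_mk_eq (show m+2*k+3 = p.val by omega),
        CSO_mk_eq (show 2*m+2*k+4-(2*m+2*k+4-q.val) = q.val by omega)] at e
      exact (mul_eq_zero.mp e.symm).resolve_left (hmu _)
    rcases Nat.lt_or_ge p.val (m+2*k+5) with hH | hH
    · -- row m+2k+4
      have e := hE ⟨m+2*k+4, by omega⟩ ⟨2*m+2*k+4-q.val, by omega⟩
        (by simp only [CSO_val_mk]; omega)
      rw [CSO_L4, CSO_R2 x (2*m+2*k+4-q.val) (by omega)] at e
      rw [hu' ⟨m+1, by omega⟩ ⟨2*m+2*k+4-q.val, by omega⟩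
        (by simp only [CSO_val_mk]; omega), mul_zero] at e
      rw [hu' ⟨m+2*k+3, by omega⟩ ⟨2*m+2*k+4-q.val, by omega⟩
        (by simp only [CSO_val_mk]; omega), mul_zero] at e
      rw [CSO_mk_eq (show m+2*k+4 = p.val by omega),
        CSO_mk_eq (show 2*m+2*k+4-(2*m+2*k+4-q.val) = q.val by omega)] at e
      have e2 : mu ⟨2*m+2*k+4-q.val, by omega⟩ * x p q = 0 := by linarith [e]
      exact (mul_eq_zero.mp e2).resolve_left (hmu _)
    · -- rows in block 9
      have e := hE p ⟨2*m+2*k+4-q.val, by omega⟩ (by simp only [CSO_val_mk]; omega)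
      rw [CSO_L2' x (2*m+2*k+4-p.val) (by omega) p _ (by omega)] at e
      rw [CSO_R2 x (2*m+2*k+4-q.val) (by omega) p] at e
      rw [hu' ⟨2*m+2*k+4-p.val, by omega⟩ ⟨2*m+2*k+4-q.val, by omega⟩
        (by simp only [CSO_val_mk]; omega), mul_zero] at e
      rw [CSO_mk_eq (show 2*m+2*k+4-(2*m+2*k+4-q.val) = q.val by omega)] at e
      exact (mul_eq_zero.mp e.symm).resolve_left (hmu _)
  · -- the linear relation
    have hcon := hE ⟨m+2*k+3, by omega⟩ ⟨m+1, by omega⟩ (by simp only [CSO_val_mk]; omega)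
    rw [CSO_L3, CSO_R4] at hcon
    exact hcon

lemma CSO_V_to_stab (k m : ℕ) (lam : Fin k → ℝ) (mu : Fin m → ℝ) (γ₁ γ₂ γ₃ : ℝ)
    (x : Matrix (Fin (2*(k+m)+5)) (Fin (2*(k+m)+5)) ℝ) (hx : x ∈ Vsub k m γ₁ γ₂) :
    x ∈ coadjStab (Fodd k m lam mu γ₁ γ₂ γ₃) := by
  obtain ⟨hx1, hx2⟩ := hx
  constructor
  · intro i j hji
    have hji' : j.val ≤ i.val := Fin.le_def.mp hji
    exact hx1 i j (by unfold okPos; omega)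
  · rw [CSO_stab_iff]
    intro p q hqp
    have hp5 := p.isLt
    have hq5 := q.isLt
    rw [Fodd_mul_apply, mul_Fodd_apply]
    have e1 : (∑ i : Fin k, if (⟨m+2*k+2-i.val, by have := i.isLt; omega⟩ : Fin (2*(k+m)+5)) = p
        then lam i * x ⟨m+2+i.val, by have := i.isLt; omega⟩ q else 0) = 0 := by
      apply Finset.sum_eq_zero; intro i _
      by_cases h : (⟨m+2*k+2-i.val, by have := i.isLt; omega⟩ : Fin (2*(k+m)+5)) = p
      · have hval := congrArg Fin.val h
        simp only [CSO_val_mk] at hval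
        rw [if_pos h, hx1 _ q (by unfold okPos; simp only [CSO_val_mk]; have := i.isLt; omega), mul_zero]
      · rw [if_neg h]
    have e2 : (∑ j : Fin m, if (⟨2*m+2*k+4-j.val, by have := j.isLt; omega⟩ : Fin (2*(k+m)+5)) = p
        then mu j * x ⟨j.val, by have := j.isLt; omega⟩ q else 0) = 0 := by
      apply Finset.sum_eq_zero; intro j _
      by_cases h : (⟨2*m+2*k+4-j.val, by have := j.isLt; omega⟩ : Fin (2*(k+m)+5)) = p
      · have hval := congrArg Fin.val h
        simp only [CSO_val_mk] at hval
        rw [if_pos h, hx1 _ q (by unfold okPos; simp only [CSO_val_mk]; have := j.isLt; omega), mul_zero]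
      · rw [if_neg h]
    have e4 : (if (⟨m+2*k+4, by omega⟩ : Fin (2*(k+m)+5)) = p
        then γ₂ * x ⟨m+1, by omega⟩ q else 0) = 0 := by
      by_cases h : (⟨m+2*k+4, by omega⟩ : Fin (2*(k+m)+5)) = p
      · have hval := congrArg Fin.val h
        simp only [CSO_val_mk] at hval
        rw [if_pos h, hx1 _ q (by unfold okPos; simp only [CSO_val_mk]; omega), mul_zero]
      · rw [if_neg h]
    have e5 : (if (⟨m+2*k+4, by omega⟩ : Fin (2*(k+m)+5)) = p
        then γ₃ * x ⟨m+2*k+3, by omega⟩ q else 0) = 0 := by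
      by_cases h : (⟨m+2*k+4, by omega⟩ : Fin (2*(k+m)+5)) = p
      · have hval := congrArg Fin.val h
        simp only [CSO_val_mk] at hval
        rw [if_pos h, hx1 _ q (by unfold okPos; simp only [CSO_val_mk]; omega), mul_zero]
      · rw [if_neg h]
    have e3 : (if (⟨m+2*k+3, by omega⟩ : Fin (2*(k+m)+5)) = p
        then γ₁ * x ⟨m, by omega⟩ q else 0)
        = (if m+2*k+3 = p.val ∧ m+1 = q.val
            then γ₁ * x ⟨m, by omega⟩ ⟨m+1, by omega⟩ else 0) := by
      by_cases h1 : m+2*k+3 = p.val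
      · rw [if_pos (CSO_mk_eq h1)]
        by_cases h2 : m+1 = q.val
        · rw [if_pos ⟨h1, h2⟩,
            show q = (⟨m+1, by omega⟩ : Fin (2*(k+m)+5)) from (CSO_mk_eq h2).symm]
        · rw [if_neg (fun hc => h2 hc.2),
            hx1 _ q (by unfold okPos; simp only [CSO_val_mk]; omega), mul_zero]
      · rw [if_neg (CSO_mk_ne h1), if_neg (fun hc => h1 hc.1)]
    have f1 : (∑ i : Fin k, if (⟨m+2+i.val, by have := i.isLt; omega⟩ : Fin (2*(k+m)+5)) = q
        then lam i * x p ⟨m+2*k+2-i.val, by have := i.isLt; omega⟩ else 0) = 0 := by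
      apply Finset.sum_eq_zero; intro i _
      by_cases h : (⟨m+2+i.val, by have := i.isLt; omega⟩ : Fin (2*(k+m)+5)) = q
      · have hval := congrArg Fin.val h
        simp only [CSO_val_mk] at hval
        rw [if_pos h, hx1 p _ (by unfold okPos; simp only [CSO_val_mk]; have := i.isLt; omega), mul_zero]
      · rw [if_neg h]
    have f2 : (∑ j : Fin m, if (⟨j.val, by have := j.isLt; omega⟩ : Fin (2*(k+m)+5)) = q
        then mu j * x p ⟨2*m+2*k+4-j.val, by have := j.isLt; omega⟩ else 0) = 0 := by
      apply Finset.sum_eq_zero; intro j _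
      by_cases h : (⟨j.val, by have := j.isLt; omega⟩ : Fin (2*(k+m)+5)) = q
      · have hval := congrArg Fin.val h
        simp only [CSO_val_mk] at hval
        rw [if_pos h, hx1 p _ (by unfold okPos; simp only [CSO_val_mk]; have := j.isLt; omega), mul_zero]
      · rw [if_neg h]
    have f3 : (if (⟨m, by omega⟩ : Fin (2*(k+m)+5)) = q
        then γ₁ * x p ⟨m+2*k+3, by omega⟩ else 0) = 0 := by
      by_cases h : (⟨m, by omega⟩ : Fin (2*(k+m)+5)) = q
      · have hval := congrArg Fin.val h
        simp only [CSO_val_mk] at hval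
        rw [if_pos h, hx1 p _ (by unfold okPos; simp only [CSO_val_mk]; omega), mul_zero]
      · rw [if_neg h]
    have f5 : (if (⟨m+2*k+3, by omega⟩ : Fin (2*(k+m)+5)) = q
        then γ₃ * x p ⟨m+2*k+4, by omega⟩ else 0) = 0 := by
      by_cases h : (⟨m+2*k+3, by omega⟩ : Fin (2*(k+m)+5)) = q
      · have hval := congrArg Fin.val h
        simp only [CSO_val_mk] at hval
        rw [if_pos h, hx1 p _ (by unfold okPos; simp only [CSO_val_mk]; omega), mul_zero]
      · rw [if_neg h]
    have f4 : (if (⟨m+1, by omega⟩ : Fin (2*(k+m)+5)) = q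
        then γ₂ * x p ⟨m+2*k+4, by omega⟩ else 0)
        = (if m+2*k+3 = p.val ∧ m+1 = q.val
            then γ₂ * x ⟨m+2*k+3, by omega⟩ ⟨m+2*k+4, by omega⟩ else 0) := by
      by_cases h2 : m+1 = q.val
      · rw [if_pos (CSO_mk_eq h2)]
        by_cases h1 : m+2*k+3 = p.val
        · rw [if_pos ⟨h1, h2⟩,
            show p = (⟨m+2*k+3, by omega⟩ : Fin (2*(k+m)+5)) from (CSO_mk_eq h1).symm]
        · rw [if_neg (fun hc => h1 hc.1),
            hx1 p _ (by unfold okPos; simp only [CSO_val_mk]; omega), mul_zero]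
      · rw [if_neg (CSO_mk_ne h2), if_neg (fun hc => h2 hc.2)]
    rw [e1, e2, e3, e4, e5, f1, f2, f3, f4, f5]
    by_cases hC : m+2*k+3 = p.val ∧ m+1 = q.val
    · rw [if_pos hC, if_pos hC]
      simp only [zero_add, add_zero]
      exact hx2
    · rw [if_neg hC, if_neg hC]

lemma CSO_ite_entry {n : ℕ} (x : Matrix (Fin n) (Fin n) ℝ) (v w : ℕ) (hv : v < n)
    (hw : w < n) (p q : Fin n) (c : ℝ) (hc : p.val = v ∧ q.val = w → c = x p q) :
    (if (⟨v, hv⟩ : Fin n) = p ∧ (⟨w, hw⟩ : Fin n) = q then c else 0)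
      = if p.val = v ∧ q.val = w then x p q else 0 := by
  by_cases h : p.val = v ∧ q.val = w
  · rw [if_pos ⟨CSO_mk_eq h.1.symm, CSO_mk_eq h.2.symm⟩, if_pos h, hc h]
  · rw [if_neg (fun hc' => h ⟨(congrArg Fin.val hc'.1).symm, (congrArg Fin.val hc'.2).symm⟩),
      if_neg h]

lemma CSO_span_le_V (k m : ℕ) (γ₁ γ₂ : ℝ) :
    genOdd k m γ₁ γ₂ ⊆ (Vsub k m γ₁ γ₂ : Set (Matrix (Fin (2*(k+m)+5)) (Fin (2*(k+m)+5)) ℝ)) := by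
  rintro z (h | h)
  · rcases h with ⟨a, rfl⟩ | ⟨a, rfl⟩
    · refine ⟨fun p q hbad => ?_, ?_⟩
      · beta_reduce
        refine Matrix.single_apply_of_ne _ _ _ _ _ (fun hc => hbad ?_)
        obtain ⟨h1, h2⟩ := hc
        have h1' := congrArg Fin.val h1
        have h2' := congrArg Fin.val h2
        simp only [CSO_val_mk] at h1' h2'
        unfold okPos; have := a.isLt; omega
      · beta_reduce
        rw [Matrix.single_apply_of_ne _ _ _ _ _
            (by have := a.isLt; simp only [Fin.ext_iff, CSO_val_mk] <;> omega),
          Matrix.single_apply_of_ne _ _ _ _ _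
            (by have := a.isLt; simp only [Fin.ext_iff, CSO_val_mk] <;> omega)]
        ring
    · refine ⟨fun p q hbad => ?_, ?_⟩
      · beta_reduce
        refine Matrix.single_apply_of_ne _ _ _ _ _ (fun hc => hbad ?_)
        obtain ⟨h1, h2⟩ := hc
        have h1' := congrArg Fin.val h1
        have h2' := congrArg Fin.val h2
        simp only [CSO_val_mk] at h1' h2'
        unfold okPos; have := a.isLt; omega
      · beta_reduce
        rw [Matrix.single_apply_of_ne _ _ _ _ _
            (by have := a.isLt; simp only [Fin.ext_iff, CSO_val_mk] <;> omega),
          Matrix.single_apply_of_ne _ _ _ _ _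
            (by have := a.isLt; simp only [Fin.ext_iff, CSO_val_mk] <;> omega)]
        ring
  · simp only [Set.mem_insert_iff, Set.mem_singleton_iff] at h
    rcases h with rfl | rfl | rfl | rfl
    · refine ⟨fun p q hbad => ?_, ?_⟩
      · refine Matrix.single_apply_of_ne _ _ _ _ _ (fun hc => hbad ?_)
        obtain ⟨h1, h2⟩ := hc
        have h1' := congrArg Fin.val h1
        have h2' := congrArg Fin.val h2
        simp only [CSO_val_mk] at h1' h2'
        unfold okPos; omega
      · rw [Matrix.single_apply_of_ne _ _ _ _ _
            (by simp only [Fin.ext_iff, CSO_val_mk] <;> omega),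
          Matrix.single_apply_of_ne _ _ _ _ _
            (by simp only [Fin.ext_iff, CSO_val_mk] <;> omega)]
        ring
    · refine ⟨fun p q hbad => ?_, ?_⟩
      · refine Matrix.single_apply_of_ne _ _ _ _ _ (fun hc => hbad ?_)
        obtain ⟨h1, h2⟩ := hc
        have h1' := congrArg Fin.val h1
        have h2' := congrArg Fin.val h2
        simp only [CSO_val_mk] at h1' h2'
        unfold okPos; omega
      · rw [Matrix.single_apply_of_ne _ _ _ _ _
            (by simp only [Fin.ext_iff, CSO_val_mk] <;> omega),
          Matrix.single_apply_of_ne _ _ _ _ _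
            (by simp only [Fin.ext_iff, CSO_val_mk] <;> omega)]
        ring
    · refine ⟨fun p q hbad => ?_, ?_⟩
      · refine Matrix.single_apply_of_ne _ _ _ _ _ (fun hc => hbad ?_)
        obtain ⟨h1, h2⟩ := hc
        have h1' := congrArg Fin.val h1
        have h2' := congrArg Fin.val h2
        simp only [CSO_val_mk] at h1' h2'
        unfold okPos; omega
      · rw [Matrix.single_apply_of_ne _ _ _ _ _
            (by simp only [Fin.ext_iff, CSO_val_mk] <;> omega),
          Matrix.single_apply_of_ne _ _ _ _ _
            (by simp only [Fin.ext_iff, CSO_val_mk] <;> omega)]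
        ring
    · refine ⟨fun p q hbad => ?_, ?_⟩
      · simp only [Matrix.add_apply, Matrix.smul_apply, smul_eq_mul]
        rw [Matrix.single_apply_of_ne _ _ _ _ _ (fun hc => hbad (by
            obtain ⟨h1, h2⟩ := hc
            have h1' := congrArg Fin.val h1
            have h2' := congrArg Fin.val h2
            simp only [CSO_val_mk] at h1' h2'
            unfold okPos; omega)),
          Matrix.single_apply_of_ne _ _ _ _ _ (fun hc => hbad (by
            obtain ⟨h1, h2⟩ := hc
            have h1' := congrArg Fin.val h1
            have h2' := congrArg Fin.val h2
            simp only [CSO_val_mk] at h1' h2'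
            unfold okPos; omega))]
        ring
      · simp only [Matrix.add_apply, Matrix.smul_apply, smul_eq_mul]
        rw [Matrix.single_apply_same, Matrix.single_apply_same,
          Matrix.single_apply_of_ne _ _ _ _ _
            (by simp only [Fin.ext_iff, CSO_val_mk] <;> omega),
          Matrix.single_apply_of_ne _ _ _ _ _
            (by simp only [Fin.ext_iff, CSO_val_mk] <;> omega)]
        ring

lemma CSO_V_le_span (k m : ℕ) (hk : 1 ≤ k) (hm : 1 ≤ m) (γ₁ γ₂ : ℝ) (hγ₁ : γ₁ ≠ 0)
    (x : Matrix (Fin (2*(k+m)+5)) (Fin (2*(k+m)+5)) ℝ) (hx : x ∈ Vsub k m γ₁ γ₂) :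
    x ∈ Submodule.span ℝ (genOdd k m γ₁ γ₂) := by
  obtain ⟨hx1, hx2⟩ := hx
  have hrepr : x =
      (∑ a : Fin k, x ⟨m+2+a.val, by have := a.isLt; omega⟩ ⟨m+2*k+2-a.val, by have := a.isLt; omega⟩
        • Matrix.single (⟨m+2+a.val, by have := a.isLt; omega⟩ : Fin (2*(k+m)+5))
          (⟨m+2*k+2-a.val, by have := a.isLt; omega⟩ : Fin (2*(k+m)+5)) (1:ℝ))
    + (∑ a : Fin m, x ⟨a.val, by have := a.isLt; omega⟩ ⟨2*m+2*k+4-a.val, by have := a.isLt; omega⟩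
        • Matrix.single (⟨a.val, by have := a.isLt; omega⟩ : Fin (2*(k+m)+5))
          (⟨2*m+2*k+4-a.val, by have := a.isLt; omega⟩ : Fin (2*(k+m)+5)) (1:ℝ))
    + x ⟨m, by omega⟩ ⟨m+2*k+3, by omega⟩
        • Matrix.single (⟨m, by omega⟩ : Fin (2*(k+m)+5)) ⟨m+2*k+3, by omega⟩ (1:ℝ)
    + x ⟨m, by omega⟩ ⟨m+2*k+4, by omega⟩
        • Matrix.single (⟨m, by omega⟩ : Fin (2*(k+m)+5)) ⟨m+2*k+4, by omega⟩ (1:ℝ)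
    + x ⟨m+1, by omega⟩ ⟨m+2*k+4, by omega⟩
        • Matrix.single (⟨m+1, by omega⟩ : Fin (2*(k+m)+5)) ⟨m+2*k+4, by omega⟩ (1:ℝ)
    + (γ₁⁻¹ * x ⟨m+2*k+3, by omega⟩ ⟨m+2*k+4, by omega⟩)
        • (γ₂ • Matrix.single (⟨m, by omega⟩ : Fin (2*(k+m)+5)) ⟨m+1, by omega⟩ (1:ℝ)
          + γ₁ • Matrix.single (⟨m+2*k+3, by omega⟩ : Fin (2*(k+m)+5)) ⟨m+2*k+4, by omega⟩ (1:ℝ)) := by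
    ext p q
    have hp5 := p.isLt
    have hq5 := q.isLt
    simp only [Matrix.add_apply, Matrix.sum_apply, Matrix.smul_apply, CSO_std_apply,
      smul_eq_mul, mul_add, mul_ite, mul_one, mul_zero]
    have hS1 : (∑ a : Fin k,
        if (⟨m+2+a.val, by have := a.isLt; omega⟩ : Fin (2*(k+m)+5)) = p
            ∧ (⟨m+2*k+2-a.val, by have := a.isLt; omega⟩ : Fin (2*(k+m)+5)) = q
          then x ⟨m+2+a.val, by have := a.isLt; omega⟩ ⟨m+2*k+2-a.val, by have := a.isLt; omega⟩
          else 0)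
        = if m+2 ≤ p.val ∧ p.val < m+k+2 ∧ p.val + q.val = 2*m+2*k+4 then x p q else 0 := by
      by_cases hc : m+2 ≤ p.val ∧ p.val < m+k+2 ∧ p.val + q.val = 2*m+2*k+4
      · rw [if_pos hc, CSO_sum_if_collapse _ _ (⟨p.val-(m+2), by omega⟩ : Fin k)
            (fun a => by have := a.isLt; simp only [Fin.ext_iff, CSO_val_mk] <;> omega),
          CSO_mk_eq (show m+2+(p.val-(m+2)) = p.val by omega),
          CSO_mk_eq (show m+2*k+2-(p.val-(m+2)) = q.val by omega)]
      · rw [if_neg hc, CSO_sum_if_zero _ _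
            (fun a => by have := a.isLt; simp only [Fin.ext_iff, CSO_val_mk] <;> omega)]
    have hS2 : (∑ a : Fin m,
        if (⟨a.val, by have := a.isLt; omega⟩ : Fin (2*(k+m)+5)) = p
            ∧ (⟨2*m+2*k+4-a.val, by have := a.isLt; omega⟩ : Fin (2*(k+m)+5)) = q
          then x ⟨a.val, by have := a.isLt; omega⟩ ⟨2*m+2*k+4-a.val, by have := a.isLt; omega⟩
          else 0)
        = if p.val < m ∧ p.val + q.val = 2*m+2*k+4 then x p q else 0 := by
      by_cases hc : p.val < m ∧ p.val + q.val = 2*m+2*k+4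
      · rw [if_pos hc, CSO_sum_if_collapse _ _ (⟨p.val, by omega⟩ : Fin m)
            (fun a => by have := a.isLt; simp only [Fin.ext_iff, CSO_val_mk] <;> omega),
          CSO_mk_eq (show p.val = p.val from rfl),
          CSO_mk_eq (show 2*m+2*k+4-p.val = q.val by omega)]
      · rw [if_neg hc, CSO_sum_if_zero _ _
            (fun a => by have := a.isLt; simp only [Fin.ext_iff, CSO_val_mk] <;> omega)]
    rw [hS1, hS2,
      CSO_ite_entry x m (m+2*k+3) (by omega) (by omega) p q
        (x ⟨m, by omega⟩ ⟨m+2*k+3, by omega⟩) (fun h => by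
          rw [CSO_mk_eq h.1.symm, CSO_mk_eq h.2.symm]),
      CSO_ite_entry x m (m+2*k+4) (by omega) (by omega) p q
        (x ⟨m, by omega⟩ ⟨m+2*k+4, by omega⟩) (fun h => by
          rw [CSO_mk_eq h.1.symm, CSO_mk_eq h.2.symm]),
      CSO_ite_entry x (m+1) (m+2*k+4) (by omega) (by omega) p q
        (x ⟨m+1, by omega⟩ ⟨m+2*k+4, by omega⟩) (fun h => by
          rw [CSO_mk_eq h.1.symm, CSO_mk_eq h.2.symm]),
      CSO_ite_entry x m (m+1) (by omega) (by omega) p q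
        (γ₁⁻¹ * x ⟨m+2*k+3, by omega⟩ ⟨m+2*k+4, by omega⟩ * γ₂) (fun h => by
          have e := congrArg₂ x (show p = (⟨m, by omega⟩ : Fin (2*(k+m)+5)) from Fin.ext h.1)
            (show q = (⟨m+1, by omega⟩ : Fin (2*(k+m)+5)) from Fin.ext h.2)
          rw [e]
          field_simp
          linear_combination (-1 : ℝ) * hx2),
      CSO_ite_entry x (m+2*k+3) (m+2*k+4) (by omega) (by omega) p q
        (γ₁⁻¹ * x ⟨m+2*k+3, by omega⟩ ⟨m+2*k+4, by omega⟩ * γ₁) (fun h => by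
          have e := congrArg₂ x
            (show p = (⟨m+2*k+3, by omega⟩ : Fin (2*(k+m)+5)) from Fin.ext h.1)
            (show q = (⟨m+2*k+4, by omega⟩ : Fin (2*(k+m)+5)) from Fin.ext h.2)
          rw [e]
          field_simp)]
    by_cases hok : okPos k m p.val q.val
    · unfold okPos at hok
      rcases hok with h | h | h | h | h | h | h
      · rw [if_pos h,
          if_neg (show ¬(p.val < m ∧ p.val + q.val = 2*m+2*k+4) from by omega),
          if_neg (show ¬(p.val = m ∧ q.val = m+2*k+3) from by omega),
          if_neg (show ¬(p.val = m ∧ q.val = m+2*k+4) from by omega),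
          if_neg (show ¬(p.val = m+1 ∧ q.val = m+2*k+4) from by omega),
          if_neg (show ¬(p.val = m ∧ q.val = m+1) from by omega),
          if_neg (show ¬(p.val = m+2*k+3 ∧ q.val = m+2*k+4) from by omega)]
        ring
      · rw [if_neg (show ¬(m+2 ≤ p.val ∧ p.val < m+k+2 ∧ p.val + q.val = 2*m+2*k+4) from by omega),
          if_pos h,
          if_neg (show ¬(p.val = m ∧ q.val = m+2*k+3) from by omega),
          if_neg (show ¬(p.val = m ∧ q.val = m+2*k+4) from by omega),
          if_neg (show ¬(p.val = m+1 ∧ q.val = m+2*k+4) from by omega),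
          if_neg (show ¬(p.val = m ∧ q.val = m+1) from by omega),
          if_neg (show ¬(p.val = m+2*k+3 ∧ q.val = m+2*k+4) from by omega)]
        ring
      · rw [if_neg (show ¬(m+2 ≤ p.val ∧ p.val < m+k+2 ∧ p.val + q.val = 2*m+2*k+4) from by omega),
          if_neg (show ¬(p.val < m ∧ p.val + q.val = 2*m+2*k+4) from by omega),
          if_pos h,
          if_neg (show ¬(p.val = m ∧ q.val = m+2*k+4) from by omega),
          if_neg (show ¬(p.val = m+1 ∧ q.val = m+2*k+4) from by omega),
          if_neg (show ¬(p.val = m ∧ q.val = m+1) from by omega),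
          if_neg (show ¬(p.val = m+2*k+3 ∧ q.val = m+2*k+4) from by omega)]
        ring
      · rw [if_neg (show ¬(m+2 ≤ p.val ∧ p.val < m+k+2 ∧ p.val + q.val = 2*m+2*k+4) from by omega),
          if_neg (show ¬(p.val < m ∧ p.val + q.val = 2*m+2*k+4) from by omega),
          if_neg (show ¬(p.val = m ∧ q.val = m+2*k+3) from by omega),
          if_pos h,
          if_neg (show ¬(p.val = m+1 ∧ q.val = m+2*k+4) from by omega),
          if_neg (show ¬(p.val = m ∧ q.val = m+1) from by omega),
          if_neg (show ¬(p.val = m+2*k+3 ∧ q.val = m+2*k+4) from by omega)]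
        ring
      · rw [if_neg (show ¬(m+2 ≤ p.val ∧ p.val < m+k+2 ∧ p.val + q.val = 2*m+2*k+4) from by omega),
          if_neg (show ¬(p.val < m ∧ p.val + q.val = 2*m+2*k+4) from by omega),
          if_neg (show ¬(p.val = m ∧ q.val = m+2*k+3) from by omega),
          if_neg (show ¬(p.val = m ∧ q.val = m+2*k+4) from by omega),
          if_pos h,
          if_neg (show ¬(p.val = m ∧ q.val = m+1) from by omega),
          if_neg (show ¬(p.val = m+2*k+3 ∧ q.val = m+2*k+4) from by omega)]
        ring
      · rw [if_neg (show ¬(m+2 ≤ p.val ∧ p.val < m+k+2 ∧ p.val + q.val = 2*m+2*k+4) from by omega),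
          if_neg (show ¬(p.val < m ∧ p.val + q.val = 2*m+2*k+4) from by omega),
          if_neg (show ¬(p.val = m ∧ q.val = m+2*k+3) from by omega),
          if_neg (show ¬(p.val = m ∧ q.val = m+2*k+4) from by omega),
          if_neg (show ¬(p.val = m+1 ∧ q.val = m+2*k+4) from by omega),
          if_pos h,
          if_neg (show ¬(p.val = m+2*k+3 ∧ q.val = m+2*k+4) from by omega)]
        ring
      · rw [if_neg (show ¬(m+2 ≤ p.val ∧ p.val < m+k+2 ∧ p.val + q.val = 2*m+2*k+4) from by omega),
          if_neg (show ¬(p.val < m ∧ p.val + q.val = 2*m+2*k+4) from by omega),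
          if_neg (show ¬(p.val = m ∧ q.val = m+2*k+3) from by omega),
          if_neg (show ¬(p.val = m ∧ q.val = m+2*k+4) from by omega),
          if_neg (show ¬(p.val = m+1 ∧ q.val = m+2*k+4) from by omega),
          if_neg (show ¬(p.val = m ∧ q.val = m+1) from by omega),
          if_pos h]
        ring
    · rw [hx1 p q hok]
      unfold okPos at hok
      rw [if_neg (show ¬(m+2 ≤ p.val ∧ p.val < m+k+2 ∧ p.val + q.val = 2*m+2*k+4) from by omega),
        if_neg (show ¬(p.val < m ∧ p.val + q.val = 2*m+2*k+4) from by omega),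
        if_neg (show ¬(p.val = m ∧ q.val = m+2*k+3) from by omega),
        if_neg (show ¬(p.val = m ∧ q.val = m+2*k+4) from by omega),
        if_neg (show ¬(p.val = m+1 ∧ q.val = m+2*k+4) from by omega),
        if_neg (show ¬(p.val = m ∧ q.val = m+1) from by omega),
        if_neg (show ¬(p.val = m+2*k+3 ∧ q.val = m+2*k+4) from by omega)]
      ring
  rw [hrepr]
  refine Submodule.add_mem _ (Submodule.add_mem _ (Submodule.add_mem _ (Submodule.add_mem _
    (Submodule.add_mem _ ?_ ?_) ?_) ?_) ?_) ?_
  · exact Submodule.sum_mem _ (fun a _ => Submodule.smul_mem _ _ (Submodule.subset_span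
      (Set.mem_union_left _ (Set.mem_union_left _ ⟨a, rfl⟩))))
  · exact Submodule.sum_mem _ (fun a _ => Submodule.smul_mem _ _ (Submodule.subset_span
      (Set.mem_union_left _ (Set.mem_union_right _ ⟨a, rfl⟩))))
  · exact Submodule.smul_mem _ _ (Submodule.subset_span
      (Set.mem_union_right _ (Set.mem_insert _ _)))
  · exact Submodule.smul_mem _ _ (Submodule.subset_span
      (Set.mem_union_right _ (Set.mem_insert_of_mem _ (Set.mem_insert _ _))))
  · exact Submodule.smul_mem _ _ (Submodule.subset_span
      (Set.mem_union_right _ (Set.mem_insert_of_mem _ (Set.mem_insert_of_mem _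
        (Set.mem_insert _ _)))))
  · exact Submodule.smul_mem _ _ (Submodule.subset_span
      (Set.mem_union_right _ (Set.mem_insert_of_mem _ (Set.mem_insert_of_mem _
        (Set.mem_insert_of_mem _ rfl)))))

def CSO_g4 (k m : ℕ) (γ₁ γ₂ : ℝ) : Fin 4 → Matrix (Fin (2*(k+m)+5)) (Fin (2*(k+m)+5)) ℝ :=
  ![Matrix.single (⟨m, by omega⟩ : Fin (2*(k+m)+5)) ⟨m+2*k+3, by omega⟩ (1:ℝ),
    Matrix.single (⟨m, by omega⟩ : Fin (2*(k+m)+5)) ⟨m+2*k+4, by omega⟩ (1:ℝ),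
    Matrix.single (⟨m+1, by omega⟩ : Fin (2*(k+m)+5)) ⟨m+2*k+4, by omega⟩ (1:ℝ),
    γ₂ • Matrix.single (⟨m, by omega⟩ : Fin (2*(k+m)+5)) ⟨m+1, by omega⟩ (1:ℝ)
      + γ₁ • Matrix.single (⟨m+2*k+3, by omega⟩ : Fin (2*(k+m)+5)) ⟨m+2*k+4, by omega⟩ (1:ℝ)]

def CSO_fam (k m : ℕ) (γ₁ γ₂ : ℝ) :
    (Fin k ⊕ (Fin m ⊕ Fin 4)) → Matrix (Fin (2*(k+m)+5)) (Fin (2*(k+m)+5)) ℝ :=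
  Sum.elim
    (fun a : Fin k => Matrix.single
      (⟨m+2+a.val, by have := a.isLt; omega⟩ : Fin (2*(k+m)+5))
      (⟨m+2*k+2-a.val, by have := a.isLt; omega⟩ : Fin (2*(k+m)+5)) (1:ℝ))
    (Sum.elim
      (fun a : Fin m => Matrix.single
        (⟨a.val, by have := a.isLt; omega⟩ : Fin (2*(k+m)+5))
        (⟨2*m+2*k+4-a.val, by have := a.isLt; omega⟩ : Fin (2*(k+m)+5)) (1:ℝ))
      (CSO_g4 k m γ₁ γ₂))

lemma CSO_g4_0 (k m : ℕ) (γ₁ γ₂ : ℝ) : CSO_g4 k m γ₁ γ₂ 0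
    = Matrix.single (⟨m, by omega⟩ : Fin (2*(k+m)+5)) ⟨m+2*k+3, by omega⟩ (1:ℝ) := rfl
lemma CSO_g4_1 (k m : ℕ) (γ₁ γ₂ : ℝ) : CSO_g4 k m γ₁ γ₂ 1
    = Matrix.single (⟨m, by omega⟩ : Fin (2*(k+m)+5)) ⟨m+2*k+4, by omega⟩ (1:ℝ) := rfl
lemma CSO_g4_2 (k m : ℕ) (γ₁ γ₂ : ℝ) : CSO_g4 k m γ₁ γ₂ 2
    = Matrix.single (⟨m+1, by omega⟩ : Fin (2*(k+m)+5)) ⟨m+2*k+4, by omega⟩ (1:ℝ) := rfl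
lemma CSO_g4_3 (k m : ℕ) (γ₁ γ₂ : ℝ) : CSO_g4 k m γ₁ γ₂ 3
    = γ₂ • Matrix.single (⟨m, by omega⟩ : Fin (2*(k+m)+5)) ⟨m+1, by omega⟩ (1:ℝ)
      + γ₁ • Matrix.single (⟨m+2*k+3, by omega⟩ : Fin (2*(k+m)+5))
          ⟨m+2*k+4, by omega⟩ (1:ℝ) := rfl

lemma CSO_range (k m : ℕ) (γ₁ γ₂ : ℝ) :
    Set.range (CSO_fam k m γ₁ γ₂) = genOdd k m γ₁ γ₂ := by
  have h4 : Set.range (CSO_g4 k m γ₁ γ₂)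
      = {Matrix.single (⟨m, by omega⟩ : Fin (2*(k+m)+5)) ⟨m+2*k+3, by omega⟩ (1:ℝ),
         Matrix.single (⟨m, by omega⟩ : Fin (2*(k+m)+5)) ⟨m+2*k+4, by omega⟩ (1:ℝ),
         Matrix.single (⟨m+1, by omega⟩ : Fin (2*(k+m)+5)) ⟨m+2*k+4, by omega⟩ (1:ℝ),
         γ₂ • Matrix.single (⟨m, by omega⟩ : Fin (2*(k+m)+5)) ⟨m+1, by omega⟩ (1:ℝ)
           + γ₁ • Matrix.single (⟨m+2*k+3, by omega⟩ : Fin (2*(k+m)+5))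
               ⟨m+2*k+4, by omega⟩ (1:ℝ)} := by
    ext z
    constructor
    · rintro ⟨i, rfl⟩
      fin_cases i
      · exact Set.mem_insert _ _
      · exact Set.mem_insert_of_mem _ (Set.mem_insert _ _)
      · exact Set.mem_insert_of_mem _ (Set.mem_insert_of_mem _ (Set.mem_insert _ _))
      · exact Set.mem_insert_of_mem _ (Set.mem_insert_of_mem _ (Set.mem_insert_of_mem _ rfl))
    · intro hz
      simp only [Set.mem_insert_iff, Set.mem_singleton_iff] at hz
      rcases hz with rfl | rfl | rfl | rfl
      exacts [⟨0, rfl⟩, ⟨1, rfl⟩, ⟨2, rfl⟩, ⟨3, rfl⟩]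
  rw [CSO_fam, Set.Sum.elim_range, Set.Sum.elim_range, h4, genOdd, Set.union_assoc]

lemma CSO_li (k m : ℕ) (γ₁ γ₂ : ℝ) (hγ₂ : γ₂ ≠ 0) :
    LinearIndependent ℝ (CSO_fam k m γ₁ γ₂) := by
  rw [Fintype.linearIndependent_iff]
  intro g hg
  have hterm : ∀ (r s : Fin (2*(k+m)+5)),
      (∑ i : Fin k, g (Sum.inl i) * (CSO_fam k m γ₁ γ₂ (Sum.inl i)) r s)
      + ((∑ j : Fin m, g (Sum.inr (Sum.inl j)) * (CSO_fam k m γ₁ γ₂ (Sum.inr (Sum.inl j))) r s)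
      + (∑ t : Fin 4, g (Sum.inr (Sum.inr t)) * (CSO_fam k m γ₁ γ₂ (Sum.inr (Sum.inr t))) r s))
      = 0 := by
    intro r s
    have h0 := congrArg (fun M => M r s) hg
    simp only [Matrix.sum_apply, Matrix.smul_apply, smul_eq_mul, Matrix.zero_apply] at h0
    rw [Fintype.sum_sum_type, Fintype.sum_sum_type] at h0
    exact h0
  rintro (a | a | t)
  · have h := hterm ⟨m+2+a.val, by have := a.isLt; omega⟩
      ⟨m+2*k+2-a.val, by have := a.isLt; omega⟩
    rw [Fin.sum_univ_four] at h
    simp only [CSO_fam, Sum.elim_inl, Sum.elim_inr, CSO_g4_0, CSO_g4_1, CSO_g4_2, CSO_g4_3,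
      CSO_std_apply, Matrix.add_apply, Matrix.smul_apply, smul_eq_mul, mul_add,
      mul_ite, mul_one, mul_zero] at h
    rw [CSO_sum_if_collapse _ _ a (fun i => by
        have := i.isLt; have := a.isLt; simp only [Fin.ext_iff, CSO_val_mk] <;> omega),
      CSO_sum_if_zero _ _ (fun j => by
        have := j.isLt; have := a.isLt; simp only [Fin.ext_iff, CSO_val_mk] <;> omega),
      if_neg (by have := a.isLt; simp only [Fin.ext_iff, CSO_val_mk] <;> omega),
      if_neg (by have := a.isLt; simp only [Fin.ext_iff, CSO_val_mk] <;> omega),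
      if_neg (by have := a.isLt; simp only [Fin.ext_iff, CSO_val_mk] <;> omega),
      if_neg (by have := a.isLt; simp only [Fin.ext_iff, CSO_val_mk] <;> omega),
      if_neg (by have := a.isLt; simp only [Fin.ext_iff, CSO_val_mk] <;> omega)] at h
    simpa using h
  · have h := hterm ⟨a.val, by have := a.isLt; omega⟩
      ⟨2*m+2*k+4-a.val, by have := a.isLt; omega⟩
    rw [Fin.sum_univ_four] at h
    simp only [CSO_fam, Sum.elim_inl, Sum.elim_inr, CSO_g4_0, CSO_g4_1, CSO_g4_2, CSO_g4_3,
      CSO_std_apply, Matrix.add_apply, Matrix.smul_apply, smul_eq_mul, mul_add,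
      mul_ite, mul_one, mul_zero] at h
    rw [CSO_sum_if_zero _ _ (fun i => by
        have := i.isLt; have := a.isLt; simp only [Fin.ext_iff, CSO_val_mk] <;> omega),
      CSO_sum_if_collapse _ _ a (fun j => by
        have := j.isLt; have := a.isLt; simp only [Fin.ext_iff, CSO_val_mk] <;> omega),
      if_neg (by have := a.isLt; simp only [Fin.ext_iff, CSO_val_mk] <;> omega),
      if_neg (by have := a.isLt; simp only [Fin.ext_iff, CSO_val_mk] <;> omega),
      if_neg (by have := a.isLt; simp only [Fin.ext_iff, CSO_val_mk] <;> omega),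
      if_neg (by have := a.isLt; simp only [Fin.ext_iff, CSO_val_mk] <;> omega),
      if_neg (by have := a.isLt; simp only [Fin.ext_iff, CSO_val_mk] <;> omega)] at h
    simpa using h
  · fin_cases t
    · have h := hterm ⟨m, by omega⟩ ⟨m+2*k+3, by omega⟩
      rw [Fin.sum_univ_four] at h
      simp only [CSO_fam, Sum.elim_inl, Sum.elim_inr, CSO_g4_0, CSO_g4_1, CSO_g4_2, CSO_g4_3,
        CSO_std_apply, Matrix.add_apply, Matrix.smul_apply, smul_eq_mul, mul_add,
        mul_ite, mul_one, mul_zero] at h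
      rw [CSO_sum_if_zero _ _ (fun i => by
          have := i.isLt; simp only [Fin.ext_iff, CSO_val_mk] <;> omega),
        CSO_sum_if_zero _ _ (fun j => by
          have := j.isLt; simp only [Fin.ext_iff, CSO_val_mk] <;> omega),
        if_pos ⟨trivial, trivial⟩,
        if_neg (by simp only [Fin.ext_iff, CSO_val_mk] <;> omega),
        if_neg (by simp only [Fin.ext_iff, CSO_val_mk] <;> omega),
        if_neg (by simp only [Fin.ext_iff, CSO_val_mk] <;> omega),
        if_neg (by simp only [Fin.ext_iff, CSO_val_mk] <;> omega)] at h
      simpa using h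
    · have h := hterm ⟨m, by omega⟩ ⟨m+2*k+4, by omega⟩
      rw [Fin.sum_univ_four] at h
      simp only [CSO_fam, Sum.elim_inl, Sum.elim_inr, CSO_g4_0, CSO_g4_1, CSO_g4_2, CSO_g4_3,
        CSO_std_apply, Matrix.add_apply, Matrix.smul_apply, smul_eq_mul, mul_add,
        mul_ite, mul_one, mul_zero] at h
      rw [CSO_sum_if_zero _ _ (fun i => by
          have := i.isLt; simp only [Fin.ext_iff, CSO_val_mk] <;> omega),
        CSO_sum_if_zero _ _ (fun j => by
          have := j.isLt; simp only [Fin.ext_iff, CSO_val_mk] <;> omega),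
        if_neg (by simp only [Fin.ext_iff, CSO_val_mk] <;> omega),
        if_pos ⟨trivial, trivial⟩,
        if_neg (by simp only [Fin.ext_iff, CSO_val_mk] <;> omega),
        if_neg (by simp only [Fin.ext_iff, CSO_val_mk] <;> omega),
        if_neg (by simp only [Fin.ext_iff, CSO_val_mk] <;> omega)] at h
      simpa using h
    · have h := hterm ⟨m+1, by omega⟩ ⟨m+2*k+4, by omega⟩
      rw [Fin.sum_univ_four] at h
      simp only [CSO_fam, Sum.elim_inl, Sum.elim_inr, CSO_g4_0, CSO_g4_1, CSO_g4_2, CSO_g4_3,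
        CSO_std_apply, Matrix.add_apply, Matrix.smul_apply, smul_eq_mul, mul_add,
        mul_ite, mul_one, mul_zero] at h
      rw [CSO_sum_if_zero _ _ (fun i => by
          have := i.isLt; simp only [Fin.ext_iff, CSO_val_mk] <;> omega),
        CSO_sum_if_zero _ _ (fun j => by
          have := j.isLt; simp only [Fin.ext_iff, CSO_val_mk] <;> omega),
        if_neg (by simp only [Fin.ext_iff, CSO_val_mk] <;> omega),
        if_neg (by simp only [Fin.ext_iff, CSO_val_mk] <;> omega),
        if_pos ⟨trivial, trivial⟩,
        if_neg (by simp only [Fin.ext_iff, CSO_val_mk] <;> omega),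
        if_neg (by simp only [Fin.ext_iff, CSO_val_mk] <;> omega)] at h
      simpa using h
    · have h := hterm ⟨m, by omega⟩ ⟨m+1, by omega⟩
      rw [Fin.sum_univ_four] at h
      simp only [CSO_fam, Sum.elim_inl, Sum.elim_inr, CSO_g4_0, CSO_g4_1, CSO_g4_2, CSO_g4_3,
        CSO_std_apply, Matrix.add_apply, Matrix.smul_apply, smul_eq_mul, mul_add,
        mul_ite, mul_one, mul_zero] at h
      rw [CSO_sum_if_zero _ _ (fun i => by
          have := i.isLt; simp only [Fin.ext_iff, CSO_val_mk] <;> omega),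
        CSO_sum_if_zero _ _ (fun j => by
          have := j.isLt; simp only [Fin.ext_iff, CSO_val_mk] <;> omega),
        if_neg (by simp only [Fin.ext_iff, CSO_val_mk] <;> omega),
        if_neg (by simp only [Fin.ext_iff, CSO_val_mk] <;> omega),
        if_neg (by simp only [Fin.ext_iff, CSO_val_mk] <;> omega),
        if_pos ⟨trivial, trivial⟩,
        if_neg (by simp only [Fin.ext_iff, CSO_val_mk] <;> omega)] at h
      simp only [zero_add, add_zero] at h
      have h2 : g (Sum.inr (Sum.inr 3)) * γ₂ = 0 := by linarith [h]
      exact (mul_eq_zero.mp h2).resolve_right hγ₂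

/-- Lemma 2 (odd case): the coadjoint stabilizer of the subregular functional `f` is the
linear span of the indicated matrix units, and its dimension is `k + m + 4`. -/
theorem coadjoint_stabilizer_subregular_odd (k m : ℕ) (hk : 1 ≤ k) (hm : 1 ≤ m)
    (lam : Fin k → ℝ) (hlam : ∀ i : Fin k, lam i ≠ 0)
    (mu : Fin m → ℝ) (hmu : ∀ j : Fin m, mu j ≠ 0)
    (γ₁ γ₂ γ₃ : ℝ) (hγ₁ : γ₁ ≠ 0) (hγ₂ : γ₂ ≠ 0) :
    coadjStab (Fodd k m lam mu γ₁ γ₂ γ₃)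
        = ↑(Submodule.span ℝ (genOdd k m γ₁ γ₂)) ∧
    Module.finrank ℝ ↥(Submodule.span ℝ (genOdd k m γ₁ γ₂)) = k + m + 4 := by
  have hspan : Submodule.span ℝ (genOdd k m γ₁ γ₂) = Vsub k m γ₁ γ₂ :=
    le_antisymm (Submodule.span_le.mpr (CSO_span_le_V k m γ₁ γ₂))
      (fun x hx => CSO_V_le_span k m hk hm γ₁ γ₂ hγ₁ x hx)
  constructor
  · rw [hspan]
    ext x
    constructor
    · intro hx
      exact CSO_stab_to_V k m hk hm lam hlam mu hmu γ₁ γ₂ γ₃ hγ₁ hγ₂ x hx.1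
        ((CSO_stab_iff _ x).mp hx.2)
    · intro hx
      exact CSO_V_to_stab k m lam mu γ₁ γ₂ γ₃ x hx
  · rw [show genOdd k m γ₁ γ₂ = Set.range (CSO_fam k m γ₁ γ₂) from (CSO_range k m γ₁ γ₂).symm,
      finrank_span_eq_card (CSO_li k m γ₁ γ₂ hγ₂)]
    simp [Fintype.card_sum]
    omega

end
end

section
/- Let n = 2(k+m+2), let f, F, S, d, G^f be as in the context. Then for every x ∈ UT(n,ℝ) and every h ∈ G^f such that d(x·h·x⁻¹) ≠ 0, every function in S vanishes at the point x·h·x⁻¹; in other words, Ad_G(G^f) ∩ {g : d(g) ≠ 0} is contained in the common zero set of S. -/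
open Matrix

noncomputable section

/-- `g` is an upper unitriangular matrix, i.e. an element of `UT(n,ℝ)`. -/
def IsUnitriangular {n : ℕ} (g : Matrix (Fin n) (Fin n) ℝ) : Prop :=
  (∀ i j : Fin n, j < i → g i j = 0) ∧ ∀ i : Fin n, g i i = 1

/-- The stabilizer in `UT(n,ℝ)` of the linear functional `x ↦ trace (F·x)`. -/
def grpStab {n : ℕ} (F : Matrix (Fin n) (Fin n) ℝ) : Set (Matrix (Fin n) (Fin n) ℝ) :=
  {g | IsUnitriangular g ∧ ∀ y : Matrix (Fin n) (Fin n) ℝ, IsStrictUpper y →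
      Matrix.trace (F * (g * y * g⁻¹)) = Matrix.trace (F * y)}

/-- `n×n` real matrices for `n = 2(k+m+2)`. -/
abbrev MS (k m : ℕ) := Matrix (Fin (2*(k+m+2))) (Fin (2*(k+m+2))) ℝ

section Indices

variable (k m : ℕ)

/-- Rows (and columns) of block `1` in the partition `(m,1,1,k,k,1,1,m)`. -/
def r1 (a : Fin m) : Fin (2*(k+m+2)) := ⟨a.val, by have := a.isLt; omega⟩
/-- The row/column of the `1×1` block `2`. -/
def i2 : Fin (2*(k+m+2)) := ⟨m, by omega⟩
/-- The row/column of the `1×1` block `3`. -/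
def i3 : Fin (2*(k+m+2)) := ⟨m+1, by omega⟩
/-- Rows (and columns) of block `4`. -/
def r4 (a : Fin k) : Fin (2*(k+m+2)) := ⟨m+2+a.val, by have := a.isLt; omega⟩
/-- Rows (and columns) of block `5`. -/
def c5 (a : Fin k) : Fin (2*(k+m+2)) := ⟨m+k+2+a.val, by have := a.isLt; omega⟩
/-- The row/column of the `1×1` block `6`. -/
def i6 : Fin (2*(k+m+2)) := ⟨m+2*k+2, by omega⟩
/-- The row/column of the `1×1` block `7`. -/
def i7 : Fin (2*(k+m+2)) := ⟨m+2*k+3, by omega⟩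
/-- Rows (and columns) of block `8`. -/
def c8 (a : Fin m) : Fin (2*(k+m+2)) := ⟨m+2*k+4+a.val, by have := a.isLt; omega⟩

/-- The function `d(g) = C₂₃ · det C₄₅ · C₆₇`. -/
def dEven : MS k m → ℝ := fun g =>
  g (i2 k m) (i3 k m) * (g.submatrix (r4 k m) (c5 k m)).det * g (i6 k m) (i7 k m)

/-- The matrix `F` of the subregular functional for `n = 2(k+m+2)`. -/
def Feven (lam : Fin k → ℝ) (mu : Fin m → ℝ) (γ₁ γ₂ γ₃ : ℝ) : MS k m :=
  (∑ i : Fin k, lam i • Matrix.single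
      (⟨m+2*k+1-i.val, by have := i.isLt; omega⟩ : Fin (2*(k+m+2)))
      (⟨m+2+i.val, by have := i.isLt; omega⟩ : Fin (2*(k+m+2))) (1:ℝ))
  + (∑ j : Fin m, mu j • Matrix.single
      (⟨2*m+2*k+3-j.val, by have := j.isLt; omega⟩ : Fin (2*(k+m+2)))
      (⟨j.val, by have := j.isLt; omega⟩ : Fin (2*(k+m+2))) (1:ℝ))
  + γ₁ • Matrix.single (i6 k m) (i2 k m) (1:ℝ)
  + γ₂ • Matrix.single (i7 k m) (i3 k m) (1:ℝ)
  + γ₃ • Matrix.single (i7 k m) (i6 k m) (1:ℝ)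

/-- The set `S = S₀ ∪ S₁ ∪ S₂` of functions on the group, even case.
`S₀`: strictly-above-diagonal entries of the diagonal blocks `(1,1), (4,4), (5,5), (8,8)`;
`S₁`: the rational functions `c̃ = ±Δ(c)⁻¹·Δ̃(c)` for the entries `c` of the blocks
`(1,2),(1,4),(1,6),(3,4),(3,6),(3,8),(5,6),(5,8),(7,8)`;
`S₂`: the entries of `C₂₃C₃₅ + C₂₄C₄₅` and `C₄₅C₅₇ + C₄₆C₆₇`, and `γ₁C₂₃ − γ₂C₆₇`. -/
def SEven (γ₁ γ₂ : ℝ) : Set (MS k m → ℝ) :=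
  -- S₀ : blocks (1,1), (4,4), (5,5), (8,8)
  {φ | ∃ a b : Fin m, a < b ∧ φ = fun g => g (r1 k m a) (r1 k m b)} ∪
  {φ | ∃ a b : Fin k, a < b ∧ φ = fun g => g (r4 k m a) (r4 k m b)} ∪
  {φ | ∃ a b : Fin k, a < b ∧ φ = fun g => g (c5 k m a) (c5 k m b)} ∪
  {φ | ∃ a b : Fin m, a < b ∧ φ = fun g => g (c8 k m a) (c8 k m b)} ∪
  -- S₁ : block (1,2), Φ(c) = ∅
  (Set.range fun a : Fin m => fun g : MS k m => g (r1 k m a) (i2 k m)) ∪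
  -- S₁ : block (1,4), Φ(c) = {(2,3)}
  (Set.range fun p : Fin m × Fin k => fun g : MS k m =>
    -(g.submatrix ![r1 k m p.1, i2 k m] ![i3 k m, r4 k m p.2]).det / g (i2 k m) (i3 k m)) ∪
  -- S₁ : block (1,6), Φ(c) = {(2,3),(4,5)}
  (Set.range fun a : Fin m => fun g : MS k m =>
    (-1)^(k+1) * (g.submatrix (Fin.cons (r1 k m a) (Fin.cons (i2 k m) (r4 k m)))
        (Fin.snoc (Fin.cons (i3 k m) (c5 k m)) (i6 k m))).det
      / (g.submatrix (Fin.cons (i2 k m) (r4 k m)) (Fin.cons (i3 k m) (c5 k m))).det) ∪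
  -- S₁ : block (3,4), Φ(c) = ∅
  (Set.range fun b : Fin k => fun g : MS k m => g (i3 k m) (r4 k m b)) ∪
  -- S₁ : block (3,6), Φ(c) = {(4,5)}
  {fun g : MS k m =>
    (-1)^k * (g.submatrix (Fin.cons (i3 k m) (r4 k m)) (Fin.snoc (c5 k m) (i6 k m))).det
      / (g.submatrix (r4 k m) (c5 k m)).det} ∪
  -- S₁ : block (3,8), Φ(c) = {(4,5),(6,7)}
  (Set.range fun b : Fin m => fun g : MS k m =>
    (-1)^(k+1) * (g.submatrix (Fin.cons (i3 k m) (Fin.snoc (r4 k m) (i6 k m)))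
        (Fin.snoc (Fin.snoc (c5 k m) (i7 k m)) (c8 k m b))).det
      / (g.submatrix (Fin.snoc (r4 k m) (i6 k m)) (Fin.snoc (c5 k m) (i7 k m))).det) ∪
  -- S₁ : block (5,6), Φ(c) = ∅
  (Set.range fun a : Fin k => fun g : MS k m => g (c5 k m a) (i6 k m)) ∪
  -- S₁ : block (5,8), Φ(c) = {(6,7)}
  (Set.range fun p : Fin k × Fin m => fun g : MS k m =>
    -(g.submatrix ![c5 k m p.1, i6 k m] ![i7 k m, c8 k m p.2]).det / g (i6 k m) (i7 k m)) ∪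
  -- S₁ : block (7,8), Φ(c) = ∅
  (Set.range fun b : Fin m => fun g : MS k m => g (i7 k m) (c8 k m b)) ∪
  -- S₂ : entries of C₂₃C₃₅ + C₂₄C₄₅
  (Set.range fun b : Fin k => fun g : MS k m =>
    g (i2 k m) (i3 k m) * g (i3 k m) (c5 k m b)
      + ∑ t : Fin k, g (i2 k m) (r4 k m t) * g (r4 k m t) (c5 k m b)) ∪
  -- S₂ : entries of C₄₅C₅₇ + C₄₆C₆₇
  (Set.range fun a : Fin k => fun g : MS k m =>
    (∑ t : Fin k, g (r4 k m a) (c5 k m t) * g (c5 k m t) (i7 k m))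
      + g (r4 k m a) (i6 k m) * g (i6 k m) (i7 k m)) ∪
  -- S₂ : γ₁C₂₃ − γ₂C₆₇
  {fun g : MS k m => γ₁ * g (i2 k m) (i3 k m) - γ₂ * g (i6 k m) (i7 k m)}

end Indices



section Tools

lemma fin_ne_of_val_ne' {N : ℕ} {a b : Fin N} (h : a.val ≠ b.val) : a ≠ b :=
  fun e => h (congrArg Fin.val e)

lemma sum_subset_zero {N : ℕ} (f : Fin N → ℝ) (S : Finset (Fin N))
    (hz : ∀ u ∉ S, f u = 0) : ∑ u, f u = ∑ u ∈ S, f u :=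
  (Finset.sum_subset (Finset.subset_univ S) (fun u _ hu => hz u hu)).symm

lemma sum_one {N : ℕ} (f : Fin N → ℝ) (e : Fin N)
    (hz : ∀ u, u ≠ e → f u = 0) : ∑ u, f u = f e :=
  Finset.sum_eq_single_of_mem e (Finset.mem_univ e) (fun u _ hu => hz u hu)

lemma sum_two {N : ℕ} (f : Fin N → ℝ) (e1 e2 : Fin N) (h12 : e1 ≠ e2)
    (hz : ∀ u, u ≠ e1 → u ≠ e2 → f u = 0) : ∑ u, f u = f e1 + f e2 := by
  rw [sum_subset_zero f {e1, e2} (by intro u hu; simp at hu; exact hz u hu.1 hu.2)]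
  rw [Finset.sum_insert (by simp [h12]), Finset.sum_singleton]

lemma sum_split_big {N K1 K2 : ℕ} (f : Fin N → ℝ) (e1 e2 e3 : Fin N)
    (v : Fin K1 → Fin N) (w : Fin K2 → Fin N)
    (hv : Function.Injective v) (hw : Function.Injective w)
    (h12 : e1 ≠ e2) (h13 : e1 ≠ e3) (h23 : e2 ≠ e3)
    (hev : ∀ t, v t ≠ e1 ∧ v t ≠ e2 ∧ v t ≠ e3)
    (hew : ∀ s, w s ≠ e1 ∧ w s ≠ e2 ∧ w s ≠ e3)
    (hvw : ∀ t s, v t ≠ w s)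
    (hz : ∀ u, u ≠ e1 → u ≠ e2 → u ≠ e3 → (∀ t, u ≠ v t) → (∀ s, u ≠ w s) → f u = 0) :
    ∑ u, f u = f e1 + f e2 + f e3 + (∑ t, f (v t)) + (∑ s, f (w s)) := by
  classical
  have hdisj : Disjoint (Finset.univ.image v) (Finset.univ.image w) := by
    rw [Finset.disjoint_left]
    rintro a ha hb
    simp only [Finset.mem_image, Finset.mem_univ, true_and] at ha hb
    obtain ⟨t, rfl⟩ := ha; obtain ⟨s, hs⟩ := hb
    exact hvw t s hs.symm
  have h3 : (e3 : Fin N) ∉ (Finset.univ.image v ∪ Finset.univ.image w) := by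
    simp only [Finset.mem_union, Finset.mem_image, Finset.mem_univ, true_and, not_or,
      not_exists]
    exact ⟨fun t ht => (hev t).2.2 ht, fun s hs => (hew s).2.2 hs⟩
  have h2 : (e2 : Fin N) ∉ insert e3 (Finset.univ.image v ∪ Finset.univ.image w) := by
    simp only [Finset.mem_insert, Finset.mem_union, Finset.mem_image, Finset.mem_univ,
      true_and, not_or, not_exists]
    exact ⟨h23, fun t ht => (hev t).2.1 ht, fun s hs => (hew s).2.1 hs⟩
  have h1 : (e1 : Fin N) ∉ insert e2 (insert e3 (Finset.univ.image v ∪ Finset.univ.image w)) := by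
    simp only [Finset.mem_insert, Finset.mem_union, Finset.mem_image, Finset.mem_univ,
      true_and, not_or, not_exists]
    exact ⟨h12, h13, fun t ht => (hev t).1 ht, fun s hs => (hew s).1 hs⟩
  rw [sum_subset_zero f
      (insert e1 (insert e2 (insert e3 (Finset.univ.image v ∪ Finset.univ.image w))))]
  · rw [Finset.sum_insert h1, Finset.sum_insert h2, Finset.sum_insert h3,
      Finset.sum_union hdisj,
      Finset.sum_image (fun a _ b _ hab => hv hab),
      Finset.sum_image (fun a _ b _ hab => hw hab)]
    ring
  · intro u hu
    simp only [Finset.mem_insert, Finset.mem_union, Finset.mem_image, Finset.mem_univ,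
      true_and, not_or, not_exists] at hu
    exact hz u hu.1 hu.2.1 hu.2.2.1 (fun t ht => hu.2.2.2.1 t ht.symm)
      (fun s hs => hu.2.2.2.2 s hs.symm)

lemma trace_mul_std {N : ℕ} (C : Matrix (Fin N) (Fin N) ℝ) (u v : Fin N) :
    Matrix.trace (C * Matrix.single u v (1:ℝ)) = C v u := by
  rw [Matrix.trace]
  rw [sum_one _ v]
  · simp [Matrix.diag]
  · intro p hp
    simp only [Matrix.diag]
    exact Matrix.mul_single_apply_of_ne (i := u) (j := v) (c := (1:ℝ)) p p hp C

end Tools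
section PartA

lemma stab_linear {k m : ℕ} {F h : MS k m} (hh : h ∈ grpStab F) :
    ∀ p q : Fin (2*(k+m+2)), q < p → (F * h) p q = (h * F) p q := by
  obtain ⟨⟨hlow, hdiag⟩, htr⟩ := hh
  have hbt : h.BlockTriangular id := fun i j hij => hlow i j hij
  have hdet : IsUnit h.det := by
    rw [Matrix.det_of_upperTriangular hbt]
    simp [hdiag]
  have hinv : h * h⁻¹ = 1 := Matrix.mul_nonsing_inv h hdet
  have key : ∀ v u : Fin (2*(k+m+2)), u < v → (h⁻¹ * F * h) v u = F v u := by
    intro v u huv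
    have hy : IsStrictUpper (Matrix.single u v (1:ℝ)) := by
      intro i j hji
      apply Matrix.single_apply_of_ne
      rintro ⟨rfl, rfl⟩
      exact absurd hji (not_le.mpr huv)
    have e := htr _ hy
    rw [trace_mul_std] at e
    rw [show F * (h * Matrix.single u v (1:ℝ) * h⁻¹)
        = (F * h * Matrix.single u v 1) * h⁻¹ by
      simp only [Matrix.mul_assoc]] at e
    rw [Matrix.trace_mul_comm] at e
    rw [show h⁻¹ * (F * h * Matrix.single u v (1:ℝ))
        = (h⁻¹ * F * h) * Matrix.single u v 1 by simp only [Matrix.mul_assoc]] at e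
    rw [trace_mul_std] at e
    exact e
  intro p q hqp
  have hF : F * h = h * (h⁻¹ * F * h) := by
    rw [show h * (h⁻¹ * F * h) = (h * h⁻¹) * (F * h) by simp only [Matrix.mul_assoc], hinv,
      Matrix.one_mul]
  rw [hF, Matrix.mul_apply, Matrix.mul_apply]
  apply Finset.sum_congr rfl
  intro t _
  by_cases ht : t < p
  · rw [hlow p t ht]; ring
  · rw [key t q (lt_of_lt_of_le hqp (not_lt.1 ht))]

variable (k m : ℕ)

/-- Rows of block 5 indexed compatibly with the antidiagonal of `F`: `i5 i = c5 (k-1-i)`. -/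
def i5 (i : Fin k) : Fin (2*(k+m+2)) := ⟨m+2*k+1-i.val, by have := i.isLt; omega⟩
/-- Rows of block 8 indexed compatibly with the antidiagonal of `F`: `i8 j = c8 (m-1-j)`. -/
def i8 (j : Fin m) : Fin (2*(k+m+2)) := ⟨2*m+2*k+3-j.val, by have := j.isLt; omega⟩

variable {k m}

@[simp] lemma r1_val (a : Fin m) : (r1 k m a).val = a.val := rfl
@[simp] lemma i2_val : (i2 k m).val = m := rfl
@[simp] lemma i3_val : (i3 k m).val = m+1 := rfl
@[simp] lemma r4_val (a : Fin k) : (r4 k m a).val = m+2+a.val := rfl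
@[simp] lemma c5_val (a : Fin k) : (c5 k m a).val = m+k+2+a.val := rfl
@[simp] lemma i6_val : (i6 k m).val = m+2*k+2 := rfl
@[simp] lemma i7_val : (i7 k m).val = m+2*k+3 := rfl
@[simp] lemma c8_val (a : Fin m) : (c8 k m a).val = m+2*k+4+a.val := rfl
@[simp] lemma i5_val (i : Fin k) : (i5 k m i).val = m+2*k+1-i.val := rfl
@[simp] lemma i8_val (j : Fin m) : (i8 k m j).val = 2*m+2*k+3-j.val := rfl

lemma std_smul_mul {N : ℕ} (c : ℝ) (a b : Fin N) (M : Matrix (Fin N) (Fin N) ℝ)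
    (p q : Fin N) :
    ((c • Matrix.single a b (1:ℝ)) * M) p q = if p = a then c * M b q else 0 := by
  rw [Matrix.smul_mul, Matrix.smul_apply]
  by_cases hp : p = a
  · subst hp
    rw [if_pos rfl, Matrix.single_mul_apply_same, one_mul, smul_eq_mul]
  · rw [if_neg hp,
      Matrix.single_mul_apply_of_ne (i := a) (j := b) (c := (1:ℝ)) p q hp M,
      smul_zero]

lemma std_mul_smul {N : ℕ} (c : ℝ) (a b : Fin N) (M : Matrix (Fin N) (Fin N) ℝ)
    (p q : Fin N) :
    (M * (c • Matrix.single a b (1:ℝ))) p q = if q = b then c * M p a else 0 := by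
  rw [Matrix.mul_smul, Matrix.smul_apply]
  by_cases hq : q = b
  · subst hq
    rw [if_pos rfl, Matrix.mul_single_apply_same, mul_one, smul_eq_mul, mul_comm]
  · rw [if_neg hq,
      Matrix.mul_single_apply_of_ne (i := a) (j := b) (c := (1:ℝ)) p q hq M,
      smul_zero]

variable {lam : Fin k → ℝ} {mu : Fin m → ℝ} {γ₁ γ₂ γ₃ : ℝ} (h : MS k m)

lemma FH_apply (p q : Fin (2*(k+m+2))) :
    (Feven k m lam mu γ₁ γ₂ γ₃ * h) p q =
      (∑ i, if p = i5 k m i then lam i * h (r4 k m i) q else 0)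
      + (∑ j, if p = i8 k m j then mu j * h (r1 k m j) q else 0)
      + (if p = i6 k m then γ₁ * h (i2 k m) q else 0)
      + (if p = i7 k m then γ₂ * h (i3 k m) q else 0)
      + (if p = i7 k m then γ₃ * h (i6 k m) q else 0) := by
  rw [Feven]
  rw [Matrix.add_mul, Matrix.add_mul, Matrix.add_mul, Matrix.add_mul,
    Finset.sum_mul, Finset.sum_mul]
  simp only [Matrix.add_apply, Matrix.sum_apply, std_smul_mul]
  rfl

lemma HF_apply (p q : Fin (2*(k+m+2))) :
    (h * Feven k m lam mu γ₁ γ₂ γ₃) p q =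
      (∑ i, if q = r4 k m i then lam i * h p (i5 k m i) else 0)
      + (∑ j, if q = r1 k m j then mu j * h p (i8 k m j) else 0)
      + (if q = i2 k m then γ₁ * h p (i6 k m) else 0)
      + (if q = i3 k m then γ₂ * h p (i7 k m) else 0)
      + (if q = i6 k m then γ₃ * h p (i7 k m) else 0) := by
  rw [Feven]
  rw [Matrix.mul_add, Matrix.mul_add, Matrix.mul_add, Matrix.mul_add,
    Finset.mul_sum, Finset.mul_sum]
  simp only [Matrix.add_apply, Matrix.sum_apply, std_mul_smul]
  rfl

end PartA
section PartA2

variable {k m : ℕ} {lam : Fin k → ℝ} {mu : Fin m → ℝ} {γ₁ γ₂ γ₃ : ℝ} {h : MS k m}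

lemma FHrow5 (i : Fin k) (q : Fin (2*(k+m+2))) :
    (Feven k m lam mu γ₁ γ₂ γ₃ * h) (i5 k m i) q = lam i * h (r4 k m i) q := by
  rw [FH_apply]
  rw [sum_one _ i (by
    intro u hu
    rw [if_neg]
    intro hc
    have h1 := congrArg Fin.val hc
    have h2 := u.isLt
    have h3 := (i).isLt
    simp only [i5_val, i8_val, i6_val, i7_val, i2_val, i3_val, r1_val, r4_val, c5_val, c8_val] at h1
    exact hu (Fin.val_injective (by omega)))]
  rw [if_pos rfl]
  rw [Finset.sum_eq_zero (by
    intro j _; rw [if_neg]; intro hc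
    have h1 := congrArg Fin.val hc
    have h2 := j.isLt
    simp only [i5_val, i8_val, i6_val, i7_val, i2_val, i3_val, r1_val, r4_val, c5_val, c8_val] at h1; omega)]
  rw [if_neg (by intro hc; have h1 := congrArg Fin.val hc; simp only [i5_val, i8_val, i6_val, i7_val, i2_val, i3_val, r1_val, r4_val, c5_val, c8_val] at h1; omega)]
  rw [if_neg (by intro hc; have h1 := congrArg Fin.val hc; simp only [i5_val, i8_val, i6_val, i7_val, i2_val, i3_val, r1_val, r4_val, c5_val, c8_val] at h1; omega)]
  rw [if_neg (by intro hc; have h1 := congrArg Fin.val hc; simp only [i5_val, i8_val, i6_val, i7_val, i2_val, i3_val, r1_val, r4_val, c5_val, c8_val] at h1; omega)]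
  ring

lemma FHrow8 (j : Fin m) (q : Fin (2*(k+m+2))) :
    (Feven k m lam mu γ₁ γ₂ γ₃ * h) (i8 k m j) q = mu j * h (r1 k m j) q := by
  rw [FH_apply]
  rw [Finset.sum_eq_zero (by
    intro i _; rw [if_neg]; intro hc
    have h1 := congrArg Fin.val hc
    have h2 := i.isLt
    simp only [i5_val, i8_val, i6_val, i7_val, i2_val, i3_val, r1_val, r4_val, c5_val, c8_val] at h1; omega)]
  rw [sum_one _ j (by
    intro u hu
    rw [if_neg]
    intro hc
    have h1 := congrArg Fin.val hc
    have h2 := u.isLt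
    have h3 := (j).isLt
    simp only [i5_val, i8_val, i6_val, i7_val, i2_val, i3_val, r1_val, r4_val, c5_val, c8_val] at h1
    exact hu (Fin.val_injective (by omega)))]
  rw [if_pos rfl]
  rw [if_neg (by intro hc; have h1 := congrArg Fin.val hc; simp only [i5_val, i8_val, i6_val, i7_val, i2_val, i3_val, r1_val, r4_val, c5_val, c8_val] at h1; omega)]
  rw [if_neg (by intro hc; have h1 := congrArg Fin.val hc; simp only [i5_val, i8_val, i6_val, i7_val, i2_val, i3_val, r1_val, r4_val, c5_val, c8_val] at h1; omega)]
  rw [if_neg (by intro hc; have h1 := congrArg Fin.val hc; simp only [i5_val, i8_val, i6_val, i7_val, i2_val, i3_val, r1_val, r4_val, c5_val, c8_val] at h1; omega)]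
  ring

lemma FHrow6 (q : Fin (2*(k+m+2))) :
    (Feven k m lam mu γ₁ γ₂ γ₃ * h) (i6 k m) q = γ₁ * h (i2 k m) q := by
  rw [FH_apply]
  rw [Finset.sum_eq_zero (by
    intro i _; rw [if_neg]; intro hc
    have h1 := congrArg Fin.val hc
    have h2 := i.isLt
    simp only [i5_val, i8_val, i6_val, i7_val, i2_val, i3_val, r1_val, r4_val, c5_val, c8_val] at h1; omega)]
  rw [Finset.sum_eq_zero (by
    intro j _; rw [if_neg]; intro hc
    have h1 := congrArg Fin.val hc
    have h2 := j.isLt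
    simp only [i5_val, i8_val, i6_val, i7_val, i2_val, i3_val, r1_val, r4_val, c5_val, c8_val] at h1; omega)]
  rw [if_pos rfl]
  rw [if_neg (by intro hc; have h1 := congrArg Fin.val hc; simp only [i5_val, i8_val, i6_val, i7_val, i2_val, i3_val, r1_val, r4_val, c5_val, c8_val] at h1; omega)]
  rw [if_neg (by intro hc; have h1 := congrArg Fin.val hc; simp only [i5_val, i8_val, i6_val, i7_val, i2_val, i3_val, r1_val, r4_val, c5_val, c8_val] at h1; omega)]
  ring

lemma FHrow7 (q : Fin (2*(k+m+2))) :
    (Feven k m lam mu γ₁ γ₂ γ₃ * h) (i7 k m) q = γ₂ * h (i3 k m) q + γ₃ * h (i6 k m) q := by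
  rw [FH_apply]
  rw [Finset.sum_eq_zero (by
    intro i _; rw [if_neg]; intro hc
    have h1 := congrArg Fin.val hc
    have h2 := i.isLt
    simp only [i5_val, i8_val, i6_val, i7_val, i2_val, i3_val, r1_val, r4_val, c5_val, c8_val] at h1; omega)]
  rw [Finset.sum_eq_zero (by
    intro j _; rw [if_neg]; intro hc
    have h1 := congrArg Fin.val hc
    have h2 := j.isLt
    simp only [i5_val, i8_val, i6_val, i7_val, i2_val, i3_val, r1_val, r4_val, c5_val, c8_val] at h1; omega)]
  rw [if_neg (by intro hc; have h1 := congrArg Fin.val hc; simp only [i5_val, i8_val, i6_val, i7_val, i2_val, i3_val, r1_val, r4_val, c5_val, c8_val] at h1; omega)]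
  rw [if_pos rfl, if_pos rfl]
  ring

lemma FHrow0 (p q : Fin (2*(k+m+2))) (hp : p.val < m+k+2) :
    (Feven k m lam mu γ₁ γ₂ γ₃ * h) p q = 0 := by
  rw [FH_apply]
  rw [Finset.sum_eq_zero (by
    intro i _; rw [if_neg]; intro hc
    have h1 := congrArg Fin.val hc
    have h2 := i.isLt
    simp only [i5_val, i8_val, i6_val, i7_val, i2_val, i3_val, r1_val, r4_val, c5_val, c8_val] at h1; omega)]
  rw [Finset.sum_eq_zero (by
    intro j _; rw [if_neg]; intro hc
    have h1 := congrArg Fin.val hc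
    have h2 := j.isLt
    simp only [i5_val, i8_val, i6_val, i7_val, i2_val, i3_val, r1_val, r4_val, c5_val, c8_val] at h1; omega)]
  rw [if_neg (by intro hc; have h1 := congrArg Fin.val hc; simp only [i5_val, i8_val, i6_val, i7_val, i2_val, i3_val, r1_val, r4_val, c5_val, c8_val] at h1; omega)]
  rw [if_neg (by intro hc; have h1 := congrArg Fin.val hc; simp only [i5_val, i8_val, i6_val, i7_val, i2_val, i3_val, r1_val, r4_val, c5_val, c8_val] at h1; omega)]
  rw [if_neg (by intro hc; have h1 := congrArg Fin.val hc; simp only [i5_val, i8_val, i6_val, i7_val, i2_val, i3_val, r1_val, r4_val, c5_val, c8_val] at h1; omega)]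
  ring

lemma HFcol4 (i : Fin k) (p : Fin (2*(k+m+2))) :
    (h * Feven k m lam mu γ₁ γ₂ γ₃) p (r4 k m i) = lam i * h p (i5 k m i) := by
  rw [HF_apply]
  rw [sum_one _ i (by
    intro u hu
    rw [if_neg]
    intro hc
    have h1 := congrArg Fin.val hc
    have h2 := u.isLt
    have h3 := (i).isLt
    simp only [i5_val, i8_val, i6_val, i7_val, i2_val, i3_val, r1_val, r4_val, c5_val, c8_val] at h1
    exact hu (Fin.val_injective (by omega)))]
  rw [if_pos rfl]
  rw [Finset.sum_eq_zero (by
    intro j _; rw [if_neg]; intro hc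
    have h1 := congrArg Fin.val hc
    have h2 := j.isLt
    simp only [i5_val, i8_val, i6_val, i7_val, i2_val, i3_val, r1_val, r4_val, c5_val, c8_val] at h1; omega)]
  rw [if_neg (by intro hc; have h1 := congrArg Fin.val hc; simp only [i5_val, i8_val, i6_val, i7_val, i2_val, i3_val, r1_val, r4_val, c5_val, c8_val] at h1; omega)]
  rw [if_neg (by intro hc; have h1 := congrArg Fin.val hc; simp only [i5_val, i8_val, i6_val, i7_val, i2_val, i3_val, r1_val, r4_val, c5_val, c8_val] at h1; omega)]
  rw [if_neg (by intro hc; have h1 := congrArg Fin.val hc; simp only [i5_val, i8_val, i6_val, i7_val, i2_val, i3_val, r1_val, r4_val, c5_val, c8_val] at h1; omega)]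
  ring

lemma HFcol1 (j : Fin m) (p : Fin (2*(k+m+2))) :
    (h * Feven k m lam mu γ₁ γ₂ γ₃) p (r1 k m j) = mu j * h p (i8 k m j) := by
  rw [HF_apply]
  rw [Finset.sum_eq_zero (by
    intro i _; rw [if_neg]; intro hc
    have h1 := congrArg Fin.val hc
    have h2 := i.isLt
    simp only [i5_val, i8_val, i6_val, i7_val, i2_val, i3_val, r1_val, r4_val, c5_val, c8_val] at h1; omega)]
  rw [sum_one _ j (by
    intro u hu
    rw [if_neg]
    intro hc
    have h1 := congrArg Fin.val hc
    have h2 := u.isLt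
    have h3 := (j).isLt
    simp only [i5_val, i8_val, i6_val, i7_val, i2_val, i3_val, r1_val, r4_val, c5_val, c8_val] at h1
    exact hu (Fin.val_injective (by omega)))]
  rw [if_pos rfl]
  rw [if_neg (by intro hc; have h1 := congrArg Fin.val hc; simp only [i5_val, i8_val, i6_val, i7_val, i2_val, i3_val, r1_val, r4_val, c5_val, c8_val] at h1; omega)]
  rw [if_neg (by intro hc; have h1 := congrArg Fin.val hc; simp only [i5_val, i8_val, i6_val, i7_val, i2_val, i3_val, r1_val, r4_val, c5_val, c8_val] at h1; omega)]
  rw [if_neg (by intro hc; have h1 := congrArg Fin.val hc; simp only [i5_val, i8_val, i6_val, i7_val, i2_val, i3_val, r1_val, r4_val, c5_val, c8_val] at h1; omega)]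
  ring

lemma HFcol2 (p : Fin (2*(k+m+2))) :
    (h * Feven k m lam mu γ₁ γ₂ γ₃) p (i2 k m) = γ₁ * h p (i6 k m) := by
  rw [HF_apply]
  rw [Finset.sum_eq_zero (by
    intro i _; rw [if_neg]; intro hc
    have h1 := congrArg Fin.val hc
    have h2 := i.isLt
    simp only [i5_val, i8_val, i6_val, i7_val, i2_val, i3_val, r1_val, r4_val, c5_val, c8_val] at h1; omega)]
  rw [Finset.sum_eq_zero (by
    intro j _; rw [if_neg]; intro hc
    have h1 := congrArg Fin.val hc
    have h2 := j.isLt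
    simp only [i5_val, i8_val, i6_val, i7_val, i2_val, i3_val, r1_val, r4_val, c5_val, c8_val] at h1; omega)]
  rw [if_pos rfl]
  rw [if_neg (by intro hc; have h1 := congrArg Fin.val hc; simp only [i5_val, i8_val, i6_val, i7_val, i2_val, i3_val, r1_val, r4_val, c5_val, c8_val] at h1; omega)]
  rw [if_neg (by intro hc; have h1 := congrArg Fin.val hc; simp only [i5_val, i8_val, i6_val, i7_val, i2_val, i3_val, r1_val, r4_val, c5_val, c8_val] at h1; omega)]
  ring

lemma HFcol3 (p : Fin (2*(k+m+2))) :
    (h * Feven k m lam mu γ₁ γ₂ γ₃) p (i3 k m) = γ₂ * h p (i7 k m) := by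
  rw [HF_apply]
  rw [Finset.sum_eq_zero (by
    intro i _; rw [if_neg]; intro hc
    have h1 := congrArg Fin.val hc
    have h2 := i.isLt
    simp only [i5_val, i8_val, i6_val, i7_val, i2_val, i3_val, r1_val, r4_val, c5_val, c8_val] at h1; omega)]
  rw [Finset.sum_eq_zero (by
    intro j _; rw [if_neg]; intro hc
    have h1 := congrArg Fin.val hc
    have h2 := j.isLt
    simp only [i5_val, i8_val, i6_val, i7_val, i2_val, i3_val, r1_val, r4_val, c5_val, c8_val] at h1; omega)]
  rw [if_neg (by intro hc; have h1 := congrArg Fin.val hc; simp only [i5_val, i8_val, i6_val, i7_val, i2_val, i3_val, r1_val, r4_val, c5_val, c8_val] at h1; omega)]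
  rw [if_pos rfl]
  rw [if_neg (by intro hc; have h1 := congrArg Fin.val hc; simp only [i5_val, i8_val, i6_val, i7_val, i2_val, i3_val, r1_val, r4_val, c5_val, c8_val] at h1; omega)]
  ring

lemma HFcol6 (p : Fin (2*(k+m+2))) :
    (h * Feven k m lam mu γ₁ γ₂ γ₃) p (i6 k m) = γ₃ * h p (i7 k m) := by
  rw [HF_apply]
  rw [Finset.sum_eq_zero (by
    intro i _; rw [if_neg]; intro hc
    have h1 := congrArg Fin.val hc
    have h2 := i.isLt
    simp only [i5_val, i8_val, i6_val, i7_val, i2_val, i3_val, r1_val, r4_val, c5_val, c8_val] at h1; omega)]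
  rw [Finset.sum_eq_zero (by
    intro j _; rw [if_neg]; intro hc
    have h1 := congrArg Fin.val hc
    have h2 := j.isLt
    simp only [i5_val, i8_val, i6_val, i7_val, i2_val, i3_val, r1_val, r4_val, c5_val, c8_val] at h1; omega)]
  rw [if_neg (by intro hc; have h1 := congrArg Fin.val hc; simp only [i5_val, i8_val, i6_val, i7_val, i2_val, i3_val, r1_val, r4_val, c5_val, c8_val] at h1; omega)]
  rw [if_neg (by intro hc; have h1 := congrArg Fin.val hc; simp only [i5_val, i8_val, i6_val, i7_val, i2_val, i3_val, r1_val, r4_val, c5_val, c8_val] at h1; omega)]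
  rw [if_pos rfl]
  ring

lemma HFcol0 (p q : Fin (2*(k+m+2))) (hq : m+k+2 ≤ q.val) (hq' : q.val ≠ m+2*k+2) :
    (h * Feven k m lam mu γ₁ γ₂ γ₃) p q = 0 := by
  rw [HF_apply]
  rw [Finset.sum_eq_zero (by
    intro i _; rw [if_neg]; intro hc
    have h1 := congrArg Fin.val hc
    have h2 := i.isLt
    simp only [i5_val, i8_val, i6_val, i7_val, i2_val, i3_val, r1_val, r4_val, c5_val, c8_val] at h1; omega)]
  rw [Finset.sum_eq_zero (by
    intro j _; rw [if_neg]; intro hc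
    have h1 := congrArg Fin.val hc
    have h2 := j.isLt
    simp only [i5_val, i8_val, i6_val, i7_val, i2_val, i3_val, r1_val, r4_val, c5_val, c8_val] at h1; omega)]
  rw [if_neg (by intro hc; have h1 := congrArg Fin.val hc; simp only [i5_val, i8_val, i6_val, i7_val, i2_val, i3_val, r1_val, r4_val, c5_val, c8_val] at h1; omega)]
  rw [if_neg (by intro hc; have h1 := congrArg Fin.val hc; simp only [i5_val, i8_val, i6_val, i7_val, i2_val, i3_val, r1_val, r4_val, c5_val, c8_val] at h1; omega)]
  rw [if_neg (by intro hc; have h1 := congrArg Fin.val hc; simp only [i5_val, i8_val, i6_val, i7_val, i2_val, i3_val, r1_val, r4_val, c5_val, c8_val] at h1; omega)]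
  ring

end PartA2
section PartA3

variable {k m : ℕ} {lam : Fin k → ℝ} {mu : Fin m → ℝ} {γ₁ γ₂ γ₃ : ℝ} {h : MS k m}

set_option maxHeartbeats 1000000 in
/-- Columns in blocks 1 and 2: everything above the diagonal vanishes. -/
lemma NcolA
    (hlow : ∀ p q : Fin (2*(k+m+2)), q < p → h p q = 0)
    (heq : ∀ p q : Fin (2*(k+m+2)), q < p →
      (Feven k m lam mu γ₁ γ₂ γ₃ * h) p q = (h * Feven k m lam mu γ₁ γ₂ γ₃) p q)
    (hmu : ∀ j, mu j ≠ 0)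
    (u : Fin (2*(k+m+2))) (hu : u.val ≤ m) :
    ∀ t, t ≠ u → h t u = 0 := by
  intro t ht
  rcases lt_or_gt_of_ne ht with hlt | hgt
  swap
  · exact hlow t u hgt
  have hlt' : t.val < u.val := hlt
  have jj : Fin m := ⟨t.val, by omega⟩
  set jj : Fin m := ⟨t.val, by omega⟩ with hjjdef
  have hrt : r1 k m jj = t := Fin.val_injective rfl
  have e := heq (i8 k m jj) u (by
    simp only [Fin.lt_def, i8_val]
    omega)
  rw [FHrow8, hrt] at e
  by_cases hu2 : u.val < m
  · set uu : Fin m := ⟨u.val, hu2⟩ with huudef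
    have hru : r1 k m uu = u := Fin.val_injective rfl
    rw [← hru, HFcol1] at e
    rw [hlow (i8 k m jj) (i8 k m uu) (by simp only [Fin.lt_def, i8_val, hjjdef, huudef, Fin.val_mk]; omega),
      mul_zero] at e
    rw [← hru]
    exact (mul_eq_zero.mp e).resolve_left (hmu jj)
  · have hu3 : u = i2 k m := Fin.val_injective (by simp only [i2_val]; omega)
    rw [hu3, HFcol2] at e
    rw [hlow (i8 k m jj) (i6 k m) (by simp only [Fin.lt_def, i8_val, i6_val]; omega),
      mul_zero] at e
    rw [hu3]
    exact (mul_eq_zero.mp e).resolve_left (hmu jj)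

set_option maxHeartbeats 1000000 in
/-- Column `i3`: only the `(i2,i3)` entry can be nonzero above the diagonal. -/
lemma NcolB
    (hlow : ∀ p q : Fin (2*(k+m+2)), q < p → h p q = 0)
    (heq : ∀ p q : Fin (2*(k+m+2)), q < p →
      (Feven k m lam mu γ₁ γ₂ γ₃ * h) p q = (h * Feven k m lam mu γ₁ γ₂ γ₃) p q)
    (hmu : ∀ j, mu j ≠ 0) :
    ∀ t, t ≠ i2 k m → t ≠ i3 k m → h t (i3 k m) = 0 := by
  intro t h2 h3
  have h2' : t.val ≠ m := fun hc => h2 (Fin.val_injective (by simp only [i2_val]; omega))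
  have h3' : t.val ≠ m+1 := fun hc => h3 (Fin.val_injective (by simp only [i3_val]; omega))
  by_cases hgt : t.val > m+1
  · exact hlow t (i3 k m) (by simp only [Fin.lt_def, i3_val]; omega)
  have htm : t.val < m := by omega
  set jj : Fin m := ⟨t.val, htm⟩ with hjjdef
  have hrt : r1 k m jj = t := Fin.val_injective rfl
  have e := heq (i8 k m jj) (i3 k m) (by simp only [Fin.lt_def, i8_val, i3_val]; omega)
  rw [FHrow8, hrt, HFcol3] at e
  rw [hlow (i8 k m jj) (i7 k m) (by simp only [Fin.lt_def, i8_val, i7_val]; omega),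
    mul_zero] at e
  exact (mul_eq_zero.mp e).resolve_left (hmu jj)

set_option maxHeartbeats 1000000 in
/-- Columns in block 4: everything above the diagonal vanishes. -/
lemma NcolC
    (hlow : ∀ p q : Fin (2*(k+m+2)), q < p → h p q = 0)
    (heq : ∀ p q : Fin (2*(k+m+2)), q < p →
      (Feven k m lam mu γ₁ γ₂ γ₃ * h) p q = (h * Feven k m lam mu γ₁ γ₂ γ₃) p q)
    (hlam : ∀ i : Fin k, i.val + 1 < k → lam i ≠ 0)
    (hmu : ∀ j, mu j ≠ 0) (hγ₁ : γ₁ ≠ 0) (hγ₂ : γ₂ ≠ 0) (b : Fin k) :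
    ∀ t, t ≠ r4 k m b → h t (r4 k m b) = 0 := by
  intro t ht
  have hbK := b.isLt
  have ht' : t.val ≠ m+2+b.val := fun hc => ht (Fin.val_injective (by simp only [r4_val]; omega))
  by_cases hgt : t.val > m+2+b.val
  · exact hlow t (r4 k m b) (by simp only [Fin.lt_def, r4_val]; omega)
  by_cases c1 : t.val < m
  · -- block 1 row
    set jj : Fin m := ⟨t.val, c1⟩ with hjjdef
    have hrt : r1 k m jj = t := Fin.val_injective rfl
    have e := heq (i8 k m jj) (r4 k m b) (by simp only [Fin.lt_def, i8_val, r4_val]; omega)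
    rw [FHrow8, hrt, HFcol4] at e
    rw [hlow (i8 k m jj) (i5 k m b) (by simp only [Fin.lt_def, i8_val, i5_val]; omega),
      mul_zero] at e
    exact (mul_eq_zero.mp e).resolve_left (hmu jj)
  by_cases c2 : t.val = m
  · -- t = i2
    have ht2 : t = i2 k m := Fin.val_injective (by simp only [i2_val]; omega)
    have e := heq (i6 k m) (r4 k m b) (by simp only [Fin.lt_def, i6_val, r4_val]; omega)
    rw [FHrow6, HFcol4] at e
    rw [hlow (i6 k m) (i5 k m b) (by simp only [Fin.lt_def, i6_val, i5_val]; omega),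
      mul_zero] at e
    rw [ht2]
    exact (mul_eq_zero.mp e).resolve_left hγ₁
  by_cases c3 : t.val = m+1
  · -- t = i3
    have ht3 : t = i3 k m := Fin.val_injective (by simp only [i3_val]; omega)
    have e := heq (i7 k m) (r4 k m b) (by simp only [Fin.lt_def, i7_val, r4_val]; omega)
    rw [FHrow7, HFcol4] at e
    rw [hlow (i7 k m) (i5 k m b) (by simp only [Fin.lt_def, i7_val, i5_val]; omega),
      mul_zero] at e
    rw [hlow (i6 k m) (r4 k m b) (by simp only [Fin.lt_def, i6_val, r4_val]; omega),
      mul_zero, add_zero] at e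
    rw [ht3]
    exact (mul_eq_zero.mp e).resolve_left hγ₂
  · -- t = r4 a with a < b
    have c4 : m+2 ≤ t.val ∧ t.val < m+2+b.val := by omega
    set aa : Fin k := ⟨t.val-(m+2), by omega⟩ with haadef
    have haav : aa.val = t.val-(m+2) := rfl
    have hrt : r4 k m aa = t := Fin.val_injective (by simp only [r4_val]; omega)
    have e := heq (i5 k m aa) (r4 k m b) (by simp only [Fin.lt_def, i5_val, r4_val]; omega)
    rw [FHrow5, hrt, HFcol4] at e
    rw [hlow (i5 k m aa) (i5 k m b) (by simp only [Fin.lt_def, i5_val]; omega),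
      mul_zero] at e
    exact (mul_eq_zero.mp e).resolve_left (hlam aa (by omega))

set_option maxHeartbeats 1000000 in
/-- Columns in block 5: only the antidiagonal entry `(r4 i, i5 i)` can be nonzero. -/
lemma NcolD
    (hlow : ∀ p q : Fin (2*(k+m+2)), q < p → h p q = 0)
    (heq : ∀ p q : Fin (2*(k+m+2)), q < p →
      (Feven k m lam mu γ₁ γ₂ γ₃ * h) p q = (h * Feven k m lam mu γ₁ γ₂ γ₃) p q)
    (hlam : ∀ i : Fin k, i.val + 1 < k → lam i ≠ 0)
    (hmu : ∀ j, mu j ≠ 0) (hγ₁ : γ₁ ≠ 0) (hγ₂ : γ₂ ≠ 0) (i : Fin k) :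
    ∀ t, t ≠ r4 k m i → t ≠ i5 k m i → h t (i5 k m i) = 0 := by
  intro t ht4 ht5
  have hiK := i.isLt
  have ht5' : t.val ≠ m+2*k+1-i.val := fun hc =>
    ht5 (Fin.val_injective (by simp only [i5_val]; omega))
  by_cases hgt : t.val > m+2*k+1-i.val
  · exact hlow t (i5 k m i) (by simp only [Fin.lt_def, i5_val]; omega)
  by_cases c1 : t.val < m
  · set jj : Fin m := ⟨t.val, c1⟩ with hjjdef
    have hrt : r1 k m jj = t := Fin.val_injective rfl
    have e := heq (i8 k m jj) (i5 k m i) (by simp only [Fin.lt_def, i8_val, i5_val]; omega)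
    rw [FHrow8, hrt, HFcol0 _ _ (by simp only [i5_val]; omega) (by simp only [i5_val]; omega)] at e
    exact (mul_eq_zero.mp e).resolve_left (hmu jj)
  by_cases c2 : t.val = m
  · have ht2 : t = i2 k m := Fin.val_injective (by simp only [i2_val]; omega)
    have e := heq (i6 k m) (i5 k m i) (by simp only [Fin.lt_def, i6_val, i5_val]; omega)
    rw [FHrow6, HFcol0 _ _ (by simp only [i5_val]; omega) (by simp only [i5_val]; omega)] at e
    rw [ht2]
    exact (mul_eq_zero.mp e).resolve_left hγ₁
  by_cases c3 : t.val = m+1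
  · have ht3 : t = i3 k m := Fin.val_injective (by simp only [i3_val]; omega)
    have e := heq (i7 k m) (i5 k m i) (by simp only [Fin.lt_def, i7_val, i5_val]; omega)
    rw [FHrow7, HFcol0 _ _ (by simp only [i5_val]; omega) (by simp only [i5_val]; omega)] at e
    rw [hlow (i6 k m) (i5 k m i) (by simp only [Fin.lt_def, i6_val, i5_val]; omega),
      mul_zero, add_zero] at e
    rw [ht3]
    exact (mul_eq_zero.mp e).resolve_left hγ₂
  by_cases c4 : t.val < m+2+k
  · -- t = r4 a, a ≠ i
    set aa : Fin k := ⟨t.val-(m+2), by omega⟩ with haadef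
    have haav : aa.val = t.val-(m+2) := rfl
    have hrt : r4 k m aa = t := Fin.val_injective (by simp only [r4_val]; omega)
    have hai : aa.val ≠ i.val := by
      intro hc
      apply ht4
      rw [← hrt]
      exact congrArg (r4 k m) (Fin.val_injective hc)
    by_cases c5 : aa.val < i.val
    · -- use row i5 aa, column i5 i is non-special
      have e := heq (i5 k m aa) (i5 k m i) (by simp only [Fin.lt_def, i5_val]; omega)
      rw [FHrow5, hrt, HFcol0 _ _ (by simp only [i5_val]; omega) (by simp only [i5_val]; omega)] at e
      exact (mul_eq_zero.mp e).resolve_left (hlam aa (by omega))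
    · -- aa > i : use row r4 aa, column r4 i
      have c6 : i.val < aa.val := by omega
      have e := heq (r4 k m aa) (r4 k m i) (by simp only [Fin.lt_def, r4_val]; omega)
      rw [FHrow0 _ _ (by simp only [r4_val]; omega), HFcol4, hrt] at e
      exact ((mul_eq_zero.mp e.symm).resolve_left (hlam i (by omega)))
  · -- t in block 5 : t = i5 a with a > i
    set aa : Fin k := ⟨m+2*k+1-t.val, by omega⟩ with haadef
    have haav : aa.val = m+2*k+1-t.val := rfl
    have hrt : i5 k m aa = t := Fin.val_injective (by simp only [i5_val]; omega)
    have hai : i.val < aa.val := by omega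
    have e := heq (i5 k m aa) (r4 k m i) (by simp only [Fin.lt_def, i5_val, r4_val]; omega)
    rw [FHrow5, hrt, HFcol4] at e
    rw [hlow (r4 k m aa) (r4 k m i) (by simp only [Fin.lt_def, r4_val]; omega),
      mul_zero] at e
    exact ((mul_eq_zero.mp e.symm).resolve_left (hlam i (by omega)))

set_option maxHeartbeats 1000000 in
/-- Column `i6`: only the `(i2,i6)` entry can be nonzero above the diagonal. -/
lemma NcolE
    (hlow : ∀ p q : Fin (2*(k+m+2)), q < p → h p q = 0)
    (hdiag : ∀ p : Fin (2*(k+m+2)), h p p = 1)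
    (heq : ∀ p q : Fin (2*(k+m+2)), q < p →
      (Feven k m lam mu γ₁ γ₂ γ₃ * h) p q = (h * Feven k m lam mu γ₁ γ₂ γ₃) p q)
    (hlam : ∀ i : Fin k, i.val + 1 < k → lam i ≠ 0)
    (hmu : ∀ j, mu j ≠ 0) (hγ₁ : γ₁ ≠ 0) (hγ₂ : γ₂ ≠ 0) :
    ∀ t, t ≠ i2 k m → t ≠ i6 k m → h t (i6 k m) = 0 := by
  intro t h2 h6
  have h2' : t.val ≠ m := fun hc => h2 (Fin.val_injective (by simp only [i2_val]; omega))
  have h6' : t.val ≠ m+2*k+2 := fun hc => h6 (Fin.val_injective (by simp only [i6_val]; omega))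
  by_cases hgt : t.val > m+2*k+2
  · exact hlow t (i6 k m) (by simp only [Fin.lt_def, i6_val]; omega)
  by_cases c1 : t.val < m
  · set jj : Fin m := ⟨t.val, c1⟩ with hjjdef
    have hrt : r1 k m jj = t := Fin.val_injective rfl
    have e := heq (i8 k m jj) (i6 k m) (by simp only [Fin.lt_def, i8_val, i6_val]; omega)
    rw [FHrow8, hrt, HFcol6] at e
    rw [hlow (i8 k m jj) (i7 k m) (by simp only [Fin.lt_def, i8_val, i7_val]; omega),
      mul_zero] at e
    exact (mul_eq_zero.mp e).resolve_left (hmu jj)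
  by_cases c3 : t.val = m+1
  · have ht3 : t = i3 k m := Fin.val_injective (by simp only [i3_val]; omega)
    have e := heq (i7 k m) (i6 k m) (by simp only [Fin.lt_def, i7_val, i6_val]; omega)
    rw [FHrow7, HFcol6, hdiag, hdiag, mul_one] at e
    rw [ht3]
    have : γ₂ * h (i3 k m) (i6 k m) = 0 := by linarith
    exact (mul_eq_zero.mp this).resolve_left hγ₂
  by_cases c4 : t.val < m+2+k
  · -- t = r4 a
    set aa : Fin k := ⟨t.val-(m+2), by omega⟩ with haadef
    have haav : aa.val = t.val-(m+2) := rfl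
    have hrt : r4 k m aa = t := Fin.val_injective (by simp only [r4_val]; omega)
    have e := heq (r4 k m aa) (i2 k m) (by simp only [Fin.lt_def, r4_val, i2_val]; omega)
    rw [FHrow0 _ _ (by simp only [r4_val]; omega), HFcol2, hrt] at e
    exact ((mul_eq_zero.mp e.symm).resolve_left hγ₁)
  · -- t = i5 a
    set aa : Fin k := ⟨m+2*k+1-t.val, by omega⟩ with haadef
    have haav : aa.val = m+2*k+1-t.val := rfl
    have hrt : i5 k m aa = t := Fin.val_injective (by simp only [i5_val]; omega)
    have e := heq (i5 k m aa) (i2 k m) (by simp only [Fin.lt_def, i5_val, i2_val]; omega)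
    rw [FHrow5, HFcol2, hrt] at e
    rw [hlow (r4 k m aa) (i2 k m) (by simp only [Fin.lt_def, r4_val, i2_val]; omega),
      mul_zero] at e
    exact ((mul_eq_zero.mp e.symm).resolve_left hγ₁)

set_option maxHeartbeats 1000000 in
/-- Column `i7`: only `(i2,i7)`, `(i3,i7)`, `(i6,i7)` can be nonzero above the diagonal. -/
lemma NcolF
    (hlow : ∀ p q : Fin (2*(k+m+2)), q < p → h p q = 0)
    (heq : ∀ p q : Fin (2*(k+m+2)), q < p →
      (Feven k m lam mu γ₁ γ₂ γ₃ * h) p q = (h * Feven k m lam mu γ₁ γ₂ γ₃) p q)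
    (hlam : ∀ i : Fin k, i.val + 1 < k → lam i ≠ 0)
    (hmu : ∀ j, mu j ≠ 0) (hγ₁ : γ₁ ≠ 0) (hγ₂ : γ₂ ≠ 0) :
    ∀ t, t ≠ i2 k m → t ≠ i3 k m → t ≠ i6 k m → t ≠ i7 k m → h t (i7 k m) = 0 := by
  intro t h2 h3 h6 h7
  have h2' : t.val ≠ m := fun hc => h2 (Fin.val_injective (by simp only [i2_val]; omega))
  have h3' : t.val ≠ m+1 := fun hc => h3 (Fin.val_injective (by simp only [i3_val]; omega))
  have h6' : t.val ≠ m+2*k+2 := fun hc => h6 (Fin.val_injective (by simp only [i6_val]; omega))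
  have h7' : t.val ≠ m+2*k+3 := fun hc => h7 (Fin.val_injective (by simp only [i7_val]; omega))
  by_cases hgt : t.val > m+2*k+3
  · exact hlow t (i7 k m) (by simp only [Fin.lt_def, i7_val]; omega)
  by_cases c1 : t.val < m
  · set jj : Fin m := ⟨t.val, c1⟩ with hjjdef
    have hrt : r1 k m jj = t := Fin.val_injective rfl
    have e := heq (i8 k m jj) (i7 k m) (by simp only [Fin.lt_def, i8_val, i7_val]; omega)
    rw [FHrow8, hrt, HFcol0 _ _ (by simp only [i7_val]; omega) (by simp only [i7_val]; omega)] at e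
    exact (mul_eq_zero.mp e).resolve_left (hmu jj)
  by_cases c4 : t.val < m+2+k
  · set aa : Fin k := ⟨t.val-(m+2), by omega⟩ with haadef
    have hrt : r4 k m aa = t := Fin.val_injective (by simp only [r4_val, haadef, Fin.val_mk]; omega)
    have e := heq (r4 k m aa) (i3 k m) (by simp only [Fin.lt_def, r4_val, i3_val]; omega)
    rw [FHrow0 _ _ (by simp only [r4_val]; omega), HFcol3, hrt] at e
    exact ((mul_eq_zero.mp e.symm).resolve_left hγ₂)
  · -- t = i5 a
    set aa : Fin k := ⟨m+2*k+1-t.val, by omega⟩ with haadef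
    have haav : aa.val = m+2*k+1-t.val := rfl
    have hrt : i5 k m aa = t := Fin.val_injective (by simp only [i5_val]; omega)
    have e := heq (i5 k m aa) (i3 k m) (by simp only [Fin.lt_def, i5_val, i3_val]; omega)
    rw [FHrow5, HFcol3, hrt] at e
    rw [hlow (r4 k m aa) (i3 k m) (by simp only [Fin.lt_def, r4_val, i3_val]; omega),
      mul_zero] at e
    exact ((mul_eq_zero.mp e.symm).resolve_left hγ₂)

set_option maxHeartbeats 1000000 in
/-- Columns in block 8: only the antidiagonal entry `(r1 j, i8 j)` can be nonzero. -/
lemma NcolG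
    (hlow : ∀ p q : Fin (2*(k+m+2)), q < p → h p q = 0)
    (heq : ∀ p q : Fin (2*(k+m+2)), q < p →
      (Feven k m lam mu γ₁ γ₂ γ₃ * h) p q = (h * Feven k m lam mu γ₁ γ₂ γ₃) p q)
    (hlam : ∀ i : Fin k, i.val + 1 < k → lam i ≠ 0)
    (hmu : ∀ j, mu j ≠ 0) (hγ₁ : γ₁ ≠ 0) (hγ₂ : γ₂ ≠ 0) (j : Fin m) :
    ∀ t, t ≠ r1 k m j → t ≠ i8 k m j → h t (i8 k m j) = 0 := by
  intro t h1 h8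
  have hjM := j.isLt
  have h1' : t.val ≠ j.val := fun hc => h1 (Fin.val_injective (by simp only [r1_val]; omega))
  have h8' : t.val ≠ 2*m+2*k+3-j.val := fun hc =>
    h8 (Fin.val_injective (by simp only [i8_val]; omega))
  by_cases hgt : t.val > 2*m+2*k+3-j.val
  · exact hlow t (i8 k m j) (by simp only [Fin.lt_def, i8_val]; omega)
  by_cases c1 : t.val < m
  · set aa : Fin m := ⟨t.val, c1⟩ with haadef
    have hrt : r1 k m aa = t := Fin.val_injective rfl
    by_cases c2 : t.val < j.val
    · have e := heq (i8 k m aa) (i8 k m j) (by simp only [Fin.lt_def, i8_val, haadef, Fin.val_mk]; omega)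
      rw [FHrow8, hrt, HFcol0 _ _ (by simp only [i8_val]; omega) (by simp only [i8_val]; omega)] at e
      exact (mul_eq_zero.mp e).resolve_left (hmu aa)
    · have c3 : j.val < t.val := by omega
      have e := heq (r1 k m aa) (r1 k m j) (by simp only [Fin.lt_def, r1_val]; omega)
      rw [FHrow0 _ _ (by simp only [r1_val]; omega), HFcol1, hrt] at e
      exact ((mul_eq_zero.mp e.symm).resolve_left (hmu j))
  by_cases c2 : t.val = m
  · have ht2 : t = i2 k m := Fin.val_injective (by simp only [i2_val]; omega)
    have e := heq (i2 k m) (r1 k m j) (by simp only [Fin.lt_def, i2_val, r1_val]; omega)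
    rw [FHrow0 _ _ (by simp only [i2_val]; omega), HFcol1] at e
    rw [ht2]
    exact ((mul_eq_zero.mp e.symm).resolve_left (hmu j))
  by_cases c3 : t.val = m+1
  · have ht3 : t = i3 k m := Fin.val_injective (by simp only [i3_val]; omega)
    have e := heq (i3 k m) (r1 k m j) (by simp only [Fin.lt_def, i3_val, r1_val]; omega)
    rw [FHrow0 _ _ (by simp only [i3_val]; omega), HFcol1] at e
    rw [ht3]
    exact ((mul_eq_zero.mp e.symm).resolve_left (hmu j))
  by_cases c4 : t.val < m+2+k
  · set aa : Fin k := ⟨t.val-(m+2), by omega⟩ with haadef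
    have hrt : r4 k m aa = t := Fin.val_injective (by simp only [r4_val, haadef, Fin.val_mk]; omega)
    have e := heq (r4 k m aa) (r1 k m j) (by simp only [Fin.lt_def, r4_val, r1_val]; omega)
    rw [FHrow0 _ _ (by simp only [r4_val]; omega), HFcol1, hrt] at e
    exact ((mul_eq_zero.mp e.symm).resolve_left (hmu j))
  by_cases c5 : t.val < m+2*k+2
  · -- t = i5 a
    set aa : Fin k := ⟨m+2*k+1-t.val, by omega⟩ with haadef
    have haav : aa.val = m+2*k+1-t.val := rfl
    have hrt : i5 k m aa = t := Fin.val_injective (by simp only [i5_val]; omega)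
    have e := heq (i5 k m aa) (r1 k m j) (by simp only [Fin.lt_def, i5_val, r1_val]; omega)
    rw [FHrow5, HFcol1, hrt] at e
    rw [hlow (r4 k m aa) (r1 k m j) (by simp only [Fin.lt_def, r4_val, r1_val]; omega),
      mul_zero] at e
    exact ((mul_eq_zero.mp e.symm).resolve_left (hmu j))
  by_cases c6 : t.val = m+2*k+2
  · have ht6 : t = i6 k m := Fin.val_injective (by simp only [i6_val]; omega)
    have e := heq (i6 k m) (r1 k m j) (by simp only [Fin.lt_def, i6_val, r1_val]; omega)
    rw [FHrow6, HFcol1] at e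
    rw [hlow (i2 k m) (r1 k m j) (by simp only [Fin.lt_def, i2_val, r1_val]; omega),
      mul_zero] at e
    rw [ht6]
    exact ((mul_eq_zero.mp e.symm).resolve_left (hmu j))
  by_cases c7 : t.val = m+2*k+3
  · have ht7 : t = i7 k m := Fin.val_injective (by simp only [i7_val]; omega)
    have e := heq (i7 k m) (r1 k m j) (by simp only [Fin.lt_def, i7_val, r1_val]; omega)
    rw [FHrow7, HFcol1] at e
    rw [hlow (i3 k m) (r1 k m j) (by simp only [Fin.lt_def, i3_val, r1_val]; omega),
      hlow (i6 k m) (r1 k m j) (by simp only [Fin.lt_def, i6_val, r1_val]; omega),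
      mul_zero, mul_zero, add_zero] at e
    rw [ht7]
    exact ((mul_eq_zero.mp e.symm).resolve_left (hmu j))
  ·
    set aa : Fin m := ⟨2*m+2*k+3-t.val, by omega⟩ with haadef
    have haav : aa.val = 2*m+2*k+3-t.val := rfl
    have hrt : i8 k m aa = t := Fin.val_injective (by simp only [i8_val]; omega)
    have e := heq (i8 k m aa) (r1 k m j) (by simp only [Fin.lt_def, i8_val, r1_val]; omega)
    rw [FHrow8, HFcol1, hrt] at e
    rw [hlow (r1 k m aa) (r1 k m j) (by simp only [Fin.lt_def, r1_val]; omega),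
      mul_zero] at e
    exact ((mul_eq_zero.mp e.symm).resolve_left (hmu j))

/-- The relation `γ₁ h₍₂₃₎ = γ₂ h₍₆₇₎`. -/
lemma Nrel
    (heq : ∀ p q : Fin (2*(k+m+2)), q < p →
      (Feven k m lam mu γ₁ γ₂ γ₃ * h) p q = (h * Feven k m lam mu γ₁ γ₂ γ₃) p q) :
    γ₁ * h (i2 k m) (i3 k m) = γ₂ * h (i6 k m) (i7 k m) := by
  have e := heq (i6 k m) (i3 k m) (by simp only [Fin.lt_def, i6_val, i3_val]; omega)
  rw [FHrow6, HFcol3] at e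
  exact e

end PartA3
section PartB1

lemma inv_unitriangular {N : ℕ} {x : Matrix (Fin N) (Fin N) ℝ} (hx : IsUnitriangular x) :
    (∀ p q : Fin N, q < p → x⁻¹ p q = 0) ∧ (∀ p, x⁻¹ p p = 1) ∧ x * x⁻¹ = 1 ∧ x⁻¹ * x = 1 := by
  obtain ⟨hlow, hdiag⟩ := hx
  have hbt : x.BlockTriangular id := fun i j hij => hlow i j hij
  have hdet : IsUnit x.det := by
    rw [Matrix.det_of_upperTriangular hbt]
    simp [hdiag]
  have hxy : x * x⁻¹ = 1 := Matrix.mul_nonsing_inv x hdet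
  have hyx : x⁻¹ * x = 1 := Matrix.nonsing_inv_mul x hdet
  haveI := x.invertibleOfIsUnitDet hdet
  have hybt : (x⁻¹).BlockTriangular id := Matrix.blockTriangular_inv_of_blockTriangular hbt
  have hylow : ∀ p q : Fin N, q < p → x⁻¹ p q = 0 := fun p q hq => hybt hq
  refine ⟨hylow, ?_, hxy, hyx⟩
  intro p
  have h1 : (x⁻¹ * x) p p = 1 := by rw [hyx, Matrix.one_apply_eq]
  rw [Matrix.mul_apply] at h1
  rw [sum_one _ p (by
    intro t htp
    rcases lt_or_gt_of_ne htp with hlt | hgt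
    · rw [hylow p t hlt, zero_mul]
    · rw [hlow t p hgt, mul_zero])] at h1
  rw [hdiag, mul_one] at h1
  exact h1

variable {k m : ℕ}

/-- Bundle of the structural facts about an element of the stabilizer. -/
def GoodH (h : MS k m) : Prop :=
  (∀ p, h p p = 1) ∧
  (∀ u : Fin (2*(k+m+2)), u.val ≤ m → ∀ t, t ≠ u → h t u = 0) ∧
  (∀ t, t ≠ i2 k m → t ≠ i3 k m → h t (i3 k m) = 0) ∧
  (∀ b : Fin k, ∀ t, t ≠ r4 k m b → h t (r4 k m b) = 0) ∧
  (∀ i : Fin k, ∀ t, t ≠ r4 k m i → t ≠ i5 k m i → h t (i5 k m i) = 0) ∧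
  (∀ t, t ≠ i2 k m → t ≠ i6 k m → h t (i6 k m) = 0) ∧
  (∀ t, t ≠ i2 k m → t ≠ i3 k m → t ≠ i6 k m → t ≠ i7 k m → h t (i7 k m) = 0) ∧
  (∀ j : Fin m, ∀ t, t ≠ r1 k m j → t ≠ i8 k m j → h t (i8 k m j) = 0)

variable {x y h : MS k m}

lemma Wlow (hg : GoodH h) (p u : Fin (2*(k+m+2))) (hu : u.val ≤ m) :
    (x * (h - 1)) p u = 0 := by
  rw [Matrix.mul_apply]
  apply Finset.sum_eq_zero
  intro t _
  rw [Matrix.sub_apply, Matrix.one_apply]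
  by_cases htu : t = u
  · rw [if_pos htu, htu, hg.1, sub_self, mul_zero]
  · rw [if_neg htu, hg.2.1 u hu t htu, sub_zero, mul_zero]

lemma W4 (hg : GoodH h) (p : Fin (2*(k+m+2))) (b : Fin k) :
    (x * (h - 1)) p (r4 k m b) = 0 := by
  rw [Matrix.mul_apply]
  apply Finset.sum_eq_zero
  intro t _
  rw [Matrix.sub_apply, Matrix.one_apply]
  by_cases htu : t = r4 k m b
  · rw [if_pos htu, htu, hg.1, sub_self, mul_zero]
  · rw [if_neg htu, hg.2.2.2.1 b t htu, sub_zero, mul_zero]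

lemma W3 (hg : GoodH h) (p : Fin (2*(k+m+2))) :
    (x * (h - 1)) p (i3 k m) = x p (i2 k m) * h (i2 k m) (i3 k m) := by
  rw [Matrix.mul_apply]
  rw [sum_one _ (i2 k m) (by
    intro t ht2
    rw [Matrix.sub_apply, Matrix.one_apply]
    by_cases htu : t = i3 k m
    · rw [if_pos htu, htu, hg.1, sub_self, mul_zero]
    · rw [if_neg htu, hg.2.2.1 t ht2 htu, sub_zero, mul_zero])]
  rw [Matrix.sub_apply, Matrix.one_apply,
    if_neg (fun hc => by
      have h1 := congrArg Fin.val hc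
      simp only [i2_val, i3_val] at h1
      omega),
    sub_zero]

lemma W5 (hg : GoodH h) (p : Fin (2*(k+m+2))) (i : Fin k) :
    (x * (h - 1)) p (i5 k m i) = x p (r4 k m i) * h (r4 k m i) (i5 k m i) := by
  have hiK := i.isLt
  rw [Matrix.mul_apply]
  rw [sum_one _ (r4 k m i) (by
    intro t ht4
    rw [Matrix.sub_apply, Matrix.one_apply]
    by_cases htu : t = i5 k m i
    · rw [if_pos htu, htu, hg.1, sub_self, mul_zero]
    · rw [if_neg htu, hg.2.2.2.2.1 i t ht4 htu, sub_zero, mul_zero])]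
  rw [Matrix.sub_apply, Matrix.one_apply,
    if_neg (fun hc => by
      have h1 := congrArg Fin.val hc
      simp only [r4_val, i5_val] at h1
      omega),
    sub_zero]

lemma W6 (hg : GoodH h) (p : Fin (2*(k+m+2))) :
    (x * (h - 1)) p (i6 k m) = x p (i2 k m) * h (i2 k m) (i6 k m) := by
  rw [Matrix.mul_apply]
  rw [sum_one _ (i2 k m) (by
    intro t ht2
    rw [Matrix.sub_apply, Matrix.one_apply]
    by_cases htu : t = i6 k m
    · rw [if_pos htu, htu, hg.1, sub_self, mul_zero]
    · rw [if_neg htu, hg.2.2.2.2.2.1 t ht2 htu, sub_zero, mul_zero])]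
  rw [Matrix.sub_apply, Matrix.one_apply,
    if_neg (fun hc => by
      have h1 := congrArg Fin.val hc
      simp only [i2_val, i6_val] at h1
      omega),
    sub_zero]

lemma W7 (hg : GoodH h) (p : Fin (2*(k+m+2))) :
    (x * (h - 1)) p (i7 k m) = x p (i2 k m) * h (i2 k m) (i7 k m)
      + x p (i3 k m) * h (i3 k m) (i7 k m) + x p (i6 k m) * h (i6 k m) (i7 k m) := by
  rw [Matrix.mul_apply]
  have hsplit := sum_split_big (fun t => x p t * (h - 1) t (i7 k m))
    (i2 k m) (i3 k m) (i6 k m) (Fin.elim0 : Fin 0 → Fin (2*(k+m+2))) Fin.elim0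
    (fun a => a.elim0) (fun a => a.elim0)
    (fun hc => by have h1 := congrArg Fin.val hc; simp only [i2_val, i3_val] at h1; omega)
    (fun hc => by have h1 := congrArg Fin.val hc; simp only [i2_val, i6_val] at h1; omega)
    (fun hc => by have h1 := congrArg Fin.val hc; simp only [i3_val, i6_val] at h1; omega)
    (fun t => t.elim0) (fun s => s.elim0) (fun t => t.elim0)
    (by
      intro t h2 h3 h6 _ _
      show x p t * (h - 1) t (i7 k m) = 0
      rw [Matrix.sub_apply, Matrix.one_apply]
      by_cases htu : t = i7 k m
      · rw [if_pos htu, htu, hg.1, sub_self, mul_zero]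
      · rw [if_neg htu, hg.2.2.2.2.2.2.1 t h2 h3 h6 htu, sub_zero, mul_zero])
  rw [hsplit]
  simp only [Finset.univ_eq_empty, Finset.sum_empty, add_zero]
  have hne : ∀ t : Fin (2*(k+m+2)), t.val ≠ m+2*k+3 → ¬ (t = i7 k m) := by
    intro t ht hc
    exact ht (by rw [hc]; simp only [i7_val])
  rw [Matrix.sub_apply, Matrix.one_apply,
    if_neg (hne _ (by simp only [i2_val]; omega)), sub_zero]
  rw [Matrix.sub_apply, Matrix.one_apply,
    if_neg (hne _ (by simp only [i3_val]; omega)), sub_zero]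
  rw [Matrix.sub_apply, Matrix.one_apply,
    if_neg (hne _ (by simp only [i6_val]; omega)), sub_zero]

lemma W8 (hg : GoodH h) (p : Fin (2*(k+m+2))) (j : Fin m) :
    (x * (h - 1)) p (i8 k m j) = x p (r1 k m j) * h (r1 k m j) (i8 k m j) := by
  have hjM := j.isLt
  rw [Matrix.mul_apply]
  rw [sum_one _ (r1 k m j) (by
    intro t ht1
    rw [Matrix.sub_apply, Matrix.one_apply]
    by_cases htu : t = i8 k m j
    · rw [if_pos htu, htu, hg.1, sub_self, mul_zero]
    · rw [if_neg htu, hg.2.2.2.2.2.2.2 j t ht1 htu, sub_zero, mul_zero])]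
  rw [Matrix.sub_apply, Matrix.one_apply,
    if_neg (fun hc => by
      have h1 := congrArg Fin.val hc
      simp only [r1_val, i8_val] at h1
      omega),
    sub_zero]

set_option maxHeartbeats 1000000 in
lemma Kmaster (hg : GoodH h) (p q : Fin (2*(k+m+2))) :
    (x * (h - 1) * y) p q =
      x p (i2 k m) * h (i2 k m) (i3 k m) * y (i3 k m) q
      + x p (i2 k m) * h (i2 k m) (i6 k m) * y (i6 k m) q
      + (x p (i2 k m) * h (i2 k m) (i7 k m) + x p (i3 k m) * h (i3 k m) (i7 k m)
          + x p (i6 k m) * h (i6 k m) (i7 k m)) * y (i7 k m) q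
      + (∑ i, x p (r4 k m i) * h (r4 k m i) (i5 k m i) * y (i5 k m i) q)
      + (∑ j, x p (r1 k m j) * h (r1 k m j) (i8 k m j) * y (i8 k m j) q) := by
  rw [Matrix.mul_apply]
  have hsplit := sum_split_big (fun u => (x * (h - 1)) p u * y u q)
    (i3 k m) (i6 k m) (i7 k m) (i5 k m) (i8 k m)
    (fun a b hab => by
      have h1 := congrArg Fin.val hab
      have := a.isLt; have := b.isLt
      simp only [i5_val] at h1
      exact Fin.val_injective (by omega))
    (fun a b hab => by
      have h1 := congrArg Fin.val hab
      have := a.isLt; have := b.isLt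
      simp only [i8_val] at h1
      exact Fin.val_injective (by omega))
    (fun hc => by have h1 := congrArg Fin.val hc; simp only [i3_val, i6_val] at h1; omega)
    (fun hc => by have h1 := congrArg Fin.val hc; simp only [i3_val, i7_val] at h1; omega)
    (fun hc => by have h1 := congrArg Fin.val hc; simp only [i6_val, i7_val] at h1; omega)
    (fun t => by
      have := t.isLt
      refine ⟨?_, ?_, ?_⟩ <;>
        (intro hc; have h1 := congrArg Fin.val hc;
         simp only [i5_val, i3_val, i6_val, i7_val] at h1; omega))
    (fun s => by
      have := s.isLt
      refine ⟨?_, ?_, ?_⟩ <;>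
        (intro hc; have h1 := congrArg Fin.val hc;
         simp only [i8_val, i3_val, i6_val, i7_val] at h1; omega))
    (fun t s => by
      have := t.isLt; have := s.isLt
      intro hc; have h1 := congrArg Fin.val hc
      simp only [i5_val, i8_val] at h1; omega)
    (by
      intro u h3 h6 h7 hv hw
      show (x * (h - 1)) p u * y u q = 0
      have hu := u.isLt
      by_cases c1 : u.val ≤ m
      · rw [Wlow hg p u c1, zero_mul]
      by_cases c2 : u.val = m+1
      · exact absurd (Fin.val_injective (by simp only [i3_val]; omega) : u = i3 k m) h3
      by_cases c3 : u.val < m+2+k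
      · have hb : u = r4 k m ⟨u.val-(m+2), by omega⟩ :=
          Fin.val_injective (by simp only [r4_val]; omega)
        rw [hb, W4 hg, zero_mul]
      by_cases c4 : u.val < m+2*k+2
      · exact absurd (Fin.val_injective (by simp only [i5_val]; omega) :
          u = i5 k m ⟨m+2*k+1-u.val, by omega⟩) (hv _)
      by_cases c5 : u.val = m+2*k+2
      · exact absurd (Fin.val_injective (by simp only [i6_val]; omega) : u = i6 k m) h6
      by_cases c6 : u.val = m+2*k+3
      · exact absurd (Fin.val_injective (by simp only [i7_val]; omega) : u = i7 k m) h7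
      · exact absurd (Fin.val_injective (by simp only [i8_val]; omega) :
          u = i8 k m ⟨2*m+2*k+3-u.val, by omega⟩) (hw _))
  have e5 : ∑ i, (x * (h - 1)) p (i5 k m i) * y (i5 k m i) q
      = ∑ i, x p (r4 k m i) * h (r4 k m i) (i5 k m i) * y (i5 k m i) q :=
    Finset.sum_congr rfl (fun i _ => by rw [W5 hg])
  have e8 : ∑ j, (x * (h - 1)) p (i8 k m j) * y (i8 k m j) q
      = ∑ j, x p (r1 k m j) * h (r1 k m j) (i8 k m j) * y (i8 k m j) q :=
    Finset.sum_congr rfl (fun j _ => by rw [W8 hg])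
  rw [hsplit, W3 hg, W6 hg, W7 hg, e5, e8]

lemma g_eq (hxy : x * y = 1) : x * h * y = x * (h - 1) * y + 1 := by
  have : x * h * y = x * (h - 1) * y + x * y := by noncomm_ring
  rw [this, hxy]

end PartB1
section PartB2

lemma sum_one_fam {N K : ℕ} (f : Fin N → ℝ) (e : Fin N) (v : Fin K → Fin N)
    (hv : Function.Injective v) (hev : ∀ t, v t ≠ e)
    (hz : ∀ u, u ≠ e → (∀ t, u ≠ v t) → f u = 0) :
    ∑ u, f u = f e + ∑ t, f (v t) := by
  classical
  have h1 : (e : Fin N) ∉ Finset.univ.image v := by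
    simp only [Finset.mem_image, Finset.mem_univ, true_and, not_exists]
    exact fun t ht => hev t ht
  rw [sum_subset_zero f (insert e (Finset.univ.image v))]
  · rw [Finset.sum_insert h1, Finset.sum_image (fun a _ b _ hab => hv hab)]
  · intro u hu
    simp only [Finset.mem_insert, Finset.mem_image, Finset.mem_univ, true_and, not_or,
      not_exists] at hu
    exact hz u hu.1 (fun t ht => hu.2 t ht.symm)

lemma det_factor {N r : ℕ} (hr : r < N) (A : Matrix (Fin N) (Fin r) ℝ)
    (B : Matrix (Fin r) (Fin N) ℝ) (M : Matrix (Fin N) (Fin N) ℝ)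
    (hM : ∀ p q, M p q = ∑ t, A p t * B t q) : M.det = 0 := by
  classical
  set A' : Matrix (Fin N) (Fin N) ℝ :=
    Matrix.of (fun p t => if ht : t.val < r then A p ⟨t.val, ht⟩ else 0) with hA'
  set B' : Matrix (Fin N) (Fin N) ℝ :=
    Matrix.of (fun t q => if ht : t.val < r then B ⟨t.val, ht⟩ q else 0) with hB'
  have hMf : M = A' * B' := by
    ext p q
    rw [Matrix.mul_apply, hM]
    have e1 : ∀ t : Fin N, A' p t * B' t q =
        (fun j => if hj : j < r then A p ⟨j, hj⟩ * B ⟨j, hj⟩ q else 0) t.val := by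
      intro t
      by_cases ht : t.val < r
      · simp only [hA', hB', Matrix.of_apply, dif_pos ht]
      · simp only [hA', hB', Matrix.of_apply, dif_neg ht, mul_zero]
    have e2 : ∀ t : Fin r, A p t * B t q =
        (fun j => if hj : j < r then A p ⟨j, hj⟩ * B ⟨j, hj⟩ q else 0) t.val := by
      intro t
      simp only [dif_pos t.isLt]
    rw [Finset.sum_congr rfl (fun t _ => e2 t), Finset.sum_congr rfl (fun t _ => e1 t)]
    rw [Fin.sum_univ_eq_sum_range (fun j => if hj : j < r then A p ⟨j, hj⟩ * B ⟨j, hj⟩ q else 0) r,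
      Fin.sum_univ_eq_sum_range (fun j => if hj : j < r then A p ⟨j, hj⟩ * B ⟨j, hj⟩ q else 0) N]
    apply Finset.sum_subset (Finset.range_subset_range.mpr (le_of_lt hr))
    intro j _ hj
    rw [Finset.mem_range] at hj
    rw [dif_neg hj]
  rw [hMf, Matrix.det_mul]
  have : A'.det = 0 := by
    apply Matrix.det_eq_zero_of_column_eq_zero ⟨r, hr⟩
    intro p
    simp only [hA', Matrix.of_apply, dif_neg (lt_irrefl r)]
  rw [this, zero_mul]

variable {k m : ℕ} {x y h : MS k m}

lemma gentry (hxy : x * y = 1) (p q : Fin (2*(k+m+2))) (hpq : p ≠ q) :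
    (x * h * y) p q = (x * (h - 1) * y) p q := by
  rw [g_eq hxy, Matrix.add_apply, Matrix.one_apply, if_neg hpq, add_zero]

lemma K1 (hg : GoodH h) (hylow : ∀ p q : Fin (2*(k+m+2)), q < p → y p q = 0)
    (p q : Fin (2*(k+m+2))) (hq : q.val ≤ m) :
    (x * (h - 1) * y) p q = 0 := by
  rw [Kmaster hg]
  rw [hylow (i3 k m) q (by simp only [Fin.lt_def, i3_val]; omega)]
  rw [hylow (i6 k m) q (by simp only [Fin.lt_def, i6_val]; omega)]
  rw [hylow (i7 k m) q (by simp only [Fin.lt_def, i7_val]; omega)]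
  rw [Finset.sum_eq_zero (fun i _ => by
    rw [hylow (i5 k m i) q (by
      have := i.isLt
      simp only [Fin.lt_def, i5_val]; omega), mul_zero])]
  rw [Finset.sum_eq_zero (fun j _ => by
    rw [hylow (i8 k m j) q (by
      have := j.isLt
      simp only [Fin.lt_def, i8_val]; omega), mul_zero])]
  ring

lemma K3 (hg : GoodH h) (hylow : ∀ p q : Fin (2*(k+m+2)), q < p → y p q = 0)
    (hydiag : ∀ p, y p p = 1) (p : Fin (2*(k+m+2))) :
    (x * (h - 1) * y) p (i3 k m) = x p (i2 k m) * h (i2 k m) (i3 k m) := by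
  rw [Kmaster hg, hydiag]
  rw [hylow (i6 k m) _ (by simp only [Fin.lt_def, i6_val, i3_val]; omega)]
  rw [hylow (i7 k m) _ (by simp only [Fin.lt_def, i7_val, i3_val]; omega)]
  rw [Finset.sum_eq_zero (fun i _ => by
    rw [hylow (i5 k m i) _ (by
      have := i.isLt
      simp only [Fin.lt_def, i5_val, i3_val]; omega), mul_zero])]
  rw [Finset.sum_eq_zero (fun j _ => by
    rw [hylow (i8 k m j) _ (by
      have := j.isLt
      simp only [Fin.lt_def, i8_val, i3_val]; omega), mul_zero])]
  ring

lemma K4 (hg : GoodH h) (hylow : ∀ p q : Fin (2*(k+m+2)), q < p → y p q = 0)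
    (p : Fin (2*(k+m+2))) (b : Fin k) :
    (x * (h - 1) * y) p (r4 k m b) =
      x p (i2 k m) * h (i2 k m) (i3 k m) * y (i3 k m) (r4 k m b) := by
  have hbK := b.isLt
  rw [Kmaster hg]
  rw [hylow (i6 k m) _ (by simp only [Fin.lt_def, i6_val, r4_val]; omega)]
  rw [hylow (i7 k m) _ (by simp only [Fin.lt_def, i7_val, r4_val]; omega)]
  rw [Finset.sum_eq_zero (fun i _ => by
    rw [hylow (i5 k m i) _ (by
      have := i.isLt
      simp only [Fin.lt_def, i5_val, r4_val]; omega), mul_zero])]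
  rw [Finset.sum_eq_zero (fun j _ => by
    rw [hylow (i8 k m j) _ (by
      have := j.isLt
      simp only [Fin.lt_def, i8_val, r4_val]; omega), mul_zero])]
  ring

lemma K5 (hg : GoodH h) (hylow : ∀ p q : Fin (2*(k+m+2)), q < p → y p q = 0)
    (p : Fin (2*(k+m+2))) (b : Fin k) :
    (x * (h - 1) * y) p (c5 k m b) =
      x p (i2 k m) * h (i2 k m) (i3 k m) * y (i3 k m) (c5 k m b)
      + ∑ i, x p (r4 k m i) * h (r4 k m i) (i5 k m i) * y (i5 k m i) (c5 k m b) := by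
  have hbK := b.isLt
  rw [Kmaster hg]
  rw [hylow (i6 k m) _ (by simp only [Fin.lt_def, i6_val, c5_val]; omega)]
  rw [hylow (i7 k m) _ (by simp only [Fin.lt_def, i7_val, c5_val]; omega)]
  have e8 : ∑ j : Fin m, x p (r1 k m j) * h (r1 k m j) (i8 k m j) * y (i8 k m j) (c5 k m b) = 0 :=
    Finset.sum_eq_zero (fun j _ => by
      rw [hylow (i8 k m j) _ (by
        have := j.isLt
        simp only [Fin.lt_def, i8_val, c5_val]; omega), mul_zero])
  rw [e8]
  ring

lemma K6 (hg : GoodH h) (hylow : ∀ p q : Fin (2*(k+m+2)), q < p → y p q = 0)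
    (hydiag : ∀ p, y p p = 1) (p : Fin (2*(k+m+2))) :
    (x * (h - 1) * y) p (i6 k m) =
      x p (i2 k m) * h (i2 k m) (i3 k m) * y (i3 k m) (i6 k m)
      + x p (i2 k m) * h (i2 k m) (i6 k m)
      + ∑ i, x p (r4 k m i) * h (r4 k m i) (i5 k m i) * y (i5 k m i) (i6 k m) := by
  rw [Kmaster hg, hydiag]
  rw [hylow (i7 k m) _ (by simp only [Fin.lt_def, i7_val, i6_val]; omega)]
  have e8 : ∑ j : Fin m, x p (r1 k m j) * h (r1 k m j) (i8 k m j) * y (i8 k m j) (i6 k m) = 0 :=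
    Finset.sum_eq_zero (fun j _ => by
      rw [hylow (i8 k m j) _ (by
        have := j.isLt
        simp only [Fin.lt_def, i8_val, i6_val]; omega), mul_zero])
  rw [e8]
  ring

lemma K7 (hg : GoodH h) (hylow : ∀ p q : Fin (2*(k+m+2)), q < p → y p q = 0)
    (hydiag : ∀ p, y p p = 1) (p : Fin (2*(k+m+2))) :
    (x * (h - 1) * y) p (i7 k m) =
      x p (i2 k m) * h (i2 k m) (i3 k m) * y (i3 k m) (i7 k m)
      + x p (i2 k m) * h (i2 k m) (i6 k m) * y (i6 k m) (i7 k m)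
      + (x p (i2 k m) * h (i2 k m) (i7 k m) + x p (i3 k m) * h (i3 k m) (i7 k m)
          + x p (i6 k m) * h (i6 k m) (i7 k m))
      + ∑ i, x p (r4 k m i) * h (r4 k m i) (i5 k m i) * y (i5 k m i) (i7 k m) := by
  rw [Kmaster hg, hydiag]
  have e8 : ∑ j : Fin m, x p (r1 k m j) * h (r1 k m j) (i8 k m j) * y (i8 k m j) (i7 k m) = 0 :=
    Finset.sum_eq_zero (fun j _ => by
      rw [hylow (i8 k m j) _ (by
        have := j.isLt
        simp only [Fin.lt_def, i8_val, i7_val]; omega), mul_zero])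
  rw [e8]
  ring

lemma brkt1 (hxlow : ∀ p q : Fin (2*(k+m+2)), q < p → x p q = 0)
    (hylow : ∀ p q : Fin (2*(k+m+2)), q < p → y p q = 0)
    (hydiag : ∀ p, y p p = 1) (hyx : y * x = 1) (i : Fin k) :
    x (i3 k m) (r4 k m i) + ∑ t, y (i3 k m) (r4 k m t) * x (r4 k m t) (r4 k m i) = 0 := by
  have hiK := i.isLt
  have h0 : (y * x) (i3 k m) (r4 k m i) = 0 := by
    rw [hyx]
    exact Matrix.one_apply_ne (by
      intro hc; have h1 := congrArg Fin.val hc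
      simp only [i3_val, r4_val] at h1; omega)
  rw [Matrix.mul_apply] at h0
  rw [sum_one_fam _ (i3 k m) (r4 k m)
    (fun a b hab => by
      have h1 := congrArg Fin.val hab
      simp only [r4_val] at h1
      exact Fin.val_injective (by omega))
    (fun t => by
      intro hc; have h1 := congrArg Fin.val hc
      simp only [r4_val, i3_val] at h1; omega)
    (by
      intro u hu3 hu4
      show y (i3 k m) u * x u (r4 k m i) = 0
      have huN := u.isLt
      by_cases c1 : u.val < m+1
      · rw [hylow (i3 k m) u (by simp only [Fin.lt_def, i3_val]; omega), zero_mul]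
      by_cases c2 : u.val = m+1
      · exact absurd (Fin.val_injective (by simp only [i3_val]; omega) : u = i3 k m) hu3
      by_cases c3 : u.val < m+2+k
      · exact absurd (Fin.val_injective (by simp only [r4_val]; omega) :
          u = r4 k m ⟨u.val-(m+2), by omega⟩) (hu4 _)
      · rw [hxlow u (r4 k m i) (by simp only [Fin.lt_def, r4_val]; omega), mul_zero])] at h0
  rw [hydiag, one_mul] at h0
  exact h0

lemma brkt2 (hxlow : ∀ p q : Fin (2*(k+m+2)), q < p → x p q = 0)
    (hylow : ∀ p q : Fin (2*(k+m+2)), q < p → y p q = 0)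
    (hxdiag : ∀ p, x p p = 1) (hyx : y * x = 1) (i : Fin k) :
    y (i5 k m i) (i6 k m) + ∑ t, y (i5 k m i) (c5 k m t) * x (c5 k m t) (i6 k m) = 0 := by
  have hiK := i.isLt
  have h0 : (y * x) (i5 k m i) (i6 k m) = 0 := by
    rw [hyx]
    exact Matrix.one_apply_ne (by
      intro hc; have h1 := congrArg Fin.val hc
      simp only [i5_val, i6_val] at h1; omega)
  rw [Matrix.mul_apply] at h0
  rw [sum_one_fam _ (i6 k m) (c5 k m)
    (fun a b hab => by
      have h1 := congrArg Fin.val hab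
      simp only [c5_val] at h1
      exact Fin.val_injective (by omega))
    (fun t => by
      have := t.isLt
      intro hc; have h1 := congrArg Fin.val hc
      simp only [c5_val, i6_val] at h1; omega)
    (by
      intro u hu6 hu5
      show y (i5 k m i) u * x u (i6 k m) = 0
      have huN := u.isLt
      by_cases c1 : u.val < m+k+2
      · rw [hylow (i5 k m i) u (by simp only [Fin.lt_def, i5_val]; omega), zero_mul]
      by_cases c3 : u.val < m+2*k+2
      · exact absurd (Fin.val_injective (by simp only [c5_val]; omega) :
          u = c5 k m ⟨u.val-(m+k+2), by omega⟩) (hu5 _)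
      by_cases c2 : u.val = m+2*k+2
      · exact absurd (Fin.val_injective (by simp only [i6_val]; omega) : u = i6 k m) hu6
      · rw [hxlow u (i6 k m) (by simp only [Fin.lt_def, i6_val]; omega), mul_zero])] at h0
  rw [hxdiag, mul_one] at h0
  linarith [h0]

end PartB2
section PartB3

variable {k m : ℕ} {x y h : MS k m}

lemma G23 (hg : GoodH h) (hxdiag : ∀ p, x p p = 1)
    (hylow : ∀ p q : Fin (2*(k+m+2)), q < p → y p q = 0) (hydiag : ∀ p, y p p = 1)
    (hxy : x * y = 1) :
    (x * h * y) (i2 k m) (i3 k m) = h (i2 k m) (i3 k m) := by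
  rw [gentry hxy _ _ (by
    intro hc; have h1 := congrArg Fin.val hc; simp only [i2_val, i3_val] at h1; omega),
    K3 hg hylow hydiag, hxdiag, one_mul]

lemma G67 (hg : GoodH h) (hxlow : ∀ p q : Fin (2*(k+m+2)), q < p → x p q = 0)
    (hxdiag : ∀ p, x p p = 1)
    (hylow : ∀ p q : Fin (2*(k+m+2)), q < p → y p q = 0) (hydiag : ∀ p, y p p = 1)
    (hxy : x * y = 1) :
    (x * h * y) (i6 k m) (i7 k m) = h (i6 k m) (i7 k m) := by
  rw [gentry hxy _ _ (by
    intro hc; have h1 := congrArg Fin.val hc; simp only [i6_val, i7_val] at h1; omega),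
    K7 hg hylow hydiag,
    hxlow (i6 k m) (i2 k m) (by simp only [Fin.lt_def, i2_val, i6_val]; omega),
    hxlow (i6 k m) (i3 k m) (by simp only [Fin.lt_def, i3_val, i6_val]; omega),
    hxdiag]
  have e5 : ∑ i, x (i6 k m) (r4 k m i) * h (r4 k m i) (i5 k m i) * y (i5 k m i) (i7 k m) = 0 :=
    Finset.sum_eq_zero (fun i _ => by
      rw [hxlow (i6 k m) (r4 k m i) (by
        have := i.isLt
        simp only [Fin.lt_def, r4_val, i6_val]; omega)]
      ring)
  rw [e5]
  ring

lemma S01 (hg : GoodH h) (hylow : ∀ p q : Fin (2*(k+m+2)), q < p → y p q = 0)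
    (hxy : x * y = 1) (a b : Fin m) (hab : a < b) :
    (x * h * y) (r1 k m a) (r1 k m b) = 0 := by
  have hab' : a.val < b.val := hab
  have hbm := b.isLt
  rw [gentry hxy _ _ (by
    intro hc; have h1 := congrArg Fin.val hc; simp only [r1_val] at h1; omega)]
  exact K1 hg hylow _ _ (by simp only [r1_val]; omega)

lemma S12 (hg : GoodH h) (hylow : ∀ p q : Fin (2*(k+m+2)), q < p → y p q = 0)
    (hxy : x * y = 1) (a : Fin m) :
    (x * h * y) (r1 k m a) (i2 k m) = 0 := by
  have ham := a.isLt
  rw [gentry hxy _ _ (by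
    intro hc; have h1 := congrArg Fin.val hc; simp only [r1_val, i2_val] at h1; omega)]
  exact K1 hg hylow _ _ (by simp only [i2_val]; omega)

lemma S04 (hg : GoodH h) (hxlow : ∀ p q : Fin (2*(k+m+2)), q < p → x p q = 0)
    (hylow : ∀ p q : Fin (2*(k+m+2)), q < p → y p q = 0)
    (hxy : x * y = 1) (a b : Fin k) (hab : a < b) :
    (x * h * y) (r4 k m a) (r4 k m b) = 0 := by
  have hab' : a.val < b.val := hab
  rw [gentry hxy _ _ (by
    intro hc; have h1 := congrArg Fin.val hc; simp only [r4_val] at h1; omega),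
    K4 hg hylow,
    hxlow (r4 k m a) (i2 k m) (by simp only [Fin.lt_def, r4_val, i2_val]; omega)]
  ring

lemma S34 (hg : GoodH h) (hxlow : ∀ p q : Fin (2*(k+m+2)), q < p → x p q = 0)
    (hylow : ∀ p q : Fin (2*(k+m+2)), q < p → y p q = 0)
    (hxy : x * y = 1) (b : Fin k) :
    (x * h * y) (i3 k m) (r4 k m b) = 0 := by
  rw [gentry hxy _ _ (by
    intro hc; have h1 := congrArg Fin.val hc; simp only [i3_val, r4_val] at h1; omega),
    K4 hg hylow,
    hxlow (i3 k m) (i2 k m) (by simp only [Fin.lt_def, i3_val, i2_val]; omega)]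
  ring

lemma S05 (hg : GoodH h) (hxlow : ∀ p q : Fin (2*(k+m+2)), q < p → x p q = 0)
    (hylow : ∀ p q : Fin (2*(k+m+2)), q < p → y p q = 0)
    (hxy : x * y = 1) (a b : Fin k) (hab : a < b) :
    (x * h * y) (c5 k m a) (c5 k m b) = 0 := by
  have hab' : a.val < b.val := hab
  rw [gentry hxy _ _ (by
    intro hc; have h1 := congrArg Fin.val hc; simp only [c5_val] at h1; omega),
    K5 hg hylow,
    hxlow (c5 k m a) (i2 k m) (by simp only [Fin.lt_def, c5_val, i2_val]; omega)]
  have e5 : ∑ i, x (c5 k m a) (r4 k m i) * h (r4 k m i) (i5 k m i) * y (i5 k m i) (c5 k m b) = 0 :=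
    Finset.sum_eq_zero (fun i _ => by
      rw [hxlow (c5 k m a) (r4 k m i) (by
        have := i.isLt
        simp only [Fin.lt_def, r4_val, c5_val]; omega)]
      ring)
  rw [e5]
  ring

lemma S56 (hg : GoodH h) (hxlow : ∀ p q : Fin (2*(k+m+2)), q < p → x p q = 0)
    (hylow : ∀ p q : Fin (2*(k+m+2)), q < p → y p q = 0) (hydiag : ∀ p, y p p = 1)
    (hxy : x * y = 1) (a : Fin k) :
    (x * h * y) (c5 k m a) (i6 k m) = 0 := by
  have haK := a.isLt
  rw [gentry hxy _ _ (by
    intro hc; have h1 := congrArg Fin.val hc; simp only [c5_val, i6_val] at h1; omega),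
    K6 hg hylow hydiag,
    hxlow (c5 k m a) (i2 k m) (by simp only [Fin.lt_def, c5_val, i2_val]; omega)]
  have e5 : ∑ i, x (c5 k m a) (r4 k m i) * h (r4 k m i) (i5 k m i) * y (i5 k m i) (i6 k m) = 0 :=
    Finset.sum_eq_zero (fun i _ => by
      rw [hxlow (c5 k m a) (r4 k m i) (by
        have := i.isLt
        simp only [Fin.lt_def, r4_val, c5_val]; omega)]
      ring)
  rw [e5]
  ring

lemma S08 (hg : GoodH h) (hxlow : ∀ p q : Fin (2*(k+m+2)), q < p → x p q = 0)
    (hxy : x * y = 1) (a b : Fin m) (hab : a < b) :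
    (x * h * y) (c8 k m a) (c8 k m b) = 0 := by
  have hab' : a.val < b.val := hab
  rw [gentry hxy _ _ (by
    intro hc; have h1 := congrArg Fin.val hc; simp only [c8_val] at h1; omega),
    Kmaster hg,
    hxlow (c8 k m a) (i2 k m) (by simp only [Fin.lt_def, c8_val, i2_val]; omega),
    hxlow (c8 k m a) (i3 k m) (by simp only [Fin.lt_def, c8_val, i3_val]; omega),
    hxlow (c8 k m a) (i6 k m) (by simp only [Fin.lt_def, c8_val, i6_val]; omega)]
  have e5 : ∑ i, x (c8 k m a) (r4 k m i) * h (r4 k m i) (i5 k m i) * y (i5 k m i) (c8 k m b) = 0 :=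
    Finset.sum_eq_zero (fun i _ => by
      rw [hxlow (c8 k m a) (r4 k m i) (by
        have := i.isLt
        simp only [Fin.lt_def, r4_val, c8_val]; omega)]
      ring)
  have e8 : ∑ j, x (c8 k m a) (r1 k m j) * h (r1 k m j) (i8 k m j) * y (i8 k m j) (c8 k m b) = 0 :=
    Finset.sum_eq_zero (fun j _ => by
      rw [hxlow (c8 k m a) (r1 k m j) (by
        have := j.isLt
        simp only [Fin.lt_def, r1_val, c8_val]; omega)]
      ring)
  rw [e5, e8]
  ring

lemma S78 (hg : GoodH h) (hxlow : ∀ p q : Fin (2*(k+m+2)), q < p → x p q = 0)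
    (hxy : x * y = 1) (b : Fin m) :
    (x * h * y) (i7 k m) (c8 k m b) = 0 := by
  rw [gentry hxy _ _ (by
    intro hc; have h1 := congrArg Fin.val hc; simp only [i7_val, c8_val] at h1; omega),
    Kmaster hg,
    hxlow (i7 k m) (i2 k m) (by simp only [Fin.lt_def, i7_val, i2_val]; omega),
    hxlow (i7 k m) (i3 k m) (by simp only [Fin.lt_def, i7_val, i3_val]; omega),
    hxlow (i7 k m) (i6 k m) (by simp only [Fin.lt_def, i7_val, i6_val]; omega)]
  have e5 : ∑ i, x (i7 k m) (r4 k m i) * h (r4 k m i) (i5 k m i) * y (i5 k m i) (c8 k m b) = 0 :=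
    Finset.sum_eq_zero (fun i _ => by
      rw [hxlow (i7 k m) (r4 k m i) (by
        have := i.isLt
        simp only [Fin.lt_def, r4_val, i7_val]; omega)]
      ring)
  have e8 : ∑ j, x (i7 k m) (r1 k m j) * h (r1 k m j) (i8 k m j) * y (i8 k m j) (c8 k m b) = 0 :=
    Finset.sum_eq_zero (fun j _ => by
      rw [hxlow (i7 k m) (r1 k m j) (by
        have := j.isLt
        simp only [Fin.lt_def, r1_val, i7_val]; omega)]
      ring)
  rw [e5, e8]
  ring

lemma S2c {γ₁ γ₂ : ℝ} (hg : GoodH h)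
    (hxlow : ∀ p q : Fin (2*(k+m+2)), q < p → x p q = 0) (hxdiag : ∀ p, x p p = 1)
    (hylow : ∀ p q : Fin (2*(k+m+2)), q < p → y p q = 0) (hydiag : ∀ p, y p p = 1)
    (hxy : x * y = 1)
    (hrel : γ₁ * h (i2 k m) (i3 k m) = γ₂ * h (i6 k m) (i7 k m)) :
    γ₁ * (x * h * y) (i2 k m) (i3 k m) - γ₂ * (x * h * y) (i6 k m) (i7 k m) = 0 := by
  rw [G23 hg hxdiag hylow hydiag hxy, G67 hg hxlow hxdiag hylow hydiag hxy]
  linarith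

lemma S14 (hg : GoodH h)
    (hxlow : ∀ p q : Fin (2*(k+m+2)), q < p → x p q = 0) (hxdiag : ∀ p, x p p = 1)
    (hylow : ∀ p q : Fin (2*(k+m+2)), q < p → y p q = 0) (hydiag : ∀ p, y p p = 1)
    (hxy : x * y = 1) (a : Fin m) (b : Fin k) :
    -((x * h * y).submatrix ![r1 k m a, i2 k m] ![i3 k m, r4 k m b]).det
      / (x * h * y) (i2 k m) (i3 k m) = 0 := by
  have ham := a.isLt
  have e13 : (x * h * y) (r1 k m a) (i3 k m) = x (r1 k m a) (i2 k m) * h (i2 k m) (i3 k m) := by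
    rw [gentry hxy _ _ (by
      intro hc; have h1 := congrArg Fin.val hc; simp only [r1_val, i3_val] at h1; omega),
      K3 hg hylow hydiag]
  have e14 : (x * h * y) (r1 k m a) (r4 k m b)
      = x (r1 k m a) (i2 k m) * h (i2 k m) (i3 k m) * y (i3 k m) (r4 k m b) := by
    rw [gentry hxy _ _ (by
      intro hc; have h1 := congrArg Fin.val hc; simp only [r1_val, r4_val] at h1; omega),
      K4 hg hylow]
  have e24 : (x * h * y) (i2 k m) (r4 k m b)
      = h (i2 k m) (i3 k m) * y (i3 k m) (r4 k m b) := by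
    rw [gentry hxy _ _ (by
      intro hc; have h1 := congrArg Fin.val hc; simp only [i2_val, r4_val] at h1; omega),
      K4 hg hylow, hxdiag]
    ring
  have hdet : ((x * h * y).submatrix ![r1 k m a, i2 k m] ![i3 k m, r4 k m b]).det = 0 := by
    rw [Matrix.det_fin_two]
    simp only [Matrix.submatrix_apply, Matrix.cons_val_zero, Matrix.cons_val_one,
      Matrix.head_cons]
    rw [e13, e14, e24, G23 hg hxdiag hylow hydiag hxy]
    ring
  rw [hdet, neg_zero, zero_div]

lemma S58 (hg : GoodH h)
    (hxlow : ∀ p q : Fin (2*(k+m+2)), q < p → x p q = 0) (hxdiag : ∀ p, x p p = 1)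
    (hylow : ∀ p q : Fin (2*(k+m+2)), q < p → y p q = 0) (hydiag : ∀ p, y p p = 1)
    (hxy : x * y = 1) (a : Fin k) (b : Fin m) :
    -((x * h * y).submatrix ![c5 k m a, i6 k m] ![i7 k m, c8 k m b]).det
      / (x * h * y) (i6 k m) (i7 k m) = 0 := by
  have haK := a.isLt
  have e57 : (x * h * y) (c5 k m a) (i7 k m)
      = x (c5 k m a) (i6 k m) * h (i6 k m) (i7 k m) := by
    rw [gentry hxy _ _ (by
      intro hc; have h1 := congrArg Fin.val hc; simp only [c5_val, i7_val] at h1; omega),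
      K7 hg hylow hydiag,
      hxlow (c5 k m a) (i2 k m) (by simp only [Fin.lt_def, c5_val, i2_val]; omega),
      hxlow (c5 k m a) (i3 k m) (by simp only [Fin.lt_def, c5_val, i3_val]; omega)]
    have e5 : ∑ i, x (c5 k m a) (r4 k m i) * h (r4 k m i) (i5 k m i) * y (i5 k m i) (i7 k m) = 0 :=
      Finset.sum_eq_zero (fun i _ => by
        rw [hxlow (c5 k m a) (r4 k m i) (by
          have := i.isLt
          simp only [Fin.lt_def, r4_val, c5_val]; omega)]
        ring)
    rw [e5]
    ring
  have e58 : (x * h * y) (c5 k m a) (c8 k m b)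
      = x (c5 k m a) (i6 k m) * h (i6 k m) (i7 k m) * y (i7 k m) (c8 k m b) := by
    rw [gentry hxy _ _ (by
      intro hc; have h1 := congrArg Fin.val hc; simp only [c5_val, c8_val] at h1; omega),
      Kmaster hg,
      hxlow (c5 k m a) (i2 k m) (by simp only [Fin.lt_def, c5_val, i2_val]; omega),
      hxlow (c5 k m a) (i3 k m) (by simp only [Fin.lt_def, c5_val, i3_val]; omega)]
    have e5 : ∑ i, x (c5 k m a) (r4 k m i) * h (r4 k m i) (i5 k m i) * y (i5 k m i) (c8 k m b) = 0 :=
      Finset.sum_eq_zero (fun i _ => by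
        rw [hxlow (c5 k m a) (r4 k m i) (by
          have := i.isLt
          simp only [Fin.lt_def, r4_val, c5_val]; omega)]
        ring)
    have e8 : ∑ j, x (c5 k m a) (r1 k m j) * h (r1 k m j) (i8 k m j) * y (i8 k m j) (c8 k m b) = 0 :=
      Finset.sum_eq_zero (fun j _ => by
        rw [hxlow (c5 k m a) (r1 k m j) (by
          have := j.isLt
          simp only [Fin.lt_def, r1_val, c5_val]; omega)]
        ring)
    rw [e5, e8]
    ring
  have e68 : (x * h * y) (i6 k m) (c8 k m b)
      = h (i6 k m) (i7 k m) * y (i7 k m) (c8 k m b) := by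
    rw [gentry hxy _ _ (by
      intro hc; have h1 := congrArg Fin.val hc; simp only [i6_val, c8_val] at h1; omega),
      Kmaster hg,
      hxlow (i6 k m) (i2 k m) (by simp only [Fin.lt_def, i6_val, i2_val]; omega),
      hxlow (i6 k m) (i3 k m) (by simp only [Fin.lt_def, i6_val, i3_val]; omega),
      hxdiag]
    have e5 : ∑ i, x (i6 k m) (r4 k m i) * h (r4 k m i) (i5 k m i) * y (i5 k m i) (c8 k m b) = 0 :=
      Finset.sum_eq_zero (fun i _ => by
        rw [hxlow (i6 k m) (r4 k m i) (by
          have := i.isLt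
          simp only [Fin.lt_def, r4_val, i6_val]; omega)]
        ring)
    have e8 : ∑ j, x (i6 k m) (r1 k m j) * h (r1 k m j) (i8 k m j) * y (i8 k m j) (c8 k m b) = 0 :=
      Finset.sum_eq_zero (fun j _ => by
        rw [hxlow (i6 k m) (r1 k m j) (by
          have := j.isLt
          simp only [Fin.lt_def, r1_val, i6_val]; omega)]
        ring)
    rw [e5, e8]
    ring
  have hdet : ((x * h * y).submatrix ![c5 k m a, i6 k m] ![i7 k m, c8 k m b]).det = 0 := by
    rw [Matrix.det_fin_two]
    simp only [Matrix.submatrix_apply, Matrix.cons_val_zero, Matrix.cons_val_one,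
      Matrix.head_cons]
    rw [e57, e58, e68, G67 hg hxlow hxdiag hylow hydiag hxy]
    ring
  rw [hdet, neg_zero, zero_div]

end PartB3
section PartB4

variable {k m : ℕ} {x y h : MS k m}

set_option maxHeartbeats 1000000 in
lemma S2a (hg : GoodH h)
    (hxlow : ∀ p q : Fin (2*(k+m+2)), q < p → x p q = 0) (hxdiag : ∀ p, x p p = 1)
    (hylow : ∀ p q : Fin (2*(k+m+2)), q < p → y p q = 0) (hydiag : ∀ p, y p p = 1)
    (hxy : x * y = 1) (hyx : y * x = 1) (b : Fin k) :
    (x * h * y) (i2 k m) (i3 k m) * (x * h * y) (i3 k m) (c5 k m b)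
      + ∑ t, (x * h * y) (i2 k m) (r4 k m t) * (x * h * y) (r4 k m t) (c5 k m b) = 0 := by
  have hbK := b.isLt
  have e35 : (x * h * y) (i3 k m) (c5 k m b)
      = ∑ i, x (i3 k m) (r4 k m i) * h (r4 k m i) (i5 k m i) * y (i5 k m i) (c5 k m b) := by
    rw [gentry hxy _ _ (by
      intro hc; have h1 := congrArg Fin.val hc; simp only [i3_val, c5_val] at h1; omega),
      K5 hg hylow,
      hxlow (i3 k m) (i2 k m) (by simp only [Fin.lt_def, i3_val, i2_val]; omega)]
    ring
  have e24 : ∀ t : Fin k, (x * h * y) (i2 k m) (r4 k m t)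
      = h (i2 k m) (i3 k m) * y (i3 k m) (r4 k m t) := by
    intro t
    rw [gentry hxy _ _ (by
      intro hc; have h1 := congrArg Fin.val hc; simp only [i2_val, r4_val] at h1; omega),
      K4 hg hylow, hxdiag]
    ring
  have e45 : ∀ t : Fin k, (x * h * y) (r4 k m t) (c5 k m b)
      = ∑ i, x (r4 k m t) (r4 k m i) * h (r4 k m i) (i5 k m i) * y (i5 k m i) (c5 k m b) := by
    intro t
    have htK := t.isLt
    rw [gentry hxy _ _ (by
      intro hc; have h1 := congrArg Fin.val hc; simp only [r4_val, c5_val] at h1; omega),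
      K5 hg hylow,
      hxlow (r4 k m t) (i2 k m) (by simp only [Fin.lt_def, r4_val, i2_val]; omega)]
    ring
  have esum : ∑ t, (x * h * y) (i2 k m) (r4 k m t) * (x * h * y) (r4 k m t) (c5 k m b)
      = ∑ t, h (i2 k m) (i3 k m) * y (i3 k m) (r4 k m t)
        * ∑ i, x (r4 k m t) (r4 k m i) * h (r4 k m i) (i5 k m i) * y (i5 k m i) (c5 k m b) :=
    Finset.sum_congr rfl (fun t _ => by rw [e24 t, e45 t])
  rw [G23 hg hxdiag hylow hydiag hxy, e35, esum]
  have swap : ∑ t, h (i2 k m) (i3 k m) * y (i3 k m) (r4 k m t)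
        * ∑ i, x (r4 k m t) (r4 k m i) * h (r4 k m i) (i5 k m i) * y (i5 k m i) (c5 k m b)
      = ∑ i, (h (i2 k m) (i3 k m) * (h (r4 k m i) (i5 k m i) * y (i5 k m i) (c5 k m b)))
        * ∑ t, y (i3 k m) (r4 k m t) * x (r4 k m t) (r4 k m i) := by
    calc ∑ t, h (i2 k m) (i3 k m) * y (i3 k m) (r4 k m t)
          * ∑ i, x (r4 k m t) (r4 k m i) * h (r4 k m i) (i5 k m i) * y (i5 k m i) (c5 k m b)
        = ∑ t, ∑ i, h (i2 k m) (i3 k m) * y (i3 k m) (r4 k m t)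
          * (x (r4 k m t) (r4 k m i) * h (r4 k m i) (i5 k m i) * y (i5 k m i) (c5 k m b)) :=
          Finset.sum_congr rfl (fun t _ => Finset.mul_sum _ _ _)
      _ = ∑ i, ∑ t, h (i2 k m) (i3 k m) * y (i3 k m) (r4 k m t)
          * (x (r4 k m t) (r4 k m i) * h (r4 k m i) (i5 k m i) * y (i5 k m i) (c5 k m b)) :=
          Finset.sum_comm
      _ = ∑ i, (h (i2 k m) (i3 k m) * (h (r4 k m i) (i5 k m i) * y (i5 k m i) (c5 k m b)))
          * ∑ t, y (i3 k m) (r4 k m t) * x (r4 k m t) (r4 k m i) := by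
          refine Finset.sum_congr rfl (fun i _ => ?_)
          rw [Finset.mul_sum]
          exact Finset.sum_congr rfl (fun t _ => by ring)
  have emul : h (i2 k m) (i3 k m)
      * ∑ i, x (i3 k m) (r4 k m i) * h (r4 k m i) (i5 k m i) * y (i5 k m i) (c5 k m b)
      = ∑ i, h (i2 k m) (i3 k m)
        * (x (i3 k m) (r4 k m i) * h (r4 k m i) (i5 k m i) * y (i5 k m i) (c5 k m b)) :=
    Finset.mul_sum _ _ _
  rw [swap, emul, ← Finset.sum_add_distrib]
  apply Finset.sum_eq_zero
  intro i _
  have hb := brkt1 hxlow hylow hydiag hyx i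
  linear_combination (h (i2 k m) (i3 k m) * (h (r4 k m i) (i5 k m i)
    * y (i5 k m i) (c5 k m b))) * hb

set_option maxHeartbeats 1000000 in
lemma S2b (hg : GoodH h)
    (hxlow : ∀ p q : Fin (2*(k+m+2)), q < p → x p q = 0) (hxdiag : ∀ p, x p p = 1)
    (hylow : ∀ p q : Fin (2*(k+m+2)), q < p → y p q = 0) (hydiag : ∀ p, y p p = 1)
    (hxy : x * y = 1) (hyx : y * x = 1) (a : Fin k) :
    (∑ t, (x * h * y) (r4 k m a) (c5 k m t) * (x * h * y) (c5 k m t) (i7 k m))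
      + (x * h * y) (r4 k m a) (i6 k m) * (x * h * y) (i6 k m) (i7 k m) = 0 := by
  have haK := a.isLt
  have e45 : ∀ t : Fin k, (x * h * y) (r4 k m a) (c5 k m t)
      = ∑ i, x (r4 k m a) (r4 k m i) * h (r4 k m i) (i5 k m i) * y (i5 k m i) (c5 k m t) := by
    intro t
    rw [gentry hxy _ _ (by
      intro hc; have h1 := congrArg Fin.val hc; simp only [r4_val, c5_val] at h1; omega),
      K5 hg hylow,
      hxlow (r4 k m a) (i2 k m) (by simp only [Fin.lt_def, r4_val, i2_val]; omega)]
    ring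
  have e57 : ∀ t : Fin k, (x * h * y) (c5 k m t) (i7 k m)
      = x (c5 k m t) (i6 k m) * h (i6 k m) (i7 k m) := by
    intro t
    have htK := t.isLt
    rw [gentry hxy _ _ (by
      intro hc; have h1 := congrArg Fin.val hc; simp only [c5_val, i7_val] at h1; omega),
      K7 hg hylow hydiag,
      hxlow (c5 k m t) (i2 k m) (by simp only [Fin.lt_def, c5_val, i2_val]; omega),
      hxlow (c5 k m t) (i3 k m) (by simp only [Fin.lt_def, c5_val, i3_val]; omega)]
    have e5 : ∑ i, x (c5 k m t) (r4 k m i) * h (r4 k m i) (i5 k m i) * y (i5 k m i) (i7 k m) = 0 :=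
      Finset.sum_eq_zero (fun i _ => by
        rw [hxlow (c5 k m t) (r4 k m i) (by
          have := i.isLt
          simp only [Fin.lt_def, r4_val, c5_val]; omega)]
        ring)
    rw [e5]
    ring
  have e46 : (x * h * y) (r4 k m a) (i6 k m)
      = ∑ i, x (r4 k m a) (r4 k m i) * h (r4 k m i) (i5 k m i) * y (i5 k m i) (i6 k m) := by
    rw [gentry hxy _ _ (by
      intro hc; have h1 := congrArg Fin.val hc; simp only [r4_val, i6_val] at h1; omega),
      K6 hg hylow hydiag,
      hxlow (r4 k m a) (i2 k m) (by simp only [Fin.lt_def, r4_val, i2_val]; omega)]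
    ring
  have esum : ∑ t, (x * h * y) (r4 k m a) (c5 k m t) * (x * h * y) (c5 k m t) (i7 k m)
      = ∑ t, (∑ i, x (r4 k m a) (r4 k m i) * h (r4 k m i) (i5 k m i) * y (i5 k m i) (c5 k m t))
        * (x (c5 k m t) (i6 k m) * h (i6 k m) (i7 k m)) :=
    Finset.sum_congr rfl (fun t _ => by rw [e45 t, e57 t])
  rw [e46, G67 hg hxlow hxdiag hylow hydiag hxy, esum]
  have swap : ∑ t, (∑ i, x (r4 k m a) (r4 k m i) * h (r4 k m i) (i5 k m i)
        * y (i5 k m i) (c5 k m t)) * (x (c5 k m t) (i6 k m) * h (i6 k m) (i7 k m))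
      = ∑ i, (x (r4 k m a) (r4 k m i) * h (r4 k m i) (i5 k m i) * h (i6 k m) (i7 k m))
        * ∑ t, y (i5 k m i) (c5 k m t) * x (c5 k m t) (i6 k m) := by
    calc ∑ t, (∑ i, x (r4 k m a) (r4 k m i) * h (r4 k m i) (i5 k m i)
          * y (i5 k m i) (c5 k m t)) * (x (c5 k m t) (i6 k m) * h (i6 k m) (i7 k m))
        = ∑ t, ∑ i, x (r4 k m a) (r4 k m i) * h (r4 k m i) (i5 k m i)
          * y (i5 k m i) (c5 k m t) * (x (c5 k m t) (i6 k m) * h (i6 k m) (i7 k m)) :=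
          Finset.sum_congr rfl (fun t _ => Finset.sum_mul _ _ _)
      _ = ∑ i, ∑ t, x (r4 k m a) (r4 k m i) * h (r4 k m i) (i5 k m i)
          * y (i5 k m i) (c5 k m t) * (x (c5 k m t) (i6 k m) * h (i6 k m) (i7 k m)) :=
          Finset.sum_comm
      _ = ∑ i, (x (r4 k m a) (r4 k m i) * h (r4 k m i) (i5 k m i) * h (i6 k m) (i7 k m))
          * ∑ t, y (i5 k m i) (c5 k m t) * x (c5 k m t) (i6 k m) := by
          refine Finset.sum_congr rfl (fun i _ => ?_)
          rw [Finset.mul_sum]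
          exact Finset.sum_congr rfl (fun t _ => by ring)
  have emul : (∑ i, x (r4 k m a) (r4 k m i) * h (r4 k m i) (i5 k m i) * y (i5 k m i) (i6 k m))
      * h (i6 k m) (i7 k m)
      = ∑ i, x (r4 k m a) (r4 k m i) * h (r4 k m i) (i5 k m i) * y (i5 k m i) (i6 k m)
        * h (i6 k m) (i7 k m) :=
    Finset.sum_mul _ _ _
  rw [swap, emul, ← Finset.sum_add_distrib]
  apply Finset.sum_eq_zero
  intro i _
  have hb := brkt2 hxlow hylow hxdiag hyx i
  linear_combination (x (r4 k m a) (r4 k m i) * h (r4 k m i) (i5 k m i)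
    * h (i6 k m) (i7 k m)) * hb

set_option maxHeartbeats 1000000 in
lemma S36det (hg : GoodH h)
    (hxlow : ∀ p q : Fin (2*(k+m+2)), q < p → x p q = 0)
    (hylow : ∀ p q : Fin (2*(k+m+2)), q < p → y p q = 0) (hydiag : ∀ p, y p p = 1)
    (hxy : x * y = 1) :
    ((x * h * y).submatrix (Fin.cons (i3 k m) (r4 k m))
      (Fin.snoc (c5 k m) (i6 k m))).det = 0 := by
  apply det_factor (Nat.lt_succ_self k)
    (fun p' t => x ((Fin.cons (i3 k m) (r4 k m) : Fin (k+1) → Fin (2*(k+m+2))) p') (r4 k m t) * h (r4 k m t) (i5 k m t))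
    (fun t q' => y (i5 k m t) ((Fin.snoc (c5 k m) (i6 k m) : Fin (k+1) → Fin (2*(k+m+2))) q'))
  intro p' q'
  rw [Matrix.submatrix_apply]
  have hrow : m+1 ≤ ((Fin.cons (i3 k m) (r4 k m) : Fin (k+1) → Fin (2*(k+m+2))) p').val ∧
      ((Fin.cons (i3 k m) (r4 k m) : Fin (k+1) → Fin (2*(k+m+2))) p').val ≤ m+k+1 := by
    refine Fin.cases ?_ ?_ p'
    · simp only [Fin.cons_zero, i3_val]; omega
    · intro i; have := i.isLt; simp only [Fin.cons_succ, r4_val]; omega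
  refine Fin.lastCases ?_ ?_ q'
  · simp only [Fin.snoc_last]
    rw [gentry hxy _ _ (by
      intro hc; have h1 := congrArg Fin.val hc; simp only [i6_val] at h1; omega),
      K6 hg hylow hydiag,
      hxlow _ (i2 k m) (by simp only [Fin.lt_def, i2_val]; omega)]
    ring
  · intro j
    have hjK := j.isLt
    simp only [Fin.snoc_castSucc]
    rw [gentry hxy _ _ (by
      intro hc; have h1 := congrArg Fin.val hc; simp only [c5_val] at h1; omega),
      K5 hg hylow,
      hxlow _ (i2 k m) (by simp only [Fin.lt_def, i2_val]; omega)]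
    ring

set_option maxHeartbeats 1000000 in
lemma S16det (hg : GoodH h)
    (hxlow : ∀ p q : Fin (2*(k+m+2)), q < p → x p q = 0)
    (hylow : ∀ p q : Fin (2*(k+m+2)), q < p → y p q = 0) (hydiag : ∀ p, y p p = 1)
    (hxy : x * y = 1) (a : Fin m) :
    ((x * h * y).submatrix (Fin.cons (r1 k m a) (Fin.cons (i2 k m) (r4 k m)))
      (Fin.snoc (Fin.cons (i3 k m) (c5 k m)) (i6 k m))).det = 0 := by
  apply det_factor (Nat.lt_succ_self (k+1))
    (fun p' t => (Fin.cases (x ((Fin.cons (r1 k m a) (Fin.cons (i2 k m) (r4 k m)) : Fin (k+2) → Fin (2*(k+m+2))) p') (i2 k m))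
      (fun i => x ((Fin.cons (r1 k m a) (Fin.cons (i2 k m) (r4 k m)) : Fin (k+2) → Fin (2*(k+m+2))) p') (r4 k m i)
        * h (r4 k m i) (i5 k m i)) t : ℝ))
    (fun t q' => (Fin.cases
      (h (i2 k m) (i3 k m) * y (i3 k m) ((Fin.snoc (Fin.cons (i3 k m) (c5 k m)) (i6 k m) : Fin (k+2) → Fin (2*(k+m+2))) q')
        + if q' = Fin.last (k+1) then h (i2 k m) (i6 k m) else 0)
      (fun i => y (i5 k m i) ((Fin.snoc (Fin.cons (i3 k m) (c5 k m)) (i6 k m) : Fin (k+2) → Fin (2*(k+m+2))) q')) t : ℝ))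
  intro p' q'
  rw [Matrix.submatrix_apply, Fin.sum_univ_succ]
  simp only [Fin.cases_zero, Fin.cases_succ]
  have ham := a.isLt
  have hrow : ((Fin.cons (r1 k m a) (Fin.cons (i2 k m) (r4 k m)) : Fin (k+2) → Fin (2*(k+m+2))) p').val ≤ m+k+1 ∧
      ((Fin.cons (r1 k m a) (Fin.cons (i2 k m) (r4 k m)) : Fin (k+2) → Fin (2*(k+m+2))) p').val ≠ m+1 := by
    refine Fin.cases ?_ ?_ p'
    · simp only [Fin.cons_zero, r1_val]; omega
    · intro p''
      refine Fin.cases ?_ ?_ p''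
      · simp only [Fin.cons_succ, Fin.cons_zero, i2_val]; omega
      · intro i; have := i.isLt; simp only [Fin.cons_succ, r4_val]; omega
  refine Fin.lastCases ?_ ?_ q'
  · simp only [Fin.snoc_last, if_pos rfl, eq_self_iff_true, if_true]
    rw [gentry hxy _ _ (by
      intro hc; have h1 := congrArg Fin.val hc; simp only [i6_val] at h1; omega),
      K6 hg hylow hydiag]
    ring
  · intro j
    simp only [Fin.snoc_castSucc, if_neg ((Fin.castSucc_lt_last j).ne)]
    refine Fin.cases ?_ ?_ j
    · simp only [Fin.cons_zero]
      rw [gentry hxy _ _ (by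
        intro hc; have h1 := congrArg Fin.val hc; simp only [i3_val] at h1; omega),
        K3 hg hylow hydiag, hydiag]
      have e5 : ∑ i, x ((Fin.cons (r1 k m a) (Fin.cons (i2 k m) (r4 k m)) : Fin (k+2) → Fin (2*(k+m+2))) p') (r4 k m i)
          * h (r4 k m i) (i5 k m i) * y (i5 k m i) (i3 k m) = 0 :=
        Finset.sum_eq_zero (fun i _ => by
          rw [hylow (i5 k m i) (i3 k m) (by
            have := i.isLt
            simp only [Fin.lt_def, i5_val, i3_val]; omega)]
          ring)
      rw [e5]
      ring
    · intro jj
      have hjjK := jj.isLt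
      simp only [Fin.cons_succ]
      rw [gentry hxy _ _ (by
        intro hc; have h1 := congrArg Fin.val hc; simp only [c5_val] at h1; omega),
        K5 hg hylow]
      ring

set_option maxHeartbeats 1000000 in
lemma S38det (hg : GoodH h)
    (hxlow : ∀ p q : Fin (2*(k+m+2)), q < p → x p q = 0)
    (hylow : ∀ p q : Fin (2*(k+m+2)), q < p → y p q = 0) (hydiag : ∀ p, y p p = 1)
    (hxy : x * y = 1) (b : Fin m) :
    ((x * h * y).submatrix (Fin.cons (i3 k m) (Fin.snoc (r4 k m) (i6 k m)))
      (Fin.snoc (Fin.snoc (c5 k m) (i7 k m)) (c8 k m b))).det = 0 := by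
  apply det_factor (Nat.lt_succ_self (k+1))
    (fun p' t => (Fin.lastCases
      (x ((Fin.cons (i3 k m) (Fin.snoc (r4 k m) (i6 k m)) : Fin (k+2) → Fin (2*(k+m+2))) p') (i6 k m) * h (i6 k m) (i7 k m)
        + x ((Fin.cons (i3 k m) (Fin.snoc (r4 k m) (i6 k m)) : Fin (k+2) → Fin (2*(k+m+2))) p') (i3 k m) * h (i3 k m) (i7 k m))
      (fun i => x ((Fin.cons (i3 k m) (Fin.snoc (r4 k m) (i6 k m)) : Fin (k+2) → Fin (2*(k+m+2))) p') (r4 k m i)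
        * h (r4 k m i) (i5 k m i)) t : ℝ))
    (fun t q' => (Fin.lastCases
      (y (i7 k m) ((Fin.snoc (Fin.snoc (c5 k m) (i7 k m)) (c8 k m b) : Fin (k+2) → Fin (2*(k+m+2))) q'))
      (fun i => y (i5 k m i) ((Fin.snoc (Fin.snoc (c5 k m) (i7 k m)) (c8 k m b) : Fin (k+2) → Fin (2*(k+m+2))) q')) t : ℝ))
  intro p' q'
  rw [Matrix.submatrix_apply, Fin.sum_univ_castSucc]
  simp only [Fin.lastCases_castSucc, Fin.lastCases_last]
  have hbm := b.isLt
  have hrow : m+1 ≤ ((Fin.cons (i3 k m) (Fin.snoc (r4 k m) (i6 k m)) : Fin (k+2) → Fin (2*(k+m+2))) p').val ∧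
      (((Fin.cons (i3 k m) (Fin.snoc (r4 k m) (i6 k m)) : Fin (k+2) → Fin (2*(k+m+2))) p').val ≤ m+k+1 ∨
        ((Fin.cons (i3 k m) (Fin.snoc (r4 k m) (i6 k m)) : Fin (k+2) → Fin (2*(k+m+2))) p').val = m+2*k+2) := by
    refine Fin.cases ?_ ?_ p'
    · simp only [Fin.cons_zero, i3_val]; omega
    · intro p''
      refine Fin.lastCases ?_ ?_ p''
      · simp only [Fin.cons_succ, Fin.snoc_last, i6_val]
        exact ⟨by omega, Or.inr (by trivial)⟩
      · intro i; have := i.isLt; simp only [Fin.cons_succ, Fin.snoc_castSucc, r4_val]; omega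
  refine Fin.lastCases ?_ ?_ q'
  · -- column c8 b
    simp only [Fin.snoc_last]
    rw [gentry hxy _ _ (by
      intro hc; have h1 := congrArg Fin.val hc; simp only [c8_val] at h1; omega),
      Kmaster hg,
      hxlow _ (i2 k m) (by simp only [Fin.lt_def, i2_val]; omega)]
    have e8 : ∑ j, x ((Fin.cons (i3 k m) (Fin.snoc (r4 k m) (i6 k m)) : Fin (k+2) → Fin (2*(k+m+2))) p') (r1 k m j)
        * h (r1 k m j) (i8 k m j) * y (i8 k m j) (c8 k m b) = 0 :=
      Finset.sum_eq_zero (fun j _ => by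
        rw [hxlow _ (r1 k m j) (by
          have := j.isLt
          simp only [Fin.lt_def, r1_val]; omega)]
        ring)
    rw [e8]
    ring
  · intro q''
    simp only [Fin.snoc_castSucc]
    refine Fin.lastCases ?_ ?_ q''
    · -- column i7
      simp only [Fin.snoc_last]
      rw [gentry hxy _ _ (by
        intro hc; have h1 := congrArg Fin.val hc; simp only [i7_val] at h1; omega),
        K7 hg hylow hydiag,
        hxlow _ (i2 k m) (by simp only [Fin.lt_def, i2_val]; omega),
        hydiag]
      ring
    · intro jj
      have hjjK := jj.isLt
      simp only [Fin.snoc_castSucc]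
      rw [gentry hxy _ _ (by
        intro hc; have h1 := congrArg Fin.val hc; simp only [c5_val] at h1; omega),
        K5 hg hylow,
        hxlow _ (i2 k m) (by simp only [Fin.lt_def, i2_val]; omega),
        hylow (i7 k m) (c5 k m jj) (by simp only [Fin.lt_def, i7_val, c5_val]; omega)]
      ring

end PartB4
set_option maxHeartbeats 1000000 in
/-- Proposition (even case), inclusion part: every point of `Ad_G(G^f)` at which
`d` does not vanish annihilates all functions of `S`. -/
theorem orbit_subset_annihilator_even (k m : ℕ) (hk : 1 ≤ k) (hm : 1 ≤ m)
    (lam : Fin k → ℝ) (hlam : ∀ i : Fin k, i.val + 1 < k → lam i ≠ 0)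
    (mu : Fin m → ℝ) (hmu : ∀ j : Fin m, mu j ≠ 0)
    (γ₁ γ₂ γ₃ : ℝ) (hγ₁ : γ₁ ≠ 0) (hγ₂ : γ₂ ≠ 0) :
    ∀ x h : MS k m, IsUnitriangular x →
      h ∈ grpStab (Feven k m lam mu γ₁ γ₂ γ₃) →
      dEven k m (x * h * x⁻¹) ≠ 0 →
      ∀ φ ∈ SEven k m γ₁ γ₂, φ (x * h * x⁻¹) = 0 := by
  intro x h hx hh hd φ hφ
  obtain ⟨hylow, hydiag, hxy, hyx⟩ := inv_unitriangular hx
  obtain ⟨hxlow, hxdiag⟩ := hx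
  have heq := stab_linear hh
  have hhlow := hh.1.1
  have hhdiag := hh.1.2
  have hg : GoodH h := ⟨hhdiag,
    NcolA hhlow heq hmu,
    NcolB hhlow heq hmu,
    NcolC hhlow heq hlam hmu hγ₁ hγ₂,
    NcolD hhlow heq hlam hmu hγ₁ hγ₂,
    NcolE hhlow hhdiag heq hlam hmu hγ₁ hγ₂,
    NcolF hhlow heq hlam hmu hγ₁ hγ₂,
    NcolG hhlow heq hlam hmu hγ₁ hγ₂⟩
  have hrel := Nrel heq
  simp only [SEven, Set.mem_union, Set.mem_setOf_eq, Set.mem_range,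
    Set.mem_singleton_iff, Prod.exists] at hφ
  rcases hφ with ((((((((((((((hc | hc) | hc) | hc) | hc) | hc) | hc) | hc) | hc) | hc)
      | hc) | hc) | hc) | hc) | hc) | hc
  · obtain ⟨a, b, hab, rfl⟩ := hc
    exact S01 hg hylow hxy a b hab
  · obtain ⟨a, b, hab, rfl⟩ := hc
    exact S04 hg hxlow hylow hxy a b hab
  · obtain ⟨a, b, hab, rfl⟩ := hc
    exact S05 hg hxlow hylow hxy a b hab
  · obtain ⟨a, b, hab, rfl⟩ := hc
    exact S08 hg hxlow hxy a b hab
  · obtain ⟨a, rfl⟩ := hc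
    exact S12 hg hylow hxy a
  · obtain ⟨a, b, rfl⟩ := hc
    exact S14 hg hxlow hxdiag hylow hydiag hxy a b
  · obtain ⟨a, rfl⟩ := hc
    show (-1 : ℝ)^(k+1) * ((x * h * x⁻¹).submatrix _ _).det / _ = 0
    rw [S16det hg hxlow hylow hydiag hxy a, mul_zero, zero_div]
  · obtain ⟨b, rfl⟩ := hc
    exact S34 hg hxlow hylow hxy b
  · subst hc
    show (-1 : ℝ)^k * ((x * h * x⁻¹).submatrix _ _).det / _ = 0
    rw [S36det hg hxlow hylow hydiag hxy, mul_zero, zero_div]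
  · obtain ⟨b, rfl⟩ := hc
    show (-1 : ℝ)^(k+1) * ((x * h * x⁻¹).submatrix _ _).det / _ = 0
    rw [S38det hg hxlow hylow hydiag hxy b, mul_zero, zero_div]
  · obtain ⟨a, rfl⟩ := hc
    exact S56 hg hxlow hylow hydiag hxy a
  · obtain ⟨a, b, rfl⟩ := hc
    exact S58 hg hxlow hxdiag hylow hydiag hxy a b
  · obtain ⟨b, rfl⟩ := hc
    exact S78 hg hxlow hxy b
  · obtain ⟨b, rfl⟩ := hc
    exact S2a hg hxlow hxdiag hylow hydiag hxy hyx b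
  · obtain ⟨a, rfl⟩ := hc
    exact S2b hg hxlow hxdiag hylow hydiag hxy hyx a
  · subst hc
    exact S2c hg hxlow hxdiag hylow hydiag hxy hrel

end
end

section
/- Let k ≥ 1, let 𝔤 = ut(2k,ℝ), and let f be the linear functional on 𝔤 given by f(x) = trace(F·x), where F is the 2k×2k matrix whose only nonzero entries are λ_1,…,λ_k placed on the antidiagonal of its lower-left k×k block (λ_1 in the lower-left corner of that block, λ_k in its upper-right corner), with λ_1,…,λ_{k−1} ≠ 0. Let 𝔭 = {x ∈ ut(2k,ℝ) : x_{ab} = 0 unless a ≤ k < b} (strictly upper-right k×k block). Then 𝔭 is an abelian Lie subalgebra of 𝔤 of dimension k², the form B_f(x,y) = f(⁅x,y⁆) vanishes identically on 𝔭, and 𝔭 is a polarization of f: every linear subspace W of 𝔤 containing 𝔭 on which B_f vanishes identically equals 𝔭. -/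
open Matrix

noncomputable section

/-- The subspace `𝔭` of `ut(2k,ℝ)` of matrices supported in the strictly upper-right
`k×k` block. -/
def pol (k : ℕ) : Submodule ℝ (Matrix (Fin (2*k)) (Fin (2*k)) ℝ) where
  carrier := {x | ∀ a b : Fin (2*k), ¬(a.val < k ∧ k ≤ b.val) → x a b = 0}
  add_mem' := by
    intro x y hx hy a b h
    simp only [Matrix.add_apply, hx a b h, hy a b h, add_zero]
  zero_mem' := by
    intro a b _
    rfl
  smul_mem' := by
    intro c x hx a b h
    simp only [Matrix.smul_apply, hx a b h, smul_zero]

/-- The matrix `F` of the regular functional on `ut(2k,ℝ)`:  `λ₁,…,λ_k` on the antidiagonal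
of the lower-left `k×k` block, with `λ₁` in the lower-left corner and `λ_k` in the
upper-right corner of that block. -/
def Freg (k : ℕ) (lam : Fin k → ℝ) : Matrix (Fin (2*k)) (Fin (2*k)) ℝ :=
  ∑ i : Fin k, lam i • Matrix.single
      (⟨2*k-1-i.val, by have := i.isLt; omega⟩ : Fin (2*k))
      (⟨i.val, by have := i.isLt; omega⟩ : Fin (2*k)) (1:ℝ)

lemma trace_stdBasis_mul {n : Type*} [Fintype n] [DecidableEq n] (p q : n)
    (M : Matrix n n ℝ) :
    Matrix.trace (Matrix.single p q (1:ℝ) * M) = M q p := by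
  simp [Matrix.trace, Matrix.diag, Matrix.mul_apply, Matrix.single,
    ite_and, Finset.sum_ite_eq, Finset.sum_ite_eq']

lemma trace_Freg_mul (k : ℕ) (lam : Fin k → ℝ) (M : Matrix (Fin (2*k)) (Fin (2*k)) ℝ) :
    Matrix.trace (Freg k lam * M) =
      ∑ i : Fin k, lam i * M ⟨i.val, by have := i.isLt; omega⟩
        ⟨2*k-1-i.val, by have := i.isLt; omega⟩ := by
  rw [Freg, Finset.sum_mul, Matrix.trace_sum]
  refine Finset.sum_congr rfl fun i _ => ?_
  rw [Matrix.smul_mul, Matrix.trace_smul, trace_stdBasis_mul, smul_eq_mul]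

lemma stdBasis_mem_pol (k : ℕ) (c d : Fin (2*k)) (hc : c.val < k) (hd : k ≤ d.val) :
    Matrix.single c d (1:ℝ) ∈ pol k := by
  intro a b h
  apply Matrix.single_apply_of_ne
  rintro ⟨rfl, rfl⟩
  exact h ⟨hc, hd⟩

lemma key_identity (k : ℕ) (lam : Fin k → ℝ) (x : Matrix (Fin (2*k)) (Fin (2*k)) ℝ)
    (c d : Fin (2*k)) (hc : c.val < k) (hd : k ≤ d.val) (hk : 1 ≤ k) :
    Matrix.trace (Freg k lam * (x * Matrix.single c d (1:ℝ)
        - Matrix.single c d (1:ℝ) * x)) =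
      lam ⟨2*k-1-d.val, by omega⟩ * x ⟨2*k-1-d.val, by omega⟩ c
        - lam ⟨c.val, hc⟩ * x d ⟨2*k-1-c.val, by omega⟩ := by
  rw [trace_Freg_mul]
  have hdd := d.isLt
  have hcc := c.isLt
  have h1 : ∀ (p q : Fin (2*k)),
      (x * Matrix.single c d (1:ℝ)) p q = if q = d then x p c else 0 := by
    intro p q
    simp [Matrix.mul_apply, Matrix.single, ite_and, Finset.sum_ite_eq,
      Finset.sum_ite_eq', eq_comm]
  have h2 : ∀ (p q : Fin (2*k)),
      (Matrix.single c d (1:ℝ) * x) p q = if p = c then x d q else 0 := by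
    intro p q
    simp [Matrix.mul_apply, Matrix.single, ite_and, Finset.sum_ite_eq,
      Finset.sum_ite_eq', eq_comm]
  simp only [Matrix.sub_apply, h1, h2, mul_sub]
  rw [Finset.sum_sub_distrib]
  congr 1
  · rw [Finset.sum_eq_single (⟨2*k-1-d.val, by omega⟩ : Fin k)]
    · rw [if_pos (by ext; simp; omega)]
    · intro i _ hi
      rw [if_neg, mul_zero]
      intro h
      apply hi
      have : (2*k-1-i.val : ℕ) = d.val := congrArg Fin.val h
      ext
      simp
      omega
    · intro h
      exact absurd (Finset.mem_univ _) h
  · rw [Finset.sum_eq_single (⟨c.val, hc⟩ : Fin k)]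
    · rw [if_pos (by ext; simp)]
    · intro i _ hi
      rw [if_neg, mul_zero]
      intro h
      apply hi
      have : (i.val : ℕ) = c.val := congrArg Fin.val h
      ext
      simpa using this
    · intro h
      exact absurd (Finset.mem_univ _) h

lemma matrix_entry_congr {α : Type*} {n m : ℕ} (M : Matrix (Fin n) (Fin m) α)
    {i i' : Fin n} {j j' : Fin m} (hi : i.val = i'.val) (hj : j.val = j'.val) :
    M i j = M i' j' := by
  congr 1 <;> exact Fin.ext ‹_›

def polEquiv (k : ℕ) : ↥(pol k) ≃ₗ[ℝ] Matrix (Fin k) (Fin k) ℝ where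
  toFun x := fun i j => x.1 ⟨i.val, by have := i.isLt; omega⟩ ⟨k + j.val, by have := j.isLt; omega⟩
  map_add' x y := rfl
  map_smul' c x := rfl
  invFun m := ⟨fun a b => if h : a.val < k ∧ k ≤ b.val
      then m ⟨a.val, h.1⟩ ⟨b.val - k, by have := b.isLt; omega⟩ else 0,
    by intro a b h; exact dif_neg h⟩
  left_inv := by
    intro x
    ext a b
    by_cases h : a.val < k ∧ k ≤ b.val
    · simp only [dif_pos h]
      exact matrix_entry_congr x.1 rfl (by simp [Nat.add_sub_cancel' h.2])
    · simp only [dif_neg h]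
      exact (x.2 a b h).symm
  right_inv := by
    intro m
    ext i j
    have hij : (i.val : ℕ) < k ∧ k ≤ k + j.val := ⟨i.isLt, Nat.le_add_right _ _⟩
    simp only [dif_pos hij]
    exact matrix_entry_congr m rfl (by simp)


/-- The strictly upper-right `k×k` block `𝔭` is an abelian Lie subalgebra of `ut(2k,ℝ)` of
dimension `k²`, the form `B_f(x,y) = f(⁅x,y⁆)` vanishes identically on `𝔭`, and `𝔭` is a
polarization of the regular functional `f = trace(F·–)`: any subspace of `ut(2k,ℝ)`
containing `𝔭` on which `B_f` vanishes equals `𝔭`. -/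
theorem polarization_regular_even (k : ℕ) (hk : 1 ≤ k)
    (lam : Fin k → ℝ) (hlam : ∀ i : Fin k, i.val + 1 < k → lam i ≠ 0) :
    ((pol k : Set (Matrix (Fin (2*k)) (Fin (2*k)) ℝ)) ⊆ {x | IsStrictUpper x}) ∧
    (∀ x ∈ pol k, ∀ y ∈ pol k, x * y - y * x = 0) ∧
    Module.finrank ℝ ↥(pol k) = k^2 ∧
    (∀ x ∈ pol k, ∀ y ∈ pol k, Matrix.trace (Freg k lam * (x * y - y * x)) = 0) ∧
    (∀ W : Submodule ℝ (Matrix (Fin (2*k)) (Fin (2*k)) ℝ), pol k ≤ W →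
      (∀ x ∈ W, IsStrictUpper x) →
      (∀ x ∈ W, ∀ y ∈ W, Matrix.trace (Freg k lam * (x * y - y * x)) = 0) →
      W = pol k) := by
  have hsu : (pol k : Set (Matrix (Fin (2*k)) (Fin (2*k)) ℝ)) ⊆ {x | IsStrictUpper x} := by
    intro x hx i j hji
    exact hx i j (by omega)
  have hmul : ∀ x ∈ pol k, ∀ y ∈ pol k, x * y = 0 := by
    intro x hx y hy
    ext a b
    rw [Matrix.mul_apply]
    apply Finset.sum_eq_zero
    intro m _
    by_cases h : m.val < k
    · rw [hx a m (by omega), zero_mul]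
    · rw [hy m b (by omega), mul_zero]
  have habel : ∀ x ∈ pol k, ∀ y ∈ pol k, x * y - y * x = 0 := by
    intro x hx y hy
    rw [hmul x hx y hy, hmul y hy x hx, sub_zero]
  refine ⟨hsu, habel, ?_, ?_, ?_⟩
  · rw [LinearEquiv.finrank_eq (polEquiv k), Module.finrank_matrix]
    simp [sq, Module.finrank_self]
  · intro x hx y hy
    rw [habel x hx y hy, Matrix.mul_zero, Matrix.trace_zero]
  · intro W hpW hWsu hWB
    refine le_antisymm ?_ hpW
    intro x hxW a b hab
    have hxsu := hWsu x hxW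
    -- remaining nonzero region: a < b, with b < k or k ≤ a
    by_cases hba : b.val ≤ a.val
    · exact hxsu a b hba
    push_neg at hba
    have key : ∀ (c d : Fin (2*k)) (hc : c.val < k) (hd : k ≤ d.val),
        lam ⟨2*k-1-d.val, by omega⟩ * x ⟨2*k-1-d.val, by omega⟩ c
          = lam ⟨c.val, hc⟩ * x d ⟨2*k-1-c.val, by omega⟩ := by
      intro c d hc hd
      have hE := hpW (stdBasis_mem_pol k c d hc hd)
      have := hWB x hxW _ hE
      rw [key_identity k lam x c d hc hd hk] at this
      linarith [this]
    have hcase : b.val < k ∨ k ≤ a.val := by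
      rcases not_and_or.mp hab with h | h
      · right; omega
      · left; omega
    rcases hcase with hb | ha
    · -- a < b < k
      have h := key b ⟨2*k-1-a.val, by omega⟩ (by omega) (by simp; omega)
      have hzero : x (⟨2*k-1-a.val, by omega⟩ : Fin (2*k)) ⟨2*k-1-b.val, by omega⟩ = 0 :=
        hxsu _ _ (by simp; omega)
      rw [show x ⟨2*k-1-(⟨2*k-1-a.val, by omega⟩ : Fin (2*k)).val, by simp; omega⟩ b = x a b
          from by congr 1; ext; simp; omega] at h
      rw [show (⟨2*k-1-(⟨2*k-1-a.val, by omega⟩ : Fin (2*k)).val, by simp; omega⟩ : Fin k)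
          = ⟨a.val, by omega⟩ from by ext; simp; omega] at h
      simp only [hzero, mul_zero] at h
      exact (mul_eq_zero.mp h).resolve_left (hlam _ (by simp; omega))
    · -- k ≤ a < b
      have h := key ⟨2*k-1-b.val, by omega⟩ a (by simp; omega) (by omega)
      have hzero : x (⟨2*k-1-a.val, by omega⟩ : Fin (2*k)) ⟨2*k-1-b.val, by omega⟩ = 0 :=
        hxsu _ _ (by simp; omega)
      rw [show x a (⟨2*k-1-(⟨2*k-1-b.val, by omega⟩ : Fin (2*k)).val, by simp; omega⟩ : Fin (2*k))
          = x a b from by congr 1; ext; simp; omega] at h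
      simp only [hzero, mul_zero] at h
      exact (mul_eq_zero.mp h.symm).resolve_left (hlam _ (by simp; omega))

end
end
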